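/- arXiv:1009.5740 — 4 statements merged into one kernel-verified Lean document; each statement's English description precedes it below -/
import Mathlib

section
/- Let π ∈ S_n be a separable permutation. The map φ : Λ_π × V_π → S_n defined by φ(u, v) = u⁻¹v, for u ≤ π and v ≥ π in weak order, is a bijection. -/
open Polynomial

namespace SepPerm

/-- The length (number of inversions) of a permutation of `Fin n`. -/
def invCount {n : ℕ} (π : Equiv.Perm (Fin n)) : ℕ :=
  (Finset.univ.filter fun p : Fin n × Fin n => p.1 < p.2 ∧ π p.2 < π p.1).card

/-- The (right) weak Bruhat order: `u ≤ v` iff `ℓ(u) + ℓ(u⁻¹v) = ℓ(v)`. -/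
def wle {n : ℕ} (u v : Equiv.Perm (Fin n)) : Prop :=
  invCount u + invCount (u⁻¹ * v) = invCount v

open scoped Classical in
/-- `F(Λ_π, q) = ∑_{u ≤ π} q^{ℓ(u)}`, rank generating function of `[id, π]`. -/
noncomputable def FLam {n : ℕ} (π : Equiv.Perm (Fin n)) : Polynomial ℤ :=
  ∑ u ∈ Finset.univ.filter (fun u => wle u π), X ^ invCount u

open scoped Classical in
/-- `F(V_π, q) = ∑_{v ≥ π} q^{ℓ(v) - ℓ(π)}`, rank generating function of `[π, w₀]`. -/
noncomputable def FV {n : ℕ} (π : Equiv.Perm (Fin n)) : Polynomial ℤ :=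
  ∑ v ∈ Finset.univ.filter (fun v => wle π v), X ^ (invCount v - invCount π)

/-- A permutation is separable iff it avoids the patterns 3142 and 2413. -/
def IsSeparable {n : ℕ} (π : Equiv.Perm (Fin n)) : Prop :=
  (¬ ∃ i j k h : Fin n, i < j ∧ j < k ∧ k < h ∧
      π j < π h ∧ π h < π i ∧ π i < π k) ∧
  (¬ ∃ i j k h : Fin n, i < j ∧ j < k ∧ k < h ∧
      π k < π i ∧ π i < π h ∧ π h < π j)

/-- The longest element `w₀ = n, n-1, …, 1`. -/
def w0 (n : ℕ) : Equiv.Perm (Fin n) := Fin.revPerm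

/-- The complement `π^c`, with `π^c(i) = n + 1 - π(i)` (one-indexed). -/
def compl {n : ℕ} (π : Equiv.Perm (Fin n)) : Equiv.Perm (Fin n) := w0 n * π

/-- `[k] = 1 + q + ⋯ + q^{k-1}`. -/
noncomputable def qnum (k : ℕ) : Polynomial ℤ := ∑ i ∈ Finset.range k, X ^ i

/-- `[N]! = [1][2]⋯[N]`. -/
noncomputable def qfact (N : ℕ) : Polynomial ℤ := ∏ k ∈ Finset.range N, qnum (k + 1)

/-- The inversion poset `P_π` on the letters: `x ≤_P y` iff `x ≤ y` and `π⁻¹x ≤ π⁻¹y`. -/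
def invLe {n : ℕ} (π : Equiv.Perm (Fin n)) (x y : Fin n) : Prop :=
  x ≤ y ∧ π⁻¹ x ≤ π⁻¹ y

/-- `σ` is a linear extension of the order `r`: whenever `i <_r j`, `i` precedes `j`
in the one-line notation of `σ` (i.e. the position `σ⁻¹ i` comes before `σ⁻¹ j`). -/
def IsLinExt {N : ℕ} (r : Fin N → Fin N → Prop) (σ : Equiv.Perm (Fin N)) : Prop :=
  ∀ i j, r i j → i ≠ j → σ.symm i < σ.symm j

open scoped Classical in
/-- `F(𝓛(P), q) = ∑_{σ ∈ 𝓛(P)} q^{ℓ(σ)}`, generating function of linear extensions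
by number of inversions. -/
noncomputable def FLin {N : ℕ} (r : Fin N → Fin N → Prop) : Polynomial ℤ :=
  ∑ σ ∈ Finset.univ.filter (fun σ => IsLinExt r σ), X ^ invCount σ


set_option linter.unusedSectionVars false

section Graph

variable {V : Type*}

/-- Connectivity of a relation via reflexive-transitive closure. -/
def Conn (E : V → V → Prop) : Prop := ∀ x y : V, Relation.ReflTransGen E x y

lemma reach_symm {E : V → V → Prop} (hsym : ∀ x y, E x y → E y x) {x y : V}
    (h : Relation.ReflTransGen E x y) : Relation.ReflTransGen E y x := by
  induction h with
  | refl => exact .refl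
  | tail _ hstep ih => exact Relation.ReflTransGen.head (hsym _ _ hstep) ih

/-- Along a path from a non-`P` vertex to a `P` vertex, find a switching edge. -/
lemma switch_pair {E : V → V → Prop} (P : V → Prop) {x y : V}
    (h : Relation.ReflTransGen E x y) (hx : ¬ P x) (hy : P y) :
    ∃ p q, E p q ∧ ¬ P p ∧ P q ∧ Relation.ReflTransGen E x p := by
  induction h with
  | refl => exact absurd hy hx
  | @tail b c hxb hstep ih =>
    by_cases hb : P b
    · exact ih hb
    · exact ⟨b, c, hstep, hb, hy, hxb⟩

/-- From a path to `v` starting away from `v`, get a path avoiding `v` to a neighbour of `v`. -/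
lemma path_to_nbr {E : V → V → Prop} {v : V}
    {c : V} (h : Relation.ReflTransGen E c v) (hc : c ≠ v) :
    ∃ y : {z : V // z ≠ v}, Relation.ReflTransGen (fun a b : {z : V // z ≠ v} => E a.1 b.1)
      ⟨c, hc⟩ y ∧ E y.1 v := by
  induction h using Relation.ReflTransGen.head_induction_on with
  | refl => exact absurd rfl hc
  | @head a b hstep hreach ih =>
    by_cases hb : b = v
    · exact ⟨⟨a, hc⟩, .refl, hb ▸ hstep⟩
    · obtain ⟨y, hy1, hy2⟩ := ih hb
      exact ⟨y, .head hstep hy1, hy2⟩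

/-- Core of Seinsche's argument: if `E` restricted to `V \ {v}` is disconnected while
both `E` and its complement are connected, there is an induced `P4`. -/
lemma seinsche_core {E : V → V → Prop}
    (hsym : ∀ x y, E x y → E y x)
    (h4 : ∀ a b c d : V, a ≠ c → a ≠ d → b ≠ d →
      E a b → E b c → E c d → ¬ E a c → ¬ E a d → ¬ E b d → False)
    (v : V)
    (hdisc : ¬ Conn (fun a b : {z : V // z ≠ v} => E a.1 b.1))
    (hE : Conn E) (hEc : Conn (fun x y => x ≠ y ∧ ¬ E x y)) : False := by
  set V' := {z : V // z ≠ v}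
  set E' := fun a b : V' => E a.1 b.1 with hE'
  unfold Conn at hdisc; push_neg at hdisc
  obtain ⟨a, b, hab⟩ := hdisc
  -- every vertex of V' can reach (within V') a neighbour of v
  have nbr : ∀ c : V', ∃ y : V', Relation.ReflTransGen E' c y ∧ E y.1 v := by
    intro c
    exact path_to_nbr (hE c.1 v) c.2
  -- some vertex of V' is not adjacent to v
  have hx0 : ∃ x : V', ¬ E v x.1 := by
    by_contra hall
    push_neg at hall
    have := hEc v a.1
    rcases Relation.ReflTransGen.cases_head this with h | ⟨c, ⟨hne, hnE⟩, _⟩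
    · exact a.2 h.symm
    · exact hnE (hall ⟨c, fun h => hne h.symm⟩)
  obtain ⟨x0, hx0⟩ := hx0
  obtain ⟨ystar, hreach, hyv⟩ := nbr x0
  -- switching pair p q : E' p q, ¬ E v p, E v q
  obtain ⟨p, q, hpq, hp, hq, hxp⟩ := switch_pair (fun z : V' => E v z.1) hreach hx0 (hsym _ _ hyv)
  -- choose c0 among a,b not reachable from p
  have hc0 : ∃ c0 : V', ¬ Relation.ReflTransGen E' p c0 := by
    by_contra hc
    push_neg at hc
    exact hab ((reach_symm (fun x y h => hsym _ _ h) (hc a)).trans (hc b))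
  obtain ⟨c0, hc0⟩ := hc0
  obtain ⟨z, hz1, hz2⟩ := nbr c0
  have hpz : ¬ Relation.ReflTransGen E' p z := by
    intro h
    exact hc0 (h.trans (reach_symm (fun x y h => hsym _ _ h) hz1))
  have hqz : ¬ Relation.ReflTransGen E' q z := fun h => hpz (.head hpq h)
  -- the P4 : p - q - v - z
  refine h4 p.1 q.1 v z.1 p.2 ?_ ?_ hpq (hsym _ _ hq) (hsym _ _ hz2) ?_ ?_ ?_
  · intro h; exact hpz ((Subtype.ext h : p = z) ▸ Relation.ReflTransGen.refl)
  · intro h; exact hqz ((Subtype.ext h : q = z) ▸ Relation.ReflTransGen.refl)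
  · exact fun h => hp (hsym _ _ h)
  · exact fun h => hpz (.single h)
  · exact fun h => hqz (.single h)

/-- Seinsche: a `P4`-free graph on ≥ 2 vertices is disconnected or co-disconnected. -/
theorem p4free_split [Fintype V] (E : V → V → Prop)
    (hsym : ∀ x y, E x y → E y x) (hirr : ∀ x, ¬ E x x)
    (h4 : ∀ a b c d : V, a ≠ c → a ≠ d → b ≠ d →
      E a b → E b c → E c d → ¬ E a c → ¬ E a d → ¬ E b d → False)
    (h2 : ∃ x y : V, x ≠ y) :
    ¬ Conn E ∨ ¬ Conn (fun x y => x ≠ y ∧ ¬ E x y) := by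
  classical
  -- strong induction on card
  generalize hn : Fintype.card V = n
  induction n using Nat.strong_induction_on generalizing V with
  | _ n ih =>
  obtain ⟨x, y, hxy⟩ := h2
  by_contra hcon
  push_neg at hcon
  obtain ⟨hE, hEc⟩ := hcon
  set v := x
  set V' := {z : V // z ≠ v}
  have hcardV' : Fintype.card V' = n - 1 := by
    rw [← hn]; simp [V', Fintype.card_subtype_compl]
  have hn2 : 2 ≤ n := by
    rw [← hn]
    exact Fintype.one_lt_card_iff_nontrivial.2 ⟨⟨x, y, hxy⟩⟩
  by_cases hsmall : n = 2
  · -- two vertices: direct contradiction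
    have hy' : (⟨y, fun h => hxy h.symm⟩ : V') = (⟨y, fun h => hxy h.symm⟩ : V') := rfl
    -- all elements distinct from v are equal to y
    have huniq : ∀ z : V, z ≠ v → z = y := by
      intro z hz
      have : Fintype.card V' = 1 := by rw [hcardV', hsmall]
      have hsub : Subsingleton V' := Fintype.card_le_one_iff_subsingleton.1 (le_of_eq this)
      have := @Subsingleton.elim V' hsub ⟨z, hz⟩ ⟨y, fun h => hxy h.symm⟩
      exact congrArg Subtype.val this
    -- from Conn E: v reaches y, first step E v c with c ≠ v ⇒ c = y ⇒ E v y
    have hEvy : E v y := by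
      rcases Relation.ReflTransGen.cases_head (hE v y) with h | ⟨c, hvc, _⟩
      · exact absurd h hxy
      · have hcv : c ≠ v := fun h => hirr v (h ▸ hvc)
        exact (huniq c hcv) ▸ hvc
    rcases Relation.ReflTransGen.cases_head (hEc v y) with h | ⟨c, ⟨hne, hnE⟩, _⟩
    · exact absurd h hxy
    · have hcv : c ≠ v := fun h => hne h.symm
      exact hnE ((huniq c hcv) ▸ hEvy)
  · -- n ≥ 3
    have hn3 : 3 ≤ n := by omega
    set E' := fun a b : V' => E a.1 b.1 with hE'def
    have h2' : ∃ a b : V', a ≠ b := by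
      have : 2 ≤ Fintype.card V' := by omega
      obtain ⟨a, b, h⟩ := Fintype.exists_pair_of_one_lt_card (by omega : 1 < Fintype.card V')
      exact ⟨a, b, h⟩
    have ihres := ih (n-1) (by omega) (V := V') E'
      (fun a b h => hsym _ _ h) (fun a => hirr a.1)
      (fun a b c d h1 h2 h3 e1 e2 e3 ne1 ne2 ne3 =>
        h4 a.1 b.1 c.1 d.1 (fun h => h1 (Subtype.ext h)) (fun h => h2 (Subtype.ext h))
          (fun h => h3 (Subtype.ext h)) e1 e2 e3 ne1 ne2 ne3)
      h2' hcardV'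
    rcases ihres with hd | hd
    · exact seinsche_core hsym h4 v hd hE hEc
    · -- complement case: apply core to F := complement of E
      set F := fun a b : V => a ≠ b ∧ ¬ E a b with hFdef
      have hFsym : ∀ a b, F a b → F b a := fun a b h => ⟨h.1.symm, fun h' => h.2 (hsym _ _ h')⟩
      have hF4 : ∀ a b c d : V, a ≠ c → a ≠ d → b ≠ d →
          F a b → F b c → F c d → ¬ F a c → ¬ F a d → ¬ F b d → False := by
        intro a b c d hac had hbd fab fbc fcd nac nad nbd
        -- F-nonedges with distinctness give E-edges
        have eac : E a c := by by_contra h; exact nac ⟨hac, h⟩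
        have ead : E a d := by by_contra h; exact nad ⟨had, h⟩
        have ebd : E b d := by by_contra h; exact nbd ⟨hbd, h⟩
        -- P4 in E : c - a - d - b
        exact h4 c a d b fcd.1 (fun h => fbc.1 h.symm) (fun h => fab.1 h)
          (hsym _ _ eac) ead (hsym _ _ ebd) fcd.2 (fun h => fbc.2 (hsym _ _ h)) fab.2
      have hdF : ¬ Conn (fun a b : V' => F a.1 b.1) := by
        intro hcF
        apply hd
        intro p q
        have := hcF p q
        refine Relation.ReflTransGen.mono ?_ _ _ this
        intro s t hst
        exact ⟨fun h => hst.1 (congrArg Subtype.val h), hst.2⟩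
      have hConnFc : Conn (fun s t => s ≠ t ∧ ¬ F s t) := by
        intro s t
        refine Relation.ReflTransGen.mono ?_ _ _ (hE s t)
        intro p q hpq
        exact ⟨fun h => hirr p (h ▸ hpq), fun h => h.2 hpq⟩
      exact seinsche_core hFsym hF4 v hdF hEc hConnFc



end Graph

section DecompSection

variable {β : Type*} [LinearOrder β] [Fintype β]

/-- InvSet + avoidance implies the symmetrised graph is `P4`-free. -/
lemma invset_p4 (K : β → β → Prop)
    (hlt : ∀ a b, K a b → a < b)
    (hbtw : ∀ a b c, a < b → b < c → K a c → K a b ∨ K b c)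
    (htr : ∀ a b c, K a b → K b c → K a c)
    (hav1 : ∀ a b c d : β, a < b → b < c → c < d →
      K a c → K b c → K b d → ¬ K a b → ¬ K a d → ¬ K c d → False)
    (hav2 : ∀ a b c d : β, a < b → b < c → c < d →
      K a b → K a d → K c d → ¬ K a c → ¬ K b c → ¬ K b d → False) :
    ∀ a b c d : β, a ≠ c → a ≠ d → b ≠ d →
      (K a b ∨ K b a) → (K b c ∨ K c b) → (K c d ∨ K d c) →
      ¬ (K a c ∨ K c a) → ¬ (K a d ∨ K d a) → ¬ (K b d ∨ K d b) → False := by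
  intro a b c d nac nad nbd eab ebc ecd nac' nad' nbd'
  have toK : ∀ x y : β, (K x y ∨ K y x) → x < y → K x y := fun x y h hxy =>
    h.resolve_right (fun h' => absurd (hlt _ _ h') (not_lt.2 hxy.le))
  have nab : a ≠ b := fun h => by
    rcases eab with h' | h' <;> exact absurd (hlt _ _ h') (h ▸ lt_irrefl _)
  have nbc : b ≠ c := fun h => by
    rcases ebc with h' | h' <;> exact absurd (hlt _ _ h') (h ▸ lt_irrefl _)
  have ncd : c ≠ d := fun h => by
    rcases ecd with h' | h' <;> exact absurd (hlt _ _ h') (h ▸ lt_irrefl _)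
  rcases lt_or_gt_of_ne nab with hab | hab
  · -- a<b
    rcases lt_or_gt_of_ne (Ne.symm nbc) with hcb | hcb
    · -- c<b
      rcases lt_or_gt_of_ne (Ne.symm nac) with hca | hca
      · -- c<a
        rcases lt_or_gt_of_ne (Ne.symm nad) with hda | hda
        · -- d<a
          rcases lt_or_gt_of_ne (Ne.symm ncd) with hdc | hdc
          · -- d<c
            exact (fun hk => nbd' (Or.inr hk)) (htr d c b (toK d c (Or.symm ecd) hdc) (toK c b (Or.symm ebc) hcb))
          · -- c<d
            exact hav2 c d a b hdc hda hab (toK c d ecd hdc) (toK c b (Or.symm ebc) hcb) (toK a b eab hab) (fun hk => nac' (Or.inr hk)) (fun hk => nad' (Or.inr hk)) (fun hk => nbd' (Or.inr hk))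
        · -- a<d
          rcases lt_or_gt_of_ne (Ne.symm nbd) with hdb | hdb
          · -- d<b
            exact Or.elim (hbtw c a d hca hda (toK c d ecd (lt_trans hca hda))) (fun hk => (fun hk => nac' (Or.inr hk)) hk) (fun hk => (fun hk => nad' (Or.inl hk)) hk)
          · -- b<d
            exact Or.elim (hbtw c a d hca hda (toK c d ecd (lt_trans hcb hdb))) (fun hk => (fun hk => nac' (Or.inr hk)) hk) (fun hk => (fun hk => nad' (Or.inl hk)) hk)
      · -- a<c
        rcases lt_or_gt_of_ne (Ne.symm ncd) with hdc | hdc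
        · -- d<c
          rcases lt_or_gt_of_ne (Ne.symm nad) with hda | hda
          · -- d<a
            exact (fun hk => nbd' (Or.inr hk)) (htr d c b (toK d c (Or.symm ecd) hdc) (toK c b (Or.symm ebc) hcb))
          · -- a<d
            exact (fun hk => nbd' (Or.inr hk)) (htr d c b (toK d c (Or.symm ecd) hdc) (toK c b (Or.symm ebc) hcb))
        · -- c<d
          rcases lt_or_gt_of_ne (Ne.symm nbd) with hdb | hdb
          · -- d<b
            exact Or.elim (hbtw a d b (lt_trans hca hdc) hdb (toK a b eab hab)) (fun hk => (fun hk => nad' (Or.inl hk)) hk) (fun hk => (fun hk => nbd' (Or.inr hk)) hk)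
          · -- b<d
            exact hav1 a c b d hca hcb hdb (toK a b eab hab) (toK c b (Or.symm ebc) hcb) (toK c d ecd hdc) (fun hk => nac' (Or.inl hk)) (fun hk => nad' (Or.inl hk)) (fun hk => nbd' (Or.inl hk))
    · -- b<c
      rcases lt_or_gt_of_ne (Ne.symm nbd) with hdb | hdb
      · -- d<b
        rcases lt_or_gt_of_ne (Ne.symm nad) with hda | hda
        · -- d<a
          exact (fun hk => nac' (Or.inl hk)) (htr a b c (toK a b eab hab) (toK b c ebc hcb))
        · -- a<d
          exact (fun hk => nac' (Or.inl hk)) (htr a b c (toK a b eab hab) (toK b c ebc hcb))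
      · -- b<d
        rcases lt_or_gt_of_ne (Ne.symm ncd) with hdc | hdc
        · -- d<c
          exact (fun hk => nac' (Or.inl hk)) (htr a b c (toK a b eab hab) (toK b c ebc hcb))
        · -- c<d
          exact (fun hk => nac' (Or.inl hk)) (htr a b c (toK a b eab hab) (toK b c ebc hcb))
  · -- b<a
    rcases lt_or_gt_of_ne (Ne.symm nac) with hca | hca
    · -- c<a
      rcases lt_or_gt_of_ne (Ne.symm nbc) with hcb | hcb
      · -- c<b
        rcases lt_or_gt_of_ne (Ne.symm nbd) with hdb | hdb
        · -- d<b
          rcases lt_or_gt_of_ne (Ne.symm ncd) with hdc | hdc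
          · -- d<c
            exact (fun hk => nbd' (Or.inr hk)) (htr d c b (toK d c (Or.symm ecd) hdc) (toK c b (Or.symm ebc) hcb))
          · -- c<d
            exact (fun hk => nac' (Or.inr hk)) (htr c b a (toK c b (Or.symm ebc) hcb) (toK b a (Or.symm eab) hab))
        · -- b<d
          rcases lt_or_gt_of_ne (Ne.symm nad) with hda | hda
          · -- d<a
            exact (fun hk => nac' (Or.inr hk)) (htr c b a (toK c b (Or.symm ebc) hcb) (toK b a (Or.symm eab) hab))
          · -- a<d
            exact (fun hk => nac' (Or.inr hk)) (htr c b a (toK c b (Or.symm ebc) hcb) (toK b a (Or.symm eab) hab))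
      · -- b<c
        rcases lt_or_gt_of_ne (Ne.symm ncd) with hdc | hdc
        · -- d<c
          rcases lt_or_gt_of_ne (Ne.symm nbd) with hdb | hdb
          · -- d<b
            exact hav1 d b c a hdb hcb hca (toK d c (Or.symm ecd) hdc) (toK b c ebc hcb) (toK b a (Or.symm eab) hab) (fun hk => nbd' (Or.inr hk)) (fun hk => nad' (Or.inr hk)) (fun hk => nac' (Or.inr hk))
          · -- b<d
            exact Or.elim (hbtw b d a hdb (lt_trans hdc hca) (toK b a (Or.symm eab) hab)) (fun hk => (fun hk => nbd' (Or.inl hk)) hk) (fun hk => (fun hk => nad' (Or.inr hk)) hk)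
        · -- c<d
          rcases lt_or_gt_of_ne (Ne.symm nad) with hda | hda
          · -- d<a
            exact (fun hk => nbd' (Or.inl hk)) (htr b c d (toK b c ebc hcb) (toK c d ecd hdc))
          · -- a<d
            exact (fun hk => nbd' (Or.inl hk)) (htr b c d (toK b c ebc hcb) (toK c d ecd hdc))
    · -- a<c
      rcases lt_or_gt_of_ne (Ne.symm nad) with hda | hda
      · -- d<a
        rcases lt_or_gt_of_ne (Ne.symm nbd) with hdb | hdb
        · -- d<b
          exact Or.elim (hbtw d a c hda hca (toK d c (Or.symm ecd) (lt_trans hda hca))) (fun hk => (fun hk => nad' (Or.inr hk)) hk) (fun hk => (fun hk => nac' (Or.inl hk)) hk)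
        · -- b<d
          exact Or.elim (hbtw b d a hdb hda (toK b a (Or.symm eab) hab)) (fun hk => (fun hk => nbd' (Or.inl hk)) hk) (fun hk => (fun hk => nad' (Or.inr hk)) hk)
      · -- a<d
        rcases lt_or_gt_of_ne (Ne.symm ncd) with hdc | hdc
        · -- d<c
          exact hav2 b a d c hab hda hdc (toK b a (Or.symm eab) hab) (toK b c ebc (lt_trans hab hca)) (toK d c (Or.symm ecd) hdc) (fun hk => nbd' (Or.inl hk)) (fun hk => nad' (Or.inl hk)) (fun hk => nac' (Or.inl hk))
        · -- c<d
          exact (fun hk => nbd' (Or.inl hk)) (htr b c d (toK b c ebc (lt_trans hab hca)) (toK c d ecd hdc))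



lemma reach_symm' {E : β → β → Prop} (hsym : ∀ x y, E x y → E y x) {x y : β}
    (h : Relation.ReflTransGen E x y) : Relation.ReflTransGen E y x := by
  induction h with
  | refl => exact .refl
  | tail _ hstep ih => exact Relation.ReflTransGen.head (hsym _ _ hstep) ih

/-- From a disconnected symmetrised inversion graph, extract a lower block with no
`K`-pair across. -/
lemma comp_split (K : β → β → Prop)
    (hlt : ∀ a b, K a b → a < b)
    (hbtw : ∀ a b c, a < b → b < c → K a c → K a b ∨ K b c)
    (hne : Nonempty β)
    (hdisc : ¬ Conn (fun x y => K x y ∨ K y x)) :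
    ∃ B : β → Prop, (∃ b, B b) ∧ (∃ b, ¬ B b) ∧
      ∀ x y, B x → ¬ B y → x < y ∧ ¬ K x y := by
  set E := fun x y => K x y ∨ K y x with hEdef
  have hsym : ∀ x y, E x y → E y x := fun x y h => h.symm
  obtain ⟨b₀, -, hb₀⟩ := Finset.exists_min_image Finset.univ id ⟨Classical.arbitrary β, Finset.mem_univ _⟩
  have hb₀min : ∀ y : β, b₀ ≤ y := fun y => hb₀ y (Finset.mem_univ _)
  set B := fun z => Relation.ReflTransGen E b₀ z with hBdef
  -- B is downward closed
  have hlower : ∀ z, B z → ∀ y, y ≤ z → B y := by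
    intro z hz
    induction hz with
    | refl =>
      intro y hy
      have : y = b₀ := le_antisymm hy (hb₀min y)
      exact this ▸ Relation.ReflTransGen.refl
    | @tail x z hx hstep ih =>
      intro y hy
      rcases le_or_gt y x with h | h
      · exact ih y h
      · -- x < y ≤ z
        rcases eq_or_lt_of_le hy with rfl | hyz
        · exact hx.tail hstep
        · -- x < y < z, and E x z
          have hxz : x < z := lt_trans h hyz
          have hKxz : K x z := by
            rcases hstep with h' | h'
            · exact h'
            · exact absurd (hlt _ _ h') (not_lt.2 hxz.le)
          rcases hbtw x y z h hyz hKxz with h' | h'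
          · exact (ih x le_rfl).tail (Or.inl h')
          · exact (hx.tail hstep).tail (Or.inr h')
  have hproper : ∃ b, ¬ B b := by
    unfold Conn at hdisc; push_neg at hdisc
    obtain ⟨p, q, hpq⟩ := hdisc
    by_cases hp : B p
    · by_cases hq : B q
      · exact absurd ((reach_symm' hsym hp).trans hq) hpq
      · exact ⟨q, hq⟩
    · exact ⟨p, hp⟩
  refine ⟨B, ⟨b₀, .refl⟩, hproper, ?_⟩
  intro x y hx hy
  constructor
  · rcases lt_trichotomy x y with h | rfl | h
    · exact h
    · exact absurd hx hy
    · exact absurd (hlower x hx y h.le) hy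
  · intro hK
    exact hy (hx.tail (Or.inl hK))



/-- Decomposition of a separable inversion set into a direct or skew block split. -/
lemma invset_decomp (K : β → β → Prop)
    (hlt : ∀ a b, K a b → a < b)
    (hbtw : ∀ a b c, a < b → b < c → K a c → K a b ∨ K b c)
    (htr : ∀ a b c, K a b → K b c → K a c)
    (hav1 : ∀ a b c d : β, a < b → b < c → c < d →
      K a c → K b c → K b d → ¬ K a b → ¬ K a d → ¬ K c d → False)
    (hav2 : ∀ a b c d : β, a < b → b < c → c < d →
      K a b → K a d → K c d → ¬ K a c → ¬ K b c → ¬ K b d → False)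
    (h2 : ∃ x y : β, x ≠ y) :
    ∃ B : β → Prop, (∃ b, B b) ∧ (∃ b, ¬ B b) ∧
      ((∀ x y, B x → ¬ B y → x < y ∧ ¬ K x y) ∨
       (∀ x y, B x → ¬ B y → x < y ∧ K x y)) := by
  have hne : Nonempty β := ⟨h2.choose⟩
  have hirr : ∀ x : β, ¬ (K x x ∨ K x x) := by
    rintro x (h | h) <;> exact lt_irrefl x (hlt _ _ h)
  rcases p4free_split (fun x y => K x y ∨ K y x)
      (fun x y h => h.symm) hirr
      (invset_p4 K hlt hbtw htr hav1 hav2) h2 with hd | hd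
  · obtain ⟨B, h1, h2', h3⟩ := comp_split K hlt hbtw hne hd
    exact ⟨B, h1, h2', Or.inl h3⟩
  · set K' := fun a b : β => a < b ∧ ¬ K a b with hK'def
    have hlt' : ∀ a b, K' a b → a < b := fun a b h => h.1
    have hbtw' : ∀ a b c, a < b → b < c → K' a c → K' a b ∨ K' b c := by
      intro a b c hab hbc hac
      by_contra hcon
      push_neg at hcon
      obtain ⟨h1, h2''⟩ := hcon
      have k1 : K a b := by by_contra h; exact h1 ⟨hab, h⟩
      have k2 : K b c := by by_contra h; exact h2'' ⟨hbc, h⟩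
      exact hac.2 (htr _ _ _ k1 k2)
    have hdisc' : ¬ Conn (fun x y => K' x y ∨ K' y x) := by
      intro hc
      apply hd
      intro x y
      refine Relation.ReflTransGen.mono ?_ _ _ (hc x y)
      rintro p q (⟨hpq, hnK⟩ | ⟨hqp, hnK⟩)
      · exact ⟨ne_of_lt hpq, fun h => by
          rcases h with h | h
          · exact hnK h
          · exact absurd (hlt _ _ h) (not_lt.2 hpq.le)⟩
      · exact ⟨(ne_of_lt hqp).symm, fun h => by
          rcases h with h | h
          · exact absurd (hlt _ _ h) (not_lt.2 hqp.le)
          · exact hnK h⟩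
    obtain ⟨B, h1, h2', h3⟩ := comp_split K' hlt' hbtw' hne hdisc'
    refine ⟨B, h1, h2', Or.inr ?_⟩
    intro x y hx hy
    obtain ⟨hxy, hnK'⟩ := h3 x y hx hy
    refine ⟨hxy, ?_⟩
    by_contra h
    exact hnK' ⟨hxy, h⟩



end DecompSection

section Helpers

/-- Inversion relation (on values) of a bijection between linear orders. -/
def Jrel {α β : Type*} [LT α] [LT β] (f : α ≃ β) (a b : β) : Prop :=
  a < b ∧ f.symm b < f.symm a

variable {γ : Type*} [LinearOrder γ] [Fintype γ]

/-- Two predicates with the same "cross" property w.r.t. an asymmetric relation and the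
same cardinality agree. -/
lemma cross_pred_unique (rel : γ → γ → Prop)
    (hasymm : ∀ x y, rel x y → rel y x → False)
    (P Q : γ → Prop) [DecidablePred P] [DecidablePred Q]
    (hP : ∀ x y, P x → ¬ P y → rel x y) (hQ : ∀ x y, Q x → ¬ Q y → rel x y)
    (hcard : Fintype.card {x // P x} = Fintype.card {x // Q x}) :
    ∀ x, P x ↔ Q x := by
  have key : ∀ (P' Q' : γ → Prop) [DecidablePred P'] [DecidablePred Q'],
      (∀ x y, P' x → ¬ P' y → rel x y) → (∀ x y, Q' x → ¬ Q' y → rel x y) →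
      Fintype.card {x // P' x} ≤ Fintype.card {x // Q' x} →
      ∀ x, P' x → Q' x := by
    intro P' Q' _ _ hP' hQ' hle x hPx
    by_contra hQx
    -- then insert x (filter Q') ⊆ filter P'
    have hsub : insert x (Finset.univ.filter Q') ⊆ Finset.univ.filter P' := by
      intro y hy
      rcases Finset.mem_insert.1 hy with rfl | hy
      · exact Finset.mem_filter.2 ⟨Finset.mem_univ _, hPx⟩
      · have hQy : Q' y := (Finset.mem_filter.1 hy).2
        have h1 : rel y x := hQ' y x hQy hQx
        have hPy : P' y := by
          by_contra h
          exact hasymm x y (hP' x y hPx h) h1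
        exact Finset.mem_filter.2 ⟨Finset.mem_univ _, hPy⟩
    have hxQ : x ∉ Finset.univ.filter Q' := fun h => hQx (Finset.mem_filter.1 h).2
    have := Finset.card_le_card hsub
    rw [Finset.card_insert_of_notMem hxQ, ← Fintype.card_subtype, ← Fintype.card_subtype] at this
    omega
  intro x
  constructor
  · exact key P Q hP hQ (le_of_eq hcard) x
  · exact key Q P hQ hP (le_of_eq hcard.symm) x

/-- Cardinality of the lower block. -/
lemma card_lower_block {n m : ℕ} (hm : m ≤ n) (iso : γ ≃o Fin n) :
    Fintype.card {x : γ // (iso x : ℕ) < m} = m := by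
  have e1 : {x : γ // (iso x : ℕ) < m} ≃ {i : Fin n // (i : ℕ) < m} :=
    iso.toEquiv.subtypeEquiv (fun x => Iff.rfl)
  have e2 : {i : Fin n // (i : ℕ) < m} ≃ Fin m :=
    { toFun := fun i => ⟨i.1, i.2⟩
      invFun := fun j => ⟨⟨j.1, lt_of_lt_of_le j.2 hm⟩, j.2⟩
      left_inv := fun i => by ext; rfl
      right_inv := fun j => rfl }
  rw [Fintype.card_congr (e1.trans e2), Fintype.card_fin]

/-- Cardinality of the upper block. -/
lemma card_upper_block {n m : ℕ} (hm : m ≤ n) (iso : γ ≃o Fin n) :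
    Fintype.card {x : γ // n - m ≤ (iso x : ℕ)} = m := by
  have e1 : {x : γ // n - m ≤ (iso x : ℕ)} ≃ {i : Fin n // n - m ≤ (i : ℕ)} :=
    iso.toEquiv.subtypeEquiv (fun x => Iff.rfl)
  have e2 : {i : Fin n // n - m ≤ (i : ℕ)} ≃ Fin m :=
    { toFun := fun i => ⟨i.1.1 - (n - m), by have := i.1.2; have := i.2; omega⟩
      invFun := fun j => ⟨⟨j.1 + (n - m), by have := j.2; omega⟩, Nat.le_add_left _ _⟩
      left_inv := fun i => by
        apply Subtype.ext; apply Fin.ext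
        show (i.1.1 - (n - m)) + (n - m) = i.1.1
        have := i.2; omega
      right_inv := fun j => by
        apply Fin.ext
        show (j.1 + (n - m)) - (n - m) = j.1
        omega }
  rw [Fintype.card_congr (e1.trans e2), Fintype.card_fin]

variable {α β : Type*} [LinearOrder α] [LinearOrder β]

@[simp] lemma subtypeEquiv_symm_val {p : α → Prop} {q : β → Prop} (e : α ≃ β)
    (h : ∀ a, p a ↔ q (e a)) (b : {y // q y}) :
    ((e.subtypeEquiv h).symm b : α) = e.symm b.1 := by
  rw [Equiv.subtypeEquiv_symm]; rfl

lemma Jrel_subtypeEquiv {p : α → Prop} {q : β → Prop} (e : α ≃ β)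
    (h : ∀ a, p a ↔ q (e a)) (a b : {y // q y}) :
    Jrel (e.subtypeEquiv h) a b ↔ Jrel e a.1 b.1 := by
  unfold Jrel
  rw [Subtype.coe_lt_coe]
  constructor
  · rintro ⟨h1, h2⟩
    refine ⟨h1, ?_⟩
    rwa [← Subtype.coe_lt_coe, subtypeEquiv_symm_val, subtypeEquiv_symm_val] at h2
  · rintro ⟨h1, h2⟩
    refine ⟨h1, ?_⟩
    rwa [← Subtype.coe_lt_coe, subtypeEquiv_symm_val, subtypeEquiv_symm_val]

/-- Glue two equivalences on complementary subtypes. -/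
def glue {α β : Type*} (p : α → Prop) (q : β → Prop) [DecidablePred p] [DecidablePred q]
    (e₁ : {x // p x} ≃ {y // q y}) (e₂ : {x // ¬ p x} ≃ {y // ¬ q y}) : α ≃ β :=
  (Equiv.sumCompl p).symm.trans ((e₁.sumCongr e₂).trans (Equiv.sumCompl q))

lemma glue_pos {α β : Type*} {p : α → Prop} {q : β → Prop} [DecidablePred p] [DecidablePred q]
    (e₁ : {x // p x} ≃ {y // q y}) (e₂ : {x // ¬ p x} ≃ {y // ¬ q y}) {x : α} (h : p x) :
    glue p q e₁ e₂ x = (e₁ ⟨x, h⟩ : β) := by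
  simp [glue, Equiv.sumCompl_symm_apply_of_pos h]

lemma glue_neg {α β : Type*} {p : α → Prop} {q : β → Prop} [DecidablePred p] [DecidablePred q]
    (e₁ : {x // p x} ≃ {y // q y}) (e₂ : {x // ¬ p x} ≃ {y // ¬ q y}) {x : α} (h : ¬ p x) :
    glue p q e₁ e₂ x = (e₂ ⟨x, h⟩ : β) := by
  simp [glue, Equiv.sumCompl_symm_apply_of_neg h]

lemma glue_symm_pos {α β : Type*} {p : α → Prop} {q : β → Prop} [DecidablePred p] [DecidablePred q]
    (e₁ : {x // p x} ≃ {y // q y}) (e₂ : {x // ¬ p x} ≃ {y // ¬ q y}) {y : β} (h : q y) :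
    (glue p q e₁ e₂).symm y = (e₁.symm ⟨y, h⟩ : α) := by
  simp [glue, Equiv.sumCompl_symm_apply_of_pos h]

lemma glue_symm_neg {α β : Type*} {p : α → Prop} {q : β → Prop} [DecidablePred p] [DecidablePred q]
    (e₁ : {x // p x} ≃ {y // q y}) (e₂ : {x // ¬ p x} ≃ {y // ¬ q y}) {y : β} (h : ¬ q y) :
    (glue p q e₁ e₂).symm y = (e₂.symm ⟨y, h⟩ : α) := by
  simp [glue, Equiv.sumCompl_symm_apply_of_neg h]

lemma glue_mem_pos {α β : Type*} {p : α → Prop} {q : β → Prop} [DecidablePred p] [DecidablePred q]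
    (e₁ : {x // p x} ≃ {y // q y}) (e₂ : {x // ¬ p x} ≃ {y // ¬ q y}) {x : α} :
    q (glue p q e₁ e₂ x) ↔ p x := by
  by_cases h : p x
  · simp [glue_pos e₁ e₂ h, h, (e₁ ⟨x, h⟩).2]
  · simp [glue_neg e₁ e₂ h, h, (e₂ ⟨x, h⟩).2]

lemma glue_symm_mem_pos {α β : Type*} {p : α → Prop} {q : β → Prop}
    [DecidablePred p] [DecidablePred q]
    (e₁ : {x // p x} ≃ {y // q y}) (e₂ : {x // ¬ p x} ≃ {y // ¬ q y}) {y : β} :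
    p ((glue p q e₁ e₂).symm y) ↔ q y := by
  by_cases h : q y
  · simp [glue_symm_pos e₁ e₂ h, h, (e₁.symm ⟨y, h⟩).2]
  · simp [glue_symm_neg e₁ e₂ h, h, (e₂.symm ⟨y, h⟩).2]

end Helpers


section Abstract

universe u

/-- The abstract form of Wei's theorem: over finite linear orders, for a "separable"
inversion set `K`, the map `(u, v) ↦ u⁻¹ ∘ v` from `Λ × V` to bijections is bijective. -/
theorem abstract_bij (n : ℕ) {β α α' : Type u}
    [LinearOrder β] [Fintype β] [LinearOrder α] [Fintype α] [LinearOrder α'] [Fintype α']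
    (hβ : Fintype.card β = n) (hα : Fintype.card α = n) (hα' : Fintype.card α' = n)
    (K : β → β → Prop)
    (hlt : ∀ a b, K a b → a < b)
    (hbtw : ∀ a b c, a < b → b < c → K a c → K a b ∨ K b c)
    (htr : ∀ a b c, K a b → K b c → K a c)
    (hav1 : ∀ a b c d : β, a < b → b < c → c < d →
      K a c → K b c → K b d → ¬ K a b → ¬ K a d → ¬ K c d → False)
    (hav2 : ∀ a b c d : β, a < b → b < c → c < d →
      K a b → K a d → K c d → ¬ K a c → ¬ K b c → ¬ K b d → False) :
    Function.Bijective
      (fun p : {u : α' ≃ β // ∀ a b, Jrel u a b → K a b} ×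
               {v : α ≃ β // ∀ a b, K a b → Jrel v a b} =>
        (p.2.1.trans p.1.1.symm : α ≃ α')) := by
  induction n using Nat.strong_induction_on generalizing β α α' with
  | _ n IH =>
  classical
  rcases Nat.lt_or_ge n 2 with hn1 | hn2
  · -- base case : n ≤ 1, everything is a subsingleton
    have hβs : Subsingleton β := Fintype.card_le_one_iff_subsingleton.1 (by omega)
    have hαs : Subsingleton α := Fintype.card_le_one_iff_subsingleton.1 (by omega)
    have hα's : Subsingleton α' := Fintype.card_le_one_iff_subsingleton.1 (by omega)
    constructor
    · intro p q _
      apply Prod.ext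
      · apply Subtype.ext; apply Equiv.ext; intro x; exact Subsingleton.elim _ _
      · apply Subtype.ext; apply Equiv.ext; intro x; exact Subsingleton.elim _ _
    · intro w
      obtain ⟨u₀⟩ : Nonempty (α' ≃ β) := Fintype.card_eq.1 (by omega)
      obtain ⟨v₀⟩ : Nonempty (α ≃ β) := Fintype.card_eq.1 (by omega)
      refine ⟨⟨⟨u₀, ?_⟩, ⟨v₀, ?_⟩⟩, ?_⟩
      · intro a b hab
        exact absurd (Subsingleton.elim a b ▸ hab.1) (lt_irrefl b)
      · intro a b hab
        exact absurd (Subsingleton.elim a b ▸ hlt a b hab) (lt_irrefl b)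
      · apply Equiv.ext; intro x; exact Subsingleton.elim _ _
  · -- main case
    obtain ⟨B, ⟨b1, hb1⟩, ⟨b2, hb2⟩, hsplit⟩ :=
      invset_decomp K hlt hbtw htr hav1 hav2
        (Fintype.one_lt_card_iff.1 (by omega))
    set m := Fintype.card {x : β // B x} with hmdef
    have hm0 : 0 < m := Fintype.card_pos_iff.2 ⟨⟨b1, hb1⟩⟩
    have hmn : m < n := hβ ▸ Fintype.card_subtype_lt (x := b2) hb2
    have hmcn : Fintype.card {x : β // ¬ B x} = n - m := by
      rw [Fintype.card_subtype_compl, hβ]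
    -- restricted inversion sets
    set K₁ : {y : β // B y} → {y : β // B y} → Prop := fun a b => K a.1 b.1 with hK₁def
    set K₂ : {y : β // ¬ B y} → {y : β // ¬ B y} → Prop := fun a b => K a.1 b.1 with hK₂def
    have hK₁ax : (∀ a b, K₁ a b → a < b) ∧
        (∀ a b c, a < b → b < c → K₁ a c → K₁ a b ∨ K₁ b c) ∧
        (∀ a b c, K₁ a b → K₁ b c → K₁ a c) := by
      refine ⟨fun a b h => Subtype.coe_lt_coe.1 (hlt _ _ h), ?_, fun a b c h1 h2 => htr _ _ _ h1 h2⟩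
      intro a b c h1 h2 h3
      exact hbtw a.1 b.1 c.1 (Subtype.coe_lt_coe.2 h1) (Subtype.coe_lt_coe.2 h2) h3
    have hK₂ax : (∀ a b, K₂ a b → a < b) ∧
        (∀ a b c, a < b → b < c → K₂ a c → K₂ a b ∨ K₂ b c) ∧
        (∀ a b c, K₂ a b → K₂ b c → K₂ a c) := by
      refine ⟨fun a b h => Subtype.coe_lt_coe.1 (hlt _ _ h), ?_, fun a b c h1 h2 => htr _ _ _ h1 h2⟩
      intro a b c h1 h2 h3
      exact hbtw a.1 b.1 c.1 (Subtype.coe_lt_coe.2 h1) (Subtype.coe_lt_coe.2 h2) h3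
    have hK₁av1 : ∀ a b c d, a < b → b < c → c < d →
        K₁ a c → K₁ b c → K₁ b d → ¬ K₁ a b → ¬ K₁ a d → ¬ K₁ c d → False := by
      intro a b c d l1 l2 l3 k1 k2 k3 n1 n2 n3
      exact hav1 a.1 b.1 c.1 d.1 (Subtype.coe_lt_coe.2 l1) (Subtype.coe_lt_coe.2 l2)
        (Subtype.coe_lt_coe.2 l3) k1 k2 k3 n1 n2 n3
    have hK₁av2 : ∀ a b c d, a < b → b < c → c < d →
        K₁ a b → K₁ a d → K₁ c d → ¬ K₁ a c → ¬ K₁ b c → ¬ K₁ b d → False := by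
      intro a b c d l1 l2 l3 k1 k2 k3 n1 n2 n3
      exact hav2 a.1 b.1 c.1 d.1 (Subtype.coe_lt_coe.2 l1) (Subtype.coe_lt_coe.2 l2)
        (Subtype.coe_lt_coe.2 l3) k1 k2 k3 n1 n2 n3
    have hK₂av1 : ∀ a b c d, a < b → b < c → c < d →
        K₂ a c → K₂ b c → K₂ b d → ¬ K₂ a b → ¬ K₂ a d → ¬ K₂ c d → False := by
      intro a b c d l1 l2 l3 k1 k2 k3 n1 n2 n3
      exact hav1 a.1 b.1 c.1 d.1 (Subtype.coe_lt_coe.2 l1) (Subtype.coe_lt_coe.2 l2)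
        (Subtype.coe_lt_coe.2 l3) k1 k2 k3 n1 n2 n3
    have hK₂av2 : ∀ a b c d, a < b → b < c → c < d →
        K₂ a b → K₂ a d → K₂ c d → ¬ K₂ a c → ¬ K₂ b c → ¬ K₂ b d → False := by
      intro a b c d l1 l2 l3 k1 k2 k3 n1 n2 n3
      exact hav2 a.1 b.1 c.1 d.1 (Subtype.coe_lt_coe.2 l1) (Subtype.coe_lt_coe.2 l2)
        (Subtype.coe_lt_coe.2 l3) k1 k2 k3 n1 n2 n3
    rcases hsplit with hcross | hcross
    · -- direct sum case : no K-pair across, Λ splits canonically, V carries the shuffle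
      set iso' : α' ≃o Fin n := (Fintype.orderIsoFinOfCardEq α' hα').symm with hiso'def
      set A' : α' → Prop := fun x => ((iso' x : Fin n) : ℕ) < m with hA'def
      have hA'cross : ∀ x y : α', A' x → ¬ A' y → x < y := by
        intro x y hx hy
        have h1 : (iso' x : ℕ) < (iso' y : ℕ) := lt_of_lt_of_le hx (not_lt.1 hy)
        exact iso'.lt_iff_lt.1 h1
      have hcardA' : Fintype.card {x : α' // A' x} = m := card_lower_block (le_of_lt hmn) iso'
      have hcardA'c : Fintype.card {x : α' // ¬ A' x} = n - m := by
        rw [Fintype.card_subtype_compl, hα', hcardA']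
      have L1 : ∀ (u : α' ≃ β), (∀ a b, Jrel u a b → K a b) → ∀ x, A' x ↔ B (u x) := by
        intro u hu
        refine cross_pred_unique (fun x y => x < y) (fun x y h1 h2 => absurd h2 (lt_asymm h1))
          A' (fun x => B (u x)) hA'cross ?_ ?_
        · intro x y hx hy
          obtain ⟨hlt', hnK⟩ := hcross (u x) (u y) hx hy
          have hnJ : ¬ Jrel u (u x) (u y) := fun h => hnK (hu _ _ h)
          have h1 : ¬ (y < x) := fun hyx => hnJ ⟨hlt', by
            simp only [Equiv.symm_apply_apply]; exact hyx⟩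
          have hne : x ≠ y := fun h => (h ▸ hy) hx
          exact (lt_or_gt_of_ne hne).resolve_right h1
        · rw [hcardA',
            Fintype.card_congr (u.subtypeEquiv (fun x => Iff.rfl) : {x // B (u x)} ≃ {y // B y})]
      constructor
      · -- injectivity
        rintro ⟨⟨u, hu⟩, ⟨v, hv⟩⟩ ⟨⟨u', hu'⟩, ⟨v', hv'⟩⟩ heq
        have heq2 : v.trans u.symm = v'.trans u'.symm := heq
        set w := v.trans u.symm with hwdef
        have hwapp : ∀ x, w x = u.symm (v x) := fun x => rfl
        have hwapp' : ∀ x, w x = u'.symm (v' x) := fun x => congrArg (fun e : α ≃ α' => e x) heq2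
        set P : α → Prop := fun x => A' (w x) with hPdef
        have hPv : ∀ x, P x ↔ B (v x) := by
          intro x
          have h1 := L1 u hu (w x)
          have h2 : u (w x) = v x := by rw [hwapp]; exact u.apply_symm_apply _
          rw [hPdef]; exact h1.trans (by rw [h2])
        have hPv' : ∀ x, P x ↔ B (v' x) := by
          intro x
          have h1 := L1 u' hu' (w x)
          have h2 : u' (w x) = v' x := by rw [hwapp']; exact u'.apply_symm_apply _
          rw [hPdef]; exact h1.trans (by rw [h2])
        have hcardP : Fintype.card {x : α // P x} = m := by
          rw [Fintype.card_congr (Equiv.subtypeEquivRight hPv),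
            Fintype.card_congr (v.subtypeEquiv (fun x => Iff.rfl) : {x // B (v x)} ≃ {y // B y})]
        have hcardPc : Fintype.card {x : α // ¬ P x} = n - m := by
          rw [Fintype.card_subtype_compl, hα, hcardP]
        -- block components
        set u₁ := u.subtypeEquiv (L1 u hu) with hu₁def
        set u₂ : {x // ¬ A' x} ≃ {y // ¬ B y} := u.subtypeEquiv (fun x => not_congr (L1 u hu x)) with hu₂def
        set u'₁ := u'.subtypeEquiv (L1 u' hu') with hu'₁def
        set u'₂ : {x // ¬ A' x} ≃ {y // ¬ B y} := u'.subtypeEquiv (fun x => not_congr (L1 u' hu' x)) with hu'₂def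
        set v₁ := v.subtypeEquiv hPv with hv₁def
        set v₂ : {x // ¬ P x} ≃ {y // ¬ B y} := v.subtypeEquiv (fun x => not_congr (hPv x)) with hv₂def
        set v'₁ := v'.subtypeEquiv hPv' with hv'₁def
        set v'₂ : {x // ¬ P x} ≃ {y // ¬ B y} := v'.subtypeEquiv (fun x => not_congr (hPv' x)) with hv'₂def
        set w₁ : {x // P x} ≃ {x' // A' x'} := w.subtypeEquiv (fun x => Iff.rfl) with hw₁def
        set w₂ : {x // ¬ P x} ≃ {x' // ¬ A' x'} := w.subtypeEquiv (fun x => Iff.rfl) with hw₂def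
        have hφ1 : v₁.trans u₁.symm = w₁ := by
          apply Equiv.ext; intro x; apply Subtype.ext
          simp only [hv₁def, hu₁def, hw₁def, Equiv.trans_apply, Equiv.subtypeEquiv_apply,
            subtypeEquiv_symm_val]
          rw [hwapp]
        have hφ1' : v'₁.trans u'₁.symm = w₁ := by
          apply Equiv.ext; intro x; apply Subtype.ext
          simp only [hv'₁def, hu'₁def, hw₁def, Equiv.trans_apply, Equiv.subtypeEquiv_apply,
            subtypeEquiv_symm_val]
          rw [hwapp']
        have hφ2 : v₂.trans u₂.symm = w₂ := by
          apply Equiv.ext; intro x; apply Subtype.ext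
          simp only [hv₂def, hu₂def, hw₂def, Equiv.trans_apply, Equiv.subtypeEquiv_apply,
            subtypeEquiv_symm_val]
          rw [hwapp]
        have hφ2' : v'₂.trans u'₂.symm = w₂ := by
          apply Equiv.ext; intro x; apply Subtype.ext
          simp only [hv'₂def, hu'₂def, hw₂def, Equiv.trans_apply, Equiv.subtypeEquiv_apply,
            subtypeEquiv_symm_val]
          rw [hwapp']
        have h1 := (IH m hmn hmdef.symm hcardP hcardA' K₁ hK₁ax.1 hK₁ax.2.1 hK₁ax.2.2
            hK₁av1 hK₁av2).injective
          (a₁ := ⟨⟨u₁, fun a b h => hu _ _ ((Jrel_subtypeEquiv u _ a b).1 h)⟩,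
                 ⟨v₁, fun a b h => (Jrel_subtypeEquiv v hPv a b).2 (hv _ _ h)⟩⟩)
          (a₂ := ⟨⟨u'₁, fun a b h => hu' _ _ ((Jrel_subtypeEquiv u' _ a b).1 h)⟩,
                 ⟨v'₁, fun a b h => (Jrel_subtypeEquiv v' hPv' a b).2 (hv' _ _ h)⟩⟩)
          (by show v₁.trans u₁.symm = v'₁.trans u'₁.symm; rw [hφ1, hφ1'])
        have h2 := (IH (n - m) (by omega) hmcn hcardPc hcardA'c K₂ hK₂ax.1 hK₂ax.2.1 hK₂ax.2.2
            hK₂av1 hK₂av2).injective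
          (a₁ := ⟨⟨u₂, fun a b h => hu _ _ ((Jrel_subtypeEquiv u _ a b).1 h)⟩,
                 ⟨v₂, fun a b h => (Jrel_subtypeEquiv v _ a b).2 (hv _ _ h)⟩⟩)
          (a₂ := ⟨⟨u'₂, fun a b h => hu' _ _ ((Jrel_subtypeEquiv u' _ a b).1 h)⟩,
                 ⟨v'₂, fun a b h => (Jrel_subtypeEquiv v' _ a b).2 (hv' _ _ h)⟩⟩)
          (by show v₂.trans u₂.symm = v'₂.trans u'₂.symm; rw [hφ2, hφ2'])
        have hu₁e : u₁ = u'₁ := congrArg (fun p => p.1.1) h1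
        have hv₁e : v₁ = v'₁ := congrArg (fun p => p.2.1) h1
        have hu₂e : u₂ = u'₂ := congrArg (fun p => p.1.1) h2
        have hv₂e : v₂ = v'₂ := congrArg (fun p => p.2.1) h2
        have hue : u = u' := by
          apply Equiv.ext; intro x
          by_cases hx : A' x
          · have := congrArg (fun e => ((e ⟨x, hx⟩ : {y // B y}) : β)) hu₁e
            simpa only [hu₁def, hu'₁def, Equiv.subtypeEquiv_apply] using this
          · have := congrArg (fun e => ((e ⟨x, hx⟩ : {y // ¬ B y}) : β)) hu₂e
            simpa only [hu₂def, hu'₂def, Equiv.subtypeEquiv_apply] using this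
        have hve : v = v' := by
          apply Equiv.ext; intro x
          by_cases hx : P x
          · have := congrArg (fun e => ((e ⟨x, hx⟩ : {y // B y}) : β)) hv₁e
            simpa only [hv₁def, hv'₁def, Equiv.subtypeEquiv_apply] using this
          · have := congrArg (fun e => ((e ⟨x, hx⟩ : {y // ¬ B y}) : β)) hv₂e
            simpa only [hv₂def, hv'₂def, Equiv.subtypeEquiv_apply] using this
        exact Prod.ext (Subtype.ext hue) (Subtype.ext hve)
      · -- surjectivity
        intro w
        set P : α → Prop := fun x => A' (w x) with hPdef
        set w₁ : {x // P x} ≃ {x' // A' x'} := w.subtypeEquiv (fun x => Iff.rfl) with hw₁def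
        set w₂ : {x // ¬ P x} ≃ {x' // ¬ A' x'} := w.subtypeEquiv (fun x => Iff.rfl) with hw₂def
        have hcardP : Fintype.card {x : α // P x} = m := by
          rw [Fintype.card_congr w₁, hcardA']
        have hcardPc : Fintype.card {x : α // ¬ P x} = n - m := by
          rw [Fintype.card_subtype_compl, hα, hcardP]
        obtain ⟨⟨⟨uu₁, huu₁⟩, ⟨vv₁, hvv₁⟩⟩, heq₁⟩ :=
          (IH m hmn hmdef.symm hcardP hcardA' K₁ hK₁ax.1 hK₁ax.2.1 hK₁ax.2.2
            hK₁av1 hK₁av2).surjective w₁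
        obtain ⟨⟨⟨uu₂, huu₂⟩, ⟨vv₂, hvv₂⟩⟩, heq₂⟩ :=
          (IH (n - m) (by omega) hmcn hcardPc hcardA'c K₂ hK₂ax.1 hK₂ax.2.1 hK₂ax.2.2
            hK₂av1 hK₂av2).surjective w₂
        have heq₁' : vv₁.trans uu₁.symm = w₁ := heq₁
        have heq₂' : vv₂.trans uu₂.symm = w₂ := heq₂
        set u : α' ≃ β := glue A' B uu₁ uu₂ with hudef
        set v : α ≃ β := glue P B vv₁ vv₂ with hvdef
        have husp : ∀ b (hb : B b), u.symm b = (uu₁.symm ⟨b, hb⟩ : α') := fun b hb =>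
          glue_symm_pos uu₁ uu₂ hb
        have husn : ∀ b (hb : ¬ B b), u.symm b = (uu₂.symm ⟨b, hb⟩ : α') := fun b hb =>
          glue_symm_neg uu₁ uu₂ hb
        have hvsp : ∀ b (hb : B b), v.symm b = (vv₁.symm ⟨b, hb⟩ : α) := fun b hb =>
          glue_symm_pos vv₁ vv₂ hb
        have hvsn : ∀ b (hb : ¬ B b), v.symm b = (vv₂.symm ⟨b, hb⟩ : α) := fun b hb =>
          glue_symm_neg vv₁ vv₂ hb
        have hu : ∀ a b, Jrel u a b → K a b := by
          rintro a b ⟨hab, hs⟩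
          by_cases ha : B a <;> by_cases hb : B b
          · refine huu₁ ⟨a, ha⟩ ⟨b, hb⟩ ⟨Subtype.coe_lt_coe.1 hab, ?_⟩
            rw [← Subtype.coe_lt_coe, ← husp a ha, ← husp b hb]
            exact hs
          · exfalso
            have h1 : A' (u.symm a) := (glue_symm_mem_pos uu₁ uu₂).2 ha
            have h2 : ¬ A' (u.symm b) := fun h => hb ((glue_symm_mem_pos uu₁ uu₂).1 h)
            exact absurd hs (not_lt.2 (le_of_lt (hA'cross _ _ h1 h2)))
          · exact absurd hab (not_lt.2 (le_of_lt (hcross b a hb ha).1))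
          · refine huu₂ ⟨a, ha⟩ ⟨b, hb⟩ ⟨Subtype.coe_lt_coe.1 hab, ?_⟩
            rw [← Subtype.coe_lt_coe, ← husn a ha, ← husn b hb]
            exact hs
        have hv : ∀ a b, K a b → Jrel v a b := by
          intro a b hK
          by_cases ha : B a <;> by_cases hb : B b
          · obtain ⟨h1, h2⟩ := hvv₁ ⟨a, ha⟩ ⟨b, hb⟩ hK
            refine ⟨Subtype.coe_lt_coe.2 h1, ?_⟩
            rw [hvsp a ha, hvsp b hb]
            exact Subtype.coe_lt_coe.2 h2
          · exact absurd hK (hcross a b ha hb).2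
          · exact absurd (hlt _ _ hK) (not_lt.2 (le_of_lt (hcross b a hb ha).1))
          · obtain ⟨h1, h2⟩ := hvv₂ ⟨a, ha⟩ ⟨b, hb⟩ hK
            refine ⟨Subtype.coe_lt_coe.2 h1, ?_⟩
            rw [hvsn a ha, hvsn b hb]
            exact Subtype.coe_lt_coe.2 h2
        refine ⟨⟨⟨u, hu⟩, ⟨v, hv⟩⟩, ?_⟩
        show v.trans u.symm = w
        apply Equiv.ext; intro x
        show u.symm (v x) = w x
        by_cases hx : P x
        · have hvx : v x = (vv₁ ⟨x, hx⟩ : β) := glue_pos vv₁ vv₂ hx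
          have hB : B (v x) := hvx ▸ (vv₁ ⟨x, hx⟩).2
          have e2 : (⟨v x, hB⟩ : {y // B y}) = vv₁ ⟨x, hx⟩ := Subtype.ext hvx
          rw [husp (v x) hB, e2]
          have := congrArg (fun e => ((e ⟨x, hx⟩ : {x' // A' x'}) : α')) heq₁'
          simpa only [hw₁def, Equiv.trans_apply, Equiv.subtypeEquiv_apply] using this
        · have hvx : v x = (vv₂ ⟨x, hx⟩ : β) := glue_neg vv₁ vv₂ hx
          have hB : ¬ B (v x) := hvx ▸ (vv₂ ⟨x, hx⟩).2
          have e2 : (⟨v x, hB⟩ : {y // ¬ B y}) = vv₂ ⟨x, hx⟩ := Subtype.ext hvx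
          rw [husn (v x) hB, e2]
          have := congrArg (fun e => ((e ⟨x, hx⟩ : {x' // ¬ A' x'}) : α')) heq₂'
          simpa only [hw₂def, Equiv.trans_apply, Equiv.subtypeEquiv_apply] using this
    · -- skew sum case : all cross pairs in K, V splits canonically, Λ carries the shuffle
      set isoa : α ≃o Fin n := (Fintype.orderIsoFinOfCardEq α hα).symm with hisoadef
      set A : α → Prop := fun x => n - m ≤ ((isoa x : Fin n) : ℕ) with hAdef
      have hAcross : ∀ x y : α, A x → ¬ A y → y < x := by
        intro x y hx hy
        have h1 : (isoa y : ℕ) < (isoa x : ℕ) := lt_of_lt_of_le (not_le.1 hy) hx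
        exact isoa.lt_iff_lt.1 h1
      have hcardA : Fintype.card {x : α // A x} = m := card_upper_block (le_of_lt hmn) isoa
      have hcardAc : Fintype.card {x : α // ¬ A x} = n - m := by
        rw [Fintype.card_subtype_compl, hα, hcardA]
      have L1v : ∀ (v : α ≃ β), (∀ a b, K a b → Jrel v a b) → ∀ x, A x ↔ B (v x) := by
        intro v hv
        refine cross_pred_unique (fun x y => y < x) (fun x y h1 h2 => absurd h2 (lt_asymm h1))
          A (fun x => B (v x)) hAcross ?_ ?_
        · intro x y hx hy
          obtain ⟨hlt', hK⟩ := hcross (v x) (v y) hx hy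
          have hJ := hv _ _ hK
          have := hJ.2
          simpa only [Equiv.symm_apply_apply] using this
        · rw [hcardA,
            Fintype.card_congr (v.subtypeEquiv (fun x => Iff.rfl) : {x // B (v x)} ≃ {y // B y})]
      constructor
      · -- injectivity
        rintro ⟨⟨u, hu⟩, ⟨v, hv⟩⟩ ⟨⟨u', hu'⟩, ⟨v', hv'⟩⟩ heq
        have heq2 : v.trans u.symm = v'.trans u'.symm := heq
        set w := v.trans u.symm with hwdef
        have hwsymm : ∀ x', w.symm x' = v.symm (u x') := fun x' => rfl
        have hwsymm' : ∀ x', w.symm x' = v'.symm (u' x') := fun x' =>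
          congrArg (fun e : α ≃ α' => e.symm x') heq2
        have hwapp : ∀ x, w x = u.symm (v x) := fun x => rfl
        have hwapp' : ∀ x, w x = u'.symm (v' x) := fun x =>
          congrArg (fun e : α ≃ α' => e x) heq2
        set Q : α' → Prop := fun x' => A (w.symm x') with hQdef
        have hQu : ∀ x', Q x' ↔ B (u x') := by
          intro x'
          have h1 := L1v v hv (v.symm (u x'))
          rw [v.apply_symm_apply] at h1
          show A (w.symm x') ↔ B (u x')
          rw [hwsymm x']
          exact h1
        have hQu' : ∀ x', Q x' ↔ B (u' x') := by
          intro x'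
          have h1 := L1v v' hv' (v'.symm (u' x'))
          rw [v'.apply_symm_apply] at h1
          show A (w.symm x') ↔ B (u' x')
          rw [hwsymm' x']
          exact h1
        have hcardQ : Fintype.card {x' : α' // Q x'} = m := by
          rw [Fintype.card_congr (Equiv.subtypeEquivRight hQu),
            Fintype.card_congr (u.subtypeEquiv (fun x => Iff.rfl) : {x' // B (u x')} ≃ {y // B y})]
        have hcardQc : Fintype.card {x' : α' // ¬ Q x'} = n - m := by
          rw [Fintype.card_subtype_compl, hα', hcardQ]
        set u₁ := u.subtypeEquiv hQu with hu₁def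
        set u₂ : {x' // ¬ Q x'} ≃ {y // ¬ B y} :=
          u.subtypeEquiv (fun x => not_congr (hQu x)) with hu₂def
        set u'₁ := u'.subtypeEquiv hQu' with hu'₁def
        set u'₂ : {x' // ¬ Q x'} ≃ {y // ¬ B y} :=
          u'.subtypeEquiv (fun x => not_congr (hQu' x)) with hu'₂def
        set v₁ := v.subtypeEquiv (L1v v hv) with hv₁def
        set v₂ : {x // ¬ A x} ≃ {y // ¬ B y} :=
          v.subtypeEquiv (fun x => not_congr (L1v v hv x)) with hv₂def
        set v'₁ := v'.subtypeEquiv (L1v v' hv') with hv'₁def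
        set v'₂ : {x // ¬ A x} ≃ {y // ¬ B y} :=
          v'.subtypeEquiv (fun x => not_congr (L1v v' hv' x)) with hv'₂def
        have hAQ : ∀ x : α, A x ↔ Q (w x) := fun x => by
          show A x ↔ A (w.symm (w x)); rw [Equiv.symm_apply_apply]
        have hAQn : ∀ x : α, ¬ A x ↔ ¬ Q (w x) := fun x => not_congr (hAQ x)
        set w₁ : {x // A x} ≃ {x' // Q x'} := w.subtypeEquiv hAQ with hw₁def
        set w₂ : {x // ¬ A x} ≃ {x' // ¬ Q x'} := w.subtypeEquiv hAQn with hw₂def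
        have hφ1 : v₁.trans u₁.symm = w₁ := by
          apply Equiv.ext; intro x; apply Subtype.ext
          simp only [hv₁def, hu₁def, hw₁def, Equiv.trans_apply, Equiv.subtypeEquiv_apply,
            subtypeEquiv_symm_val]
          rw [hwapp]
        have hφ1' : v'₁.trans u'₁.symm = w₁ := by
          apply Equiv.ext; intro x; apply Subtype.ext
          simp only [hv'₁def, hu'₁def, hw₁def, Equiv.trans_apply, Equiv.subtypeEquiv_apply,
            subtypeEquiv_symm_val]
          rw [hwapp']
        have hφ2 : v₂.trans u₂.symm = w₂ := by
          apply Equiv.ext; intro x; apply Subtype.ext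
          simp only [hv₂def, hu₂def, hw₂def, Equiv.trans_apply, Equiv.subtypeEquiv_apply,
            subtypeEquiv_symm_val]
          rw [hwapp]
        have hφ2' : v'₂.trans u'₂.symm = w₂ := by
          apply Equiv.ext; intro x; apply Subtype.ext
          simp only [hv'₂def, hu'₂def, hw₂def, Equiv.trans_apply, Equiv.subtypeEquiv_apply,
            subtypeEquiv_symm_val]
          rw [hwapp']
        have h1 := (IH m hmn hmdef.symm hcardA hcardQ K₁ hK₁ax.1 hK₁ax.2.1 hK₁ax.2.2
            hK₁av1 hK₁av2).injective
          (a₁ := ⟨⟨u₁, fun a b h => hu _ _ ((Jrel_subtypeEquiv u _ a b).1 h)⟩,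
                 ⟨v₁, fun a b h => (Jrel_subtypeEquiv v _ a b).2 (hv _ _ h)⟩⟩)
          (a₂ := ⟨⟨u'₁, fun a b h => hu' _ _ ((Jrel_subtypeEquiv u' _ a b).1 h)⟩,
                 ⟨v'₁, fun a b h => (Jrel_subtypeEquiv v' _ a b).2 (hv' _ _ h)⟩⟩)
          (by show v₁.trans u₁.symm = v'₁.trans u'₁.symm; rw [hφ1, hφ1'])
        have h2 := (IH (n - m) (by omega) hmcn hcardAc hcardQc K₂ hK₂ax.1 hK₂ax.2.1 hK₂ax.2.2
            hK₂av1 hK₂av2).injective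
          (a₁ := ⟨⟨u₂, fun a b h => hu _ _ ((Jrel_subtypeEquiv u _ a b).1 h)⟩,
                 ⟨v₂, fun a b h => (Jrel_subtypeEquiv v _ a b).2 (hv _ _ h)⟩⟩)
          (a₂ := ⟨⟨u'₂, fun a b h => hu' _ _ ((Jrel_subtypeEquiv u' _ a b).1 h)⟩,
                 ⟨v'₂, fun a b h => (Jrel_subtypeEquiv v' _ a b).2 (hv' _ _ h)⟩⟩)
          (by show v₂.trans u₂.symm = v'₂.trans u'₂.symm; rw [hφ2, hφ2'])
        have hu₁e : u₁ = u'₁ := congrArg (fun p => p.1.1) h1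
        have hv₁e : v₁ = v'₁ := congrArg (fun p => p.2.1) h1
        have hu₂e : u₂ = u'₂ := congrArg (fun p => p.1.1) h2
        have hv₂e : v₂ = v'₂ := congrArg (fun p => p.2.1) h2
        have hue : u = u' := by
          apply Equiv.ext; intro x
          by_cases hx : Q x
          · have := congrArg (fun e => ((e ⟨x, hx⟩ : {y // B y}) : β)) hu₁e
            simpa only [hu₁def, hu'₁def, Equiv.subtypeEquiv_apply] using this
          · have := congrArg (fun e => ((e ⟨x, hx⟩ : {y // ¬ B y}) : β)) hu₂e
            simpa only [hu₂def, hu'₂def, Equiv.subtypeEquiv_apply] using this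
        have hve : v = v' := by
          apply Equiv.ext; intro x
          by_cases hx : A x
          · have := congrArg (fun e => ((e ⟨x, hx⟩ : {y // B y}) : β)) hv₁e
            simpa only [hv₁def, hv'₁def, Equiv.subtypeEquiv_apply] using this
          · have := congrArg (fun e => ((e ⟨x, hx⟩ : {y // ¬ B y}) : β)) hv₂e
            simpa only [hv₂def, hv'₂def, Equiv.subtypeEquiv_apply] using this
        exact Prod.ext (Subtype.ext hue) (Subtype.ext hve)
      · -- surjectivity
        intro w
        set Q : α' → Prop := fun x' => A (w.symm x') with hQdef
        have hAQ : ∀ x : α, A x ↔ Q (w x) := fun x => by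
          show A x ↔ A (w.symm (w x)); rw [Equiv.symm_apply_apply]
        have hAQn : ∀ x : α, ¬ A x ↔ ¬ Q (w x) := fun x => not_congr (hAQ x)
        set w₁ : {x // A x} ≃ {x' // Q x'} := w.subtypeEquiv hAQ with hw₁def
        set w₂ : {x // ¬ A x} ≃ {x' // ¬ Q x'} := w.subtypeEquiv hAQn with hw₂def
        have hcardQ : Fintype.card {x' : α' // Q x'} = m := by
          rw [Fintype.card_congr w₁.symm, hcardA]
        have hcardQc : Fintype.card {x' : α' // ¬ Q x'} = n - m := by
          rw [Fintype.card_subtype_compl, hα', hcardQ]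
        obtain ⟨⟨⟨uu₁, huu₁⟩, ⟨vv₁, hvv₁⟩⟩, heq₁⟩ :=
          (IH m hmn hmdef.symm hcardA hcardQ K₁ hK₁ax.1 hK₁ax.2.1 hK₁ax.2.2
            hK₁av1 hK₁av2).surjective w₁
        obtain ⟨⟨⟨uu₂, huu₂⟩, ⟨vv₂, hvv₂⟩⟩, heq₂⟩ :=
          (IH (n - m) (by omega) hmcn hcardAc hcardQc K₂ hK₂ax.1 hK₂ax.2.1 hK₂ax.2.2
            hK₂av1 hK₂av2).surjective w₂
        have heq₁' : vv₁.trans uu₁.symm = w₁ := heq₁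
        have heq₂' : vv₂.trans uu₂.symm = w₂ := heq₂
        set u : α' ≃ β := glue Q B uu₁ uu₂ with hudef
        set v : α ≃ β := glue A B vv₁ vv₂ with hvdef
        have husp : ∀ b (hb : B b), u.symm b = (uu₁.symm ⟨b, hb⟩ : α') := fun b hb =>
          glue_symm_pos uu₁ uu₂ hb
        have husn : ∀ b (hb : ¬ B b), u.symm b = (uu₂.symm ⟨b, hb⟩ : α') := fun b hb =>
          glue_symm_neg uu₁ uu₂ hb
        have hvsp : ∀ b (hb : B b), v.symm b = (vv₁.symm ⟨b, hb⟩ : α) := fun b hb =>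
          glue_symm_pos vv₁ vv₂ hb
        have hvsn : ∀ b (hb : ¬ B b), v.symm b = (vv₂.symm ⟨b, hb⟩ : α) := fun b hb =>
          glue_symm_neg vv₁ vv₂ hb
        have hu : ∀ a b, Jrel u a b → K a b := by
          rintro a b ⟨hab, hs⟩
          by_cases ha : B a <;> by_cases hb : B b
          · refine huu₁ ⟨a, ha⟩ ⟨b, hb⟩ ⟨Subtype.coe_lt_coe.1 hab, ?_⟩
            rw [← Subtype.coe_lt_coe, ← husp a ha, ← husp b hb]
            exact hs
          · exact (hcross a b ha hb).2
          · exact absurd hab (not_lt.2 (le_of_lt (hcross b a hb ha).1))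
          · refine huu₂ ⟨a, ha⟩ ⟨b, hb⟩ ⟨Subtype.coe_lt_coe.1 hab, ?_⟩
            rw [← Subtype.coe_lt_coe, ← husn a ha, ← husn b hb]
            exact hs
        have hv : ∀ a b, K a b → Jrel v a b := by
          intro a b hK
          by_cases ha : B a <;> by_cases hb : B b
          · obtain ⟨h1, h2⟩ := hvv₁ ⟨a, ha⟩ ⟨b, hb⟩ hK
            refine ⟨Subtype.coe_lt_coe.2 h1, ?_⟩
            rw [hvsp a ha, hvsp b hb]
            exact Subtype.coe_lt_coe.2 h2
          · refine ⟨hlt _ _ hK, ?_⟩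
            have h1 : A (v.symm a) := (glue_symm_mem_pos vv₁ vv₂).2 ha
            have h2 : ¬ A (v.symm b) := fun h => hb ((glue_symm_mem_pos vv₁ vv₂).1 h)
            exact hAcross _ _ h1 h2
          · exact absurd (hlt _ _ hK) (not_lt.2 (le_of_lt (hcross b a hb ha).1))
          · obtain ⟨h1, h2⟩ := hvv₂ ⟨a, ha⟩ ⟨b, hb⟩ hK
            refine ⟨Subtype.coe_lt_coe.2 h1, ?_⟩
            rw [hvsn a ha, hvsn b hb]
            exact Subtype.coe_lt_coe.2 h2
        refine ⟨⟨⟨u, hu⟩, ⟨v, hv⟩⟩, ?_⟩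
        show v.trans u.symm = w
        apply Equiv.ext; intro x
        show u.symm (v x) = w x
        by_cases hx : A x
        · have hvx : v x = (vv₁ ⟨x, hx⟩ : β) := glue_pos vv₁ vv₂ hx
          have hB : B (v x) := hvx ▸ (vv₁ ⟨x, hx⟩).2
          have e2 : (⟨v x, hB⟩ : {y // B y}) = vv₁ ⟨x, hx⟩ := Subtype.ext hvx
          rw [husp (v x) hB, e2]
          have := congrArg (fun e => ((e ⟨x, hx⟩ : {x' // Q x'}) : α')) heq₁'
          simpa only [hw₁def, Equiv.trans_apply, Equiv.subtypeEquiv_apply] using this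
        · have hvx : v x = (vv₂ ⟨x, hx⟩ : β) := glue_neg vv₁ vv₂ hx
          have hB : ¬ B (v x) := hvx ▸ (vv₂ ⟨x, hx⟩).2
          have e2 : (⟨v x, hB⟩ : {y // ¬ B y}) = vv₂ ⟨x, hx⟩ := Subtype.ext hvx
          rw [husn (v x) hB, e2]
          have := congrArg (fun e => ((e ⟨x, hx⟩ : {x' // ¬ Q x'}) : α')) heq₂'
          simpa only [hw₂def, Equiv.trans_apply, Equiv.subtypeEquiv_apply] using this



end Abstract

section Glue

variable {n : ℕ}

open scoped Classical in
/-- The inversion set of a permutation, as a finset of pairs of values. -/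
noncomputable def Jf (w : Equiv.Perm (Fin n)) : Finset (Fin n × Fin n) :=
  Finset.univ.filter fun p : Fin n × Fin n => Jrel (w : Fin n ≃ Fin n) p.1 p.2

lemma mem_Jf {w : Equiv.Perm (Fin n)} {p : Fin n × Fin n} :
    p ∈ Jf w ↔ p.1 < p.2 ∧ w.symm p.2 < w.symm p.1 := by
  simp only [Jf, Finset.mem_filter, Finset.mem_univ, true_and]; rfl

lemma invCount_eq_card_Jf (w : Equiv.Perm (Fin n)) : invCount w = (Jf w).card := by
  unfold invCount
  apply Finset.card_nbij' (fun p => (w p.2, w p.1)) (fun q => (w.symm q.2, w.symm q.1))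
  · intro p hp
    rw [Finset.mem_coe, Finset.mem_filter] at hp
    simp only [Finset.mem_coe, Finset.mem_filter, Finset.mem_univ, true_and] at hp
    rw [Finset.mem_coe, mem_Jf]
    simpa using And.intro hp.2 hp.1
  · intro q hq
    rw [Finset.mem_coe, mem_Jf] at hq
    rw [Finset.mem_coe, Finset.mem_filter]
    simp only [Finset.mem_coe, Finset.mem_filter, Finset.mem_univ, true_and]
    simpa using And.intro hq.2 hq.1
  · intro p _; simp
  · intro q _; simp

lemma invCount_inv_mul (u v : Equiv.Perm (Fin n)) :
    invCount (u⁻¹ * v) = (symmDiff (Jf u) (Jf v)).card := by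
  unfold invCount
  apply Finset.card_nbij'
    (fun p => if v p.1 < v p.2 then (v p.1, v p.2) else (v p.2, v p.1))
    (fun q => if v.symm q.1 < v.symm q.2 then (v.symm q.1, v.symm q.2)
      else (v.symm q.2, v.symm q.1))
  · intro p hp
    rw [Finset.mem_coe, Finset.mem_filter] at hp
    simp only [Finset.mem_filter, Finset.mem_univ, true_and, Equiv.Perm.mul_apply,
      Finset.mem_coe, Equiv.Perm.inv_def] at hp
    obtain ⟨h12, hs⟩ := hp
    rw [Finset.mem_coe, Finset.mem_symmDiff]
    dsimp only
    by_cases hv : v p.1 < v p.2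
    · rw [if_pos hv]
      left
      constructor
      · rw [mem_Jf]; exact ⟨hv, by simpa using hs⟩
      · rw [mem_Jf]; simp only [Equiv.symm_apply_apply]
        exact fun h => absurd h12 (not_lt.2 (le_of_lt h.2))
    · rw [if_neg hv]
      have hne : v p.1 ≠ v p.2 := fun h => absurd (v.injective h) (ne_of_lt h12)
      have hv' : v p.2 < v p.1 := (lt_or_gt_of_ne (Ne.symm hne)).resolve_right hv
      right
      constructor
      · rw [mem_Jf]; simp only [Equiv.symm_apply_apply]; exact ⟨hv', h12⟩
      · rw [mem_Jf]
        rintro ⟨-, h2⟩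
        exact absurd hs (not_lt.2 (le_of_lt h2))
  · intro q hq
    rw [Finset.mem_coe, Finset.mem_symmDiff] at hq
    rw [Finset.mem_coe, Finset.mem_filter]
    simp only [Finset.mem_coe, Finset.mem_filter, Finset.mem_univ, true_and, Equiv.Perm.mul_apply,
      Equiv.Perm.inv_def]
    rcases hq with ⟨hu, hv⟩ | ⟨hv, hu⟩
    · rw [mem_Jf] at hu hv
      obtain ⟨h12, hus⟩ := hu
      have hvs : v.symm q.1 < v.symm q.2 := by
        rcases lt_trichotomy (v.symm q.1) (v.symm q.2) with h | h | h
        · exact h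
        · exact absurd (v.symm.injective h) (ne_of_lt h12)
        · exact absurd ⟨h12, h⟩ hv
      rw [if_pos hvs]
      refine ⟨hvs, ?_⟩
      simpa using hus
    · rw [mem_Jf] at hu hv
      obtain ⟨h12, hvs⟩ := hv
      rw [if_neg (not_lt.2 (le_of_lt hvs))]
      constructor
      · exact hvs
      · simp only [Equiv.apply_symm_apply]
        rcases lt_trichotomy (u.symm q.1) (u.symm q.2) with h | h | h
        · exact h
        · exact absurd (u.symm.injective h) (ne_of_lt h12)
        · exact absurd ⟨h12, h⟩ hu
  · intro p hp
    dsimp only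
    rw [Finset.mem_coe, Finset.mem_filter] at hp
    simp only [Finset.mem_coe, Finset.mem_filter, Finset.mem_univ, true_and] at hp
    by_cases hv : v p.1 < v p.2
    · rw [if_pos hv]
      simp only [Equiv.symm_apply_apply]
      rw [if_pos hp.1]
    · rw [if_neg hv]
      simp only [Equiv.symm_apply_apply]
      rw [if_neg (not_lt.2 (le_of_lt hp.1))]
  · intro q hq
    dsimp only
    rw [Finset.mem_coe, Finset.mem_symmDiff] at hq
    have h12 : q.1 < q.2 := by
      rcases hq with ⟨hu, -⟩ | ⟨hv, -⟩
      · exact (mem_Jf.1 hu).1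
      · exact (mem_Jf.1 hv).1
    by_cases hvs : v.symm q.1 < v.symm q.2
    · rw [if_pos hvs]
      simp only [Equiv.apply_symm_apply]
      rw [if_pos h12]
    · rw [if_neg hvs]
      simp only [Equiv.apply_symm_apply]
      rw [if_neg (not_lt.2 (le_of_lt h12))]

lemma wle_iff_Jrel (u v : Equiv.Perm (Fin n)) :
    wle u v ↔ ∀ a b, Jrel (u : Fin n ≃ Fin n) a b → Jrel (v : Fin n ≃ Fin n) a b := by
  have hJ : wle u v ↔ Jf u ⊆ Jf v := by
    unfold wle
    rw [invCount_eq_card_Jf u, invCount_eq_card_Jf v, invCount_inv_mul u v]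
    have hd : (symmDiff (Jf u) (Jf v)).card = (Jf u \ Jf v).card + (Jf v \ Jf u).card := by
      rw [symmDiff_def]
      exact Finset.card_union_of_disjoint disjoint_sdiff_sdiff
    have h1 := Finset.card_sdiff_add_card_inter (Jf u) (Jf v)
    have h2 := Finset.card_sdiff_add_card_inter (Jf v) (Jf u)
    rw [Finset.inter_comm] at h2
    constructor
    · intro h
      rw [← Finset.sdiff_eq_empty_iff_subset, ← Finset.card_eq_zero]
      omega
    · intro h
      have h3 : (Jf u \ Jf v).card = 0 := by
        rw [Finset.card_eq_zero, Finset.sdiff_eq_empty_iff_subset]; exact h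
      have h4 : Jf u ∩ Jf v = Jf u := Finset.inter_eq_left.2 h
      rw [h4] at h2
      omega
  rw [hJ]
  constructor
  · intro h a b hab
    have hm : (a, b) ∈ Jf u := mem_Jf.2 ⟨hab.1, hab.2⟩
    exact mem_Jf.1 (h hm)
  · intro h p hp
    rw [mem_Jf] at hp ⊢
    exact h p.1 p.2 hp

lemma sep_axioms (π : Equiv.Perm (Fin n)) (hsep : IsSeparable π) :
    (∀ a b, Jrel (π : Fin n ≃ Fin n) a b → a < b) ∧
    (∀ a b c, a < b → b < c → Jrel (π : Fin n ≃ Fin n) a c →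
      Jrel (π : Fin n ≃ Fin n) a b ∨ Jrel (π : Fin n ≃ Fin n) b c) ∧
    (∀ a b c, Jrel (π : Fin n ≃ Fin n) a b → Jrel (π : Fin n ≃ Fin n) b c →
      Jrel (π : Fin n ≃ Fin n) a c) ∧
    (∀ a b c d : Fin n, a < b → b < c → c < d →
      Jrel (π : Fin n ≃ Fin n) a c → Jrel (π : Fin n ≃ Fin n) b c →
      Jrel (π : Fin n ≃ Fin n) b d → ¬ Jrel (π : Fin n ≃ Fin n) a b →
      ¬ Jrel (π : Fin n ≃ Fin n) a d → ¬ Jrel (π : Fin n ≃ Fin n) c d → False) ∧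
    (∀ a b c d : Fin n, a < b → b < c → c < d →
      Jrel (π : Fin n ≃ Fin n) a b → Jrel (π : Fin n ≃ Fin n) a d →
      Jrel (π : Fin n ≃ Fin n) c d → ¬ Jrel (π : Fin n ≃ Fin n) a c →
      ¬ Jrel (π : Fin n ≃ Fin n) b c → ¬ Jrel (π : Fin n ≃ Fin n) b d → False) := by
  have hstrict : ∀ (x y : Fin n), x < y → ¬ Jrel (π : Fin n ≃ Fin n) x y →
      π.symm x < π.symm y := by
    intro x y hxy hn
    rcases lt_trichotomy (π.symm x) (π.symm y) with h | h | h
    · exact h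
    · exact absurd (π.symm.injective h) (ne_of_lt hxy)
    · exact absurd ⟨hxy, h⟩ hn
  refine ⟨fun a b h => h.1, ?_, ?_, ?_, ?_⟩
  · rintro a b c hab hbc ⟨hac, hs⟩
    rcases lt_trichotomy (π.symm b) (π.symm a) with h | h | h
    · exact Or.inl ⟨hab, h⟩
    · exact absurd (π.symm.injective h) (ne_of_lt hab).symm
    · exact Or.inr ⟨hbc, lt_trans hs h⟩
  · rintro a b c ⟨hab, h1⟩ ⟨hbc, h2⟩
    exact ⟨lt_trans hab hbc, lt_trans h2 h1⟩
  · rintro a b c d hab hbc hcd ⟨-, kac⟩ ⟨-, kbc⟩ ⟨-, kbd⟩ nab nad ncd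
    have pab : π.symm a < π.symm b := hstrict a b hab nab
    have pad : π.symm a < π.symm d := hstrict a d (lt_trans hab (lt_trans hbc hcd)) nad
    have pcd : π.symm c < π.symm d := hstrict c d hcd ncd
    exact hsep.1 ⟨π.symm c, π.symm a, π.symm d, π.symm b, kac, pad, kbd, by
        simp only [Equiv.apply_symm_apply]
        exact ⟨hab, hbc, hcd⟩⟩
  · rintro a b c d hab hbc hcd ⟨-, kab⟩ ⟨-, kad⟩ ⟨-, kcd⟩ nac nbc nbd
    have pac : π.symm a < π.symm c := hstrict a c (lt_trans hab hbc) nac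
    have pbc : π.symm b < π.symm c := hstrict b c hbc nbc
    have pbd : π.symm b < π.symm d := hstrict b d (lt_trans hbc hcd) nbd
    exact hsep.2 ⟨π.symm b, π.symm d, π.symm a, π.symm c, pbd, kad, pac, by
        simp only [Equiv.apply_symm_apply]
        exact ⟨hab, hbc, hcd⟩⟩

end Glue

/-- For separable `π ∈ S_n`, the map
`φ : Λ_π × V_π → S_n`, `φ(u, v) = u⁻¹v`, is a bijection. -/
theorem bijective_inv_mul (n : ℕ) (π : Equiv.Perm (Fin n)) (hsep : IsSeparable π) :
    Function.Bijective
      (fun p : {u : Equiv.Perm (Fin n) // wle u π} × {v : Equiv.Perm (Fin n) // wle π v} =>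
        (p.1.val)⁻¹ * p.2.val) := by
  obtain ⟨hlt, hbtw, htr, hav1, hav2⟩ := sep_axioms π hsep
  have habs := abstract_bij n (β := Fin n) (α := Fin n) (α' := Fin n)
    (Fintype.card_fin n) (Fintype.card_fin n) (Fintype.card_fin n)
    (Jrel (π : Fin n ≃ Fin n)) hlt hbtw htr hav1 hav2
  have key : (fun p : {u : Equiv.Perm (Fin n) // wle u π} ×
        {v : Equiv.Perm (Fin n) // wle π v} => (p.1.val)⁻¹ * p.2.val) =
      (fun p : {u : Fin n ≃ Fin n // ∀ a b, Jrel u a b → Jrel (π : Fin n ≃ Fin n) a b} ×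
        {v : Fin n ≃ Fin n // ∀ a b, Jrel (π : Fin n ≃ Fin n) a b → Jrel v a b} =>
        (p.2.1.trans p.1.1.symm : Fin n ≃ Fin n)) ∘
      ((Equiv.subtypeEquivRight (fun u => wle_iff_Jrel u π)).prodCongr
        (Equiv.subtypeEquivRight (fun v => wle_iff_Jrel π v))) := by
    funext p
    show (p.1.val)⁻¹ * p.2.val = _
    rw [Equiv.Perm.mul_def, Equiv.Perm.inv_def]
    rfl
  rw [key]
  exact habs.comp (Equiv.bijective _)

end SepPerm
end

section
/- Let π ∈ S_n be a separable permutation. The map φ′ : Λ_π × V_π → S_n defined by φ′(u, v) = v⁻¹u, for u ≤ π and v ≥ π in weak order, is a bijection. -/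
open Polynomial

namespace SepPerm

section Aux





def Dset {n : ℕ} (σ : Equiv.Perm (Fin n)) : Finset (Fin n × Fin n) :=
  Finset.univ.filter fun p => p.1 < p.2 ∧ σ⁻¹ p.2 < σ⁻¹ p.1

lemma mem_Dset {n : ℕ} {σ : Equiv.Perm (Fin n)} {p : Fin n × Fin n} :
    p ∈ Dset σ ↔ p.1 < p.2 ∧ σ⁻¹ p.2 < σ⁻¹ p.1 := by
  simp [Dset]

lemma perm_flip {n : ℕ} (f : Equiv.Perm (Fin n)) {a b : Fin n} (hab : a ≠ b)
    (h : ¬ f b < f a) : f a < f b := by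
  rcases lt_trichotomy (f a) (f b) with h' | h' | h'
  · exact h'
  · exact absurd (f.injective h') hab
  · exact absurd h' h

lemma invCount_eq_card_Dset {n : ℕ} (σ : Equiv.Perm (Fin n)) :
    invCount σ = (Dset σ).card := by
  unfold invCount Dset
  apply Finset.card_bij' (fun p _ => (σ p.2, σ p.1)) (fun p _ => (σ⁻¹ p.2, σ⁻¹ p.1))
  · intro a ha
    simp only [Finset.mem_filter, Finset.mem_univ, true_and] at ha ⊢
    simpa using ha.symm
  · intro b hb
    simp only [Finset.mem_filter, Finset.mem_univ, true_and] at hb ⊢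
    simpa using hb.symm
  · intro a ha; simp
  · intro b hb; simp

lemma invCount_mul {n : ℕ} (u v : Equiv.Perm (Fin n)) :
    invCount (v⁻¹ * u) = (symmDiff (Dset u) (Dset v)).card := by
  rw [invCount_eq_card_Dset]
  have hD : ∀ p : Fin n × Fin n, p ∈ Dset (v⁻¹ * u) ↔
      p.1 < p.2 ∧ u⁻¹ (v p.2) < u⁻¹ (v p.1) := by
    intro p
    rw [mem_Dset]
    simp [mul_inv_rev, Equiv.Perm.mul_apply]
  apply Finset.card_bij'
    (fun p _ => if v p.1 < v p.2 then (v p.1, v p.2) else (v p.2, v p.1))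
    (fun q _ => if v⁻¹ q.1 < v⁻¹ q.2 then (v⁻¹ q.1, v⁻¹ q.2) else (v⁻¹ q.2, v⁻¹ q.1))
  · intro p hp
    rw [hD] at hp
    obtain ⟨hab, hc⟩ := hp
    rw [Finset.mem_symmDiff]
    by_cases hv : v p.1 < v p.2
    · rw [if_pos hv]
      left
      refine ⟨mem_Dset.2 ⟨hv, by simpa using hc⟩, fun h => ?_⟩
      rw [mem_Dset] at h
      have := h.2
      simp only [Equiv.Perm.coe_inv, Equiv.symm_apply_apply] at this
      exact absurd hab (not_lt.2 this.le)
    · have hv' : v p.2 < v p.1 := perm_flip v hab.ne' hv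
      rw [if_neg hv]
      right
      refine ⟨mem_Dset.2 ⟨hv', by simpa using hab⟩, fun h => ?_⟩
      rw [mem_Dset] at h
      exact absurd h.2 (by simpa using not_lt.2 hc.le)
  · intro q hq
    rw [Finset.mem_symmDiff] at hq
    rcases hq with ⟨hmem, hnot⟩ | ⟨hmem, hnot⟩
    · rw [mem_Dset] at hmem
      obtain ⟨h12, hu⟩ := hmem
      have hvlt : v⁻¹ q.1 < v⁻¹ q.2 := by
        apply perm_flip v⁻¹ h12.ne
        intro h
        exact hnot (mem_Dset.2 ⟨h12, h⟩)
      rw [if_pos hvlt, hD]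
      exact ⟨hvlt, by simpa using hu⟩
    · rw [mem_Dset] at hmem
      obtain ⟨h12, hv⟩ := hmem
      have hnu : ¬ u⁻¹ q.2 < u⁻¹ q.1 := fun h => hnot (mem_Dset.2 ⟨h12, h⟩)
      have hult : u⁻¹ q.1 < u⁻¹ q.2 := perm_flip u⁻¹ h12.ne hnu
      rw [if_neg (not_lt.2 hv.le), hD]
      exact ⟨hv, by simpa using hult⟩
  · intro p hp
    rw [hD] at hp
    by_cases hv : v p.1 < v p.2
    · rw [if_pos hv]
      simp [hp.1]
    · rw [if_neg hv]
      have : ¬ v⁻¹ (v p.2) < v⁻¹ (v p.1) := by simpa using not_lt.2 hp.1.le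
      rw [if_neg this]
      simp
  · intro q hq
    rw [Finset.mem_symmDiff] at hq
    have h12 : q.1 < q.2 := by
      rcases hq with ⟨hmem, _⟩ | ⟨hmem, _⟩ <;> exact (mem_Dset.1 hmem).1
    by_cases hv : v⁻¹ q.1 < v⁻¹ q.2
    · rw [if_pos hv]
      simp [h12]
    · rw [if_neg hv]
      have : ¬ v (v⁻¹ q.2) < v (v⁻¹ q.1) := by simpa using not_lt.2 h12.le
      rw [if_neg this]
      simp

lemma wle_iff_subset {n : ℕ} (u v : Equiv.Perm (Fin n)) :
    wle u v ↔ Dset u ⊆ Dset v := by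
  have h1 : invCount (u⁻¹ * v) = (symmDiff (Dset v) (Dset u)).card := invCount_mul v u
  unfold wle
  rw [invCount_eq_card_Dset u, invCount_eq_card_Dset v, h1, symmDiff_comm]
  set A := Dset u
  set B := Dset v
  have hsd : symmDiff A B = (A \ B) ∪ (B \ A) := by
    rw [symmDiff_def]; rfl
  have hdisj : Disjoint (A \ B) (B \ A) := disjoint_sdiff_sdiff
  have hcardsd : (symmDiff A B).card = (A \ B).card + (B \ A).card := by
    rw [hsd, Finset.card_union_of_disjoint hdisj]
  have hA : (A ∩ B).card + (A \ B).card = A.card := Finset.card_inter_add_card_sdiff A B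
  have hB : (B ∩ A).card + (B \ A).card = B.card := Finset.card_inter_add_card_sdiff B A
  have hint : (A ∩ B).card = (B ∩ A).card := by rw [Finset.inter_comm]
  constructor
  · intro h
    have hAB : (A \ B).card = 0 := by omega
    exact (Finset.sdiff_eq_empty_iff_subset).1 (Finset.card_eq_zero.1 hAB)
  · intro h
    have hAB : (A \ B).card = 0 := by
      rw [Finset.card_eq_zero, Finset.sdiff_eq_empty_iff_subset]; exact h
    omega

lemma wle_iff {n : ℕ} (u v : Equiv.Perm (Fin n)) :
    wle u v ↔ ∀ a b : Fin n, a < b → u⁻¹ b < u⁻¹ a → v⁻¹ b < v⁻¹ a := by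
  rw [wle_iff_subset]
  constructor
  · intro h a b hab hu
    have : (a, b) ∈ Dset u := mem_Dset.2 ⟨hab, hu⟩
    exact (mem_Dset.1 (h this)).2
  · intro h p hp
    rw [mem_Dset] at hp ⊢
    exact ⟨hp.1, h p.1 p.2 hp.1 hp.2⟩



/-- Pattern avoidance for a pair of ℤ-valued "coordinates". -/
def Avoid {ι : Type*} (x y : ι → ℤ) : Prop :=
  (¬ ∃ i j k h : ι, (x i < x j ∧ x j < x k ∧ x k < x h) ∧ y j < y h ∧ y h < y i ∧ y i < y k) ∧
  (¬ ∃ i j k h : ι, (x i < x j ∧ x j < x k ∧ x k < x h) ∧ y k < y i ∧ y i < y h ∧ y h < y j)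

lemma avoid_comp {ι ι' : Type*} {x y : ι → ℤ} (h : Avoid x y) (e : ι' → ι) :
    Avoid (x ∘ e) (y ∘ e) := by
  constructor
  · rintro ⟨i, j, k, l, hx, hy⟩
    exact h.1 ⟨e i, e j, e k, e l, hx, hy⟩
  · rintro ⟨i, j, k, l, hx, hy⟩
    exact h.2 ⟨e i, e j, e k, e l, hx, hy⟩

lemma avoid_neg {ι : Type*} {x y : ι → ℤ} (h : Avoid x y) :
    Avoid x (fun i => -(y i)) := by
  obtain ⟨h1, h2⟩ := h
  constructor
  · rintro ⟨i, j, k, l, hx, a, b, c⟩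
    have a' : -(y j) < -(y l) := a
    have b' : -(y l) < -(y i) := b
    have c' : -(y i) < -(y k) := c
    exact h2 ⟨i, j, k, l, hx, by omega, by omega, by omega⟩
  · rintro ⟨i, j, k, l, hx, a, b, c⟩
    have a' : -(y k) < -(y i) := a
    have b' : -(y i) < -(y l) := b
    have c' : -(y l) < -(y j) := c
    exact h1 ⟨i, j, k, l, hx, by omega, by omega, by omega⟩

/-- `Avoid` with x-coordinate the natural index order on `Fin k`. -/
def AvoidF {k : ℕ} (y : Fin k → ℤ) : Prop := Avoid (fun i : Fin k => ((i : ℕ) : ℤ)) y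

lemma avoidF_comp {k l : ℕ} {y : Fin k → ℤ} (h : AvoidF y) (e : Fin l → Fin k)
    (he : ∀ i j : Fin l, (i : ℕ) < (j : ℕ) → ((e i : ℕ) < (e j : ℕ))) :
    AvoidF (y ∘ e) := by
  have step : ∀ a b : Fin l, ((a:ℕ):ℤ) < ((b:ℕ):ℤ) → (((e a :ℕ)):ℤ) < (((e b:ℕ)):ℤ) := by
    intro a b hab
    exact_mod_cast he a b (by exact_mod_cast hab)
  constructor
  · rintro ⟨i, j, k', l', hx, hy⟩
    exact h.1 ⟨e i, e j, e k', e l', ⟨step _ _ hx.1, step _ _ hx.2.1, step _ _ hx.2.2⟩, hy⟩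
  · rintro ⟨i, j, k', l', hx, hy⟩
    exact h.2 ⟨e i, e j, e k', e l', ⟨step _ _ hx.1, step _ _ hx.2.1, step _ _ hx.2.2⟩, hy⟩

lemma yflip {k : ℕ} {y : Fin k → ℤ} (hy : Function.Injective y) {i j : Fin k}
    (hij : i ≠ j) (h : ¬ y j < y i) : y i < y j := by
  rcases lt_trichotomy (y i) (y j) with h' | h' | h'
  · exact h'
  · exact absurd (hy h') hij
  · exact absurd h' h

/-- The key step: if a separable sequence is "descending across" the cut `[1,M) | [M,k)`
(ignoring index 0), then it admits a split. -/
lemma desc_split {k : ℕ} (y : Fin k → ℤ) (hy : Function.Injective y) (hA : AvoidF y)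
    (M : ℕ) (hM2 : 2 ≤ M) (hMk : M < k)
    (hdesc : ∀ i j : Fin k, 1 ≤ (i : ℕ) → (i : ℕ) < M → M ≤ (j : ℕ) → y j < y i) :
    ∃ m, 0 < m ∧ m < k ∧
      ((∀ i j : Fin k, (i : ℕ) < m → m ≤ (j : ℕ) → y i < y j) ∨
       (∀ i j : Fin k, (i : ℕ) < m → m ≤ (j : ℕ) → y j < y i)) := by
  have hk0 : 0 < k := by omega
  set z : Fin k := ⟨0, hk0⟩ with hz
  by_cases h1 : ∀ j : Fin k, M ≤ (j : ℕ) → y j < y z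
  · refine ⟨M, by omega, hMk, Or.inr fun i j hi hj => ?_⟩
    by_cases hi0 : (i : ℕ) = 0
    · have : i = z := Fin.ext hi0
      rw [this]; exact h1 j hj
    · exact hdesc i j (by omega) hi hj
  · push_neg at h1
    obtain ⟨jp, hjpM, hjp⟩ := h1
    have hjpz : jp ≠ z := by
      intro h; rw [h] at hjpM; simp [hz] at hjpM; omega
    have hyzjp : y z < y jp := lt_of_le_of_ne hjp (fun h => hjpz (hy h.symm))
    by_cases h2 : ∀ j : Fin k, 1 ≤ (j : ℕ) → y z < y j
    · refine ⟨1, by omega, by omega, Or.inl fun i j hi hj => ?_⟩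
      have : i = z := Fin.ext (by simp only [hz]; omega)
      rw [this]; exact h2 j hj
    · push_neg at h2
      obtain ⟨j1, hj11, hj1⟩ := h2
      have hj1z : j1 ≠ z := by
        intro h; rw [h] at hj11; simp [hz] at hj11
      have hyj1 : y j1 < y z := lt_of_le_of_ne hj1 (fun h => hj1z (hy h))
      have hj1M : M ≤ (j1 : ℕ) := by
        by_contra hlt
        have := hdesc j1 jp hj11 (by omega) hjpM
        omega
      by_cases h3 : ∃ jm jq : Fin k, M ≤ (jm : ℕ) ∧ (jm : ℕ) < (jq : ℕ) ∧
          y jm < y z ∧ y z < y jq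
      · exfalso
        obtain ⟨jm, jq, hjmM, hjmq, hym, hyq⟩ := h3
        have ha1 : 1 < k := by omega
        set a : Fin k := ⟨1, ha1⟩ with hadef
        have hyqa : y jq < y a := hdesc a jq (by simp [hadef]) (by simp [hadef]; omega)
          (by omega)
        refine hA.2 ⟨z, a, jm, jq, ⟨?_, ?_, ?_⟩, hym, hyq, hyqa⟩
        · show ((0:ℕ):ℤ) < ((1:ℕ):ℤ); omega
        · show ((1:ℕ):ℤ) < ((jm:ℕ):ℤ); omega
        · show (((jm:ℕ)):ℤ) < (((jq:ℕ)):ℤ); omega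
      · push_neg at h3
        set Cm : Finset (Fin k) :=
          Finset.univ.filter (fun j : Fin k => M ≤ (j : ℕ) ∧ y j < y z) with hCm
        have hj1mem : j1 ∈ Cm := by
          rw [hCm, Finset.mem_filter]; exact ⟨Finset.mem_univ _, hj1M, hyj1⟩
        have hCne : Cm.Nonempty := ⟨j1, hj1mem⟩
        set r : Fin k := Cm.min' hCne with hr
        have hrmem : r ∈ Cm := Cm.min'_mem hCne
        rw [hCm, Finset.mem_filter] at hrmem
        obtain ⟨-, hrM, hyr⟩ := hrmem
        have c0 : ∀ j : Fin k, (r : ℕ) ≤ (j : ℕ) → y j < y z := by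
          intro j hrj
          by_cases hjr : j = r
          · rw [hjr]; exact hyr
          · have hrjlt : (r : ℕ) < (j : ℕ) := by
              rcases lt_or_eq_of_le hrj with h' | h'
              · exact h'
              · exact absurd (Fin.ext h'.symm) hjr
            by_contra hc
            have hzybj : y z < y j := by
              apply lt_of_le_of_ne (not_lt.1 hc)
              intro h
              have hzj : z = j := hy h
              have : (j : ℕ) = 0 := by rw [← hzj]
              omega
            have := h3 r j hrM hrjlt hyr
            omega
        refine ⟨(r : ℕ), by omega, r.isLt, Or.inr fun i j hi hj => ?_⟩
        have hyjz : y j < y z := c0 j hj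
        by_cases hi0 : (i : ℕ) = 0
        · have : i = z := Fin.ext hi0
          rw [this]; exact hyjz
        · by_cases hiM : (i : ℕ) < M
          · exact hdesc i j (by omega) hiM (by omega)
          · have hiCm : i ∉ Cm := by
              intro hmem
              have := Cm.min'_le i hmem
              rw [← hr] at this
              have : (r : ℕ) ≤ (i : ℕ) := this
              omega
            have hyi : ¬ y i < y z := by
              intro h
              exact hiCm (by rw [hCm, Finset.mem_filter]; exact ⟨Finset.mem_univ _, by omega, h⟩)
            have hiz : i ≠ z := fun h => hi0 (by rw [h])
            have : y z < y i := lt_of_le_of_ne (not_lt.1 hyi) (fun h => hiz (hy h.symm))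
            omega


theorem struct_fin (k : ℕ) :
    ∀ (y : Fin k → ℤ), Function.Injective y → AvoidF y → 2 ≤ k →
    ∃ m, 0 < m ∧ m < k ∧
      ((∀ i j : Fin k, (i : ℕ) < m → m ≤ (j : ℕ) → y i < y j) ∨
       (∀ i j : Fin k, (i : ℕ) < m → m ≤ (j : ℕ) → y j < y i)) := by
  induction k using Nat.strong_induction_on with
  | _ k IH =>
    intro y hy hA hk2
    by_cases hk3 : k < 3
    · -- k = 2
      have hk : k = 2 := by omega
      subst hk
      have h01 : (0 : Fin 2) ≠ 1 := by decide
      have hfix : ∀ i j : Fin 2, (i : ℕ) < 1 → 1 ≤ (j : ℕ) → i = 0 ∧ j = 1 := by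
        intro i j hi hj
        exact ⟨Fin.ext (by omega), Fin.ext (by omega)⟩
      rcases lt_trichotomy (y 0) (y 1) with h | h | h
      · exact ⟨1, by omega, by omega, Or.inl fun i j hi hj => by
          obtain ⟨h1, h2⟩ := hfix i j hi hj; rw [h1, h2]; exact h⟩
      · exact absurd (hy h) h01
      · exact ⟨1, by omega, by omega, Or.inr fun i j hi hj => by
          obtain ⟨h1, h2⟩ := hfix i j hi hj; rw [h1, h2]; exact h⟩
    · -- k ≥ 3
      have hk1 : 2 ≤ k - 1 := by omega
      set e : Fin (k - 1) → Fin k := fun i => ⟨(i : ℕ) + 1, by omega⟩ with he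
      have hemono : ∀ i j : Fin (k - 1), (i : ℕ) < (j : ℕ) → ((e i : ℕ) < (e j : ℕ)) := by
        intro i j hij; simp only [he]; omega
      have hy' : Function.Injective (y ∘ e) := by
        intro a b hab
        have : e a = e b := hy hab
        have : (e a : ℕ) = (e b : ℕ) := by rw [this]
        simp only [he] at this
        exact Fin.ext (by omega)
      obtain ⟨m', hm'0, hm'k, hsplit⟩ := IH (k - 1) (by omega) (y ∘ e) hy'
        (avoidF_comp hA e hemono) hk1
      rcases hsplit with hasc | hdesc
      · -- ascending split of y': use negated sequence
        have hdescn : ∀ i j : Fin k, 1 ≤ (i : ℕ) → (i : ℕ) < m' + 1 → m' + 1 ≤ (j : ℕ) →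
            (fun t => -(y t)) j < (fun t => -(y t)) i := by
          intro i j hi1 him hjm
          have hik : (i : ℕ) - 1 < k - 1 := by omega
          have hjk : (j : ℕ) - 1 < k - 1 := by omega
          have hei : e ⟨(i : ℕ) - 1, hik⟩ = i := Fin.ext (by simp only [he]; omega)
          have hej : e ⟨(j : ℕ) - 1, hjk⟩ = j := Fin.ext (by simp only [he]; omega)
          have := hasc ⟨(i : ℕ) - 1, hik⟩ ⟨(j : ℕ) - 1, hjk⟩ (by simp; omega) (by simp; omega)
          simp only [Function.comp, hei, hej] at this
          simp only [neg_lt_neg_iff]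
          exact this
        obtain ⟨m, hm0, hmk, hsp⟩ := desc_split (fun t => -(y t))
          (fun a b hab => hy (by have h' : -(y a) = -(y b) := hab; omega)) (avoid_neg hA) (m' + 1)
          (by omega) (by omega) hdescn
        refine ⟨m, hm0, hmk, ?_⟩
        rcases hsp with h | h
        · exact Or.inr fun i j hi hj => by have := h i j hi hj; simp at this; omega
        · exact Or.inl fun i j hi hj => by have := h i j hi hj; simp at this; omega
      · -- descending split of y'
        have hdescn : ∀ i j : Fin k, 1 ≤ (i : ℕ) → (i : ℕ) < m' + 1 → m' + 1 ≤ (j : ℕ) →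
            y j < y i := by
          intro i j hi1 him hjm
          have hik : (i : ℕ) - 1 < k - 1 := by omega
          have hjk : (j : ℕ) - 1 < k - 1 := by omega
          have hei : e ⟨(i : ℕ) - 1, hik⟩ = i := Fin.ext (by simp only [he]; omega)
          have hej : e ⟨(j : ℕ) - 1, hjk⟩ = j := Fin.ext (by simp only [he]; omega)
          have := hdesc ⟨(i : ℕ) - 1, hik⟩ ⟨(j : ℕ) - 1, hjk⟩ (by simp; omega) (by simp; omega)
          simp only [Function.comp, hei, hej] at this
          exact this
        exact desc_split y hy hA (m' + 1) (by omega) (by omega) hdescn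




/-- Sorting equivalence for an injective ℤ-valued function on a fintype. -/
lemma exists_sortEquiv {ι : Type*} [Fintype ι] [DecidableEq ι] {N : ℕ}
    (h : Fintype.card ι = N) (x : ι → ℤ) (hx : Function.Injective x) :
    ∃ e : Fin N ≃ ι, ∀ a b : Fin N, a < b → x (e a) < x (e b) := by
  classical
  set S : Finset ℤ := Finset.univ.image x with hS
  have hcard : S.card = N := by
    rw [hS, Finset.card_image_of_injective _ hx, Finset.card_univ, h]
  set iso := S.orderIsoOfFin hcard with hiso
  have hmem : ∀ i : ι, x i ∈ S := fun i => Finset.mem_image_of_mem x (Finset.mem_univ i)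
  set f : ι → {z // z ∈ S} := fun i => ⟨x i, hmem i⟩ with hf
  have hfinj : Function.Injective f := fun a b hab => hx (congrArg Subtype.val hab)
  have hfbij : Function.Bijective f := by
    rw [Fintype.bijective_iff_injective_and_card]
    exact ⟨hfinj, by rw [h, Fintype.card_coe, hcard]⟩
  set g := Equiv.ofBijective f hfbij with hg
  refine ⟨iso.toEquiv.trans g.symm, fun a b hab => ?_⟩
  have hfa : ∀ c : Fin N, x (g.symm (iso c)) = (iso c : ℤ) := by
    intro c
    have : f (g.symm (iso c)) = iso c := g.apply_symm_apply _
    exact congrArg Subtype.val this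
  simp only [Equiv.trans_apply]
  have ha : x (g.symm (iso.toEquiv a)) = (iso a : ℤ) := hfa a
  have hb : x (g.symm (iso.toEquiv b)) = (iso b : ℤ) := hfa b
  rw [ha, hb]
  exact_mod_cast iso.strictMono hab

lemma card_subtype_lt_fin {N l : ℕ} (hl : l ≤ N) :
    Fintype.card {q : Fin N // (q : ℕ) < l} = l := by
  have e : {q : Fin N // (q : ℕ) < l} ≃ Fin l :=
    { toFun := fun q => ⟨(q : Fin N), q.2⟩
      invFun := fun r => ⟨⟨r, lt_of_lt_of_le r.isLt hl⟩, r.isLt⟩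
      left_inv := fun q => by ext; rfl
      right_inv := fun r => by ext; rfl }
  rw [Fintype.card_congr e, Fintype.card_fin]

def Cond {ι κ : Type*} (x y : ι → ℤ) (s t : κ → ℤ) (F : ι ≃ κ) : Prop :=
  (∀ i j : ι, x i < x j → y j < y i → s (F j) < s (F i)) ∧
  (∀ i j : ι, x i < x j → y i < y j → t (F i) < t (F j))

lemma cond_neg_iff {ι κ : Type*} (x y : ι → ℤ) (s t : κ → ℤ) (F : ι ≃ κ) :
    Cond x y s t F ↔ Cond x (fun i => -y i) (fun p => -t p) (fun p => -s p) F := by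
  constructor
  · rintro ⟨c1, c2⟩
    constructor
    · intro i j hxij hyij
      have hyij' : y i < y j := by
        have h1 : -(y j) < -(y i) := hyij
        omega
      have := c2 i j hxij hyij'
      show -(t (F j)) < -(t (F i))
      omega
    · intro i j hxij hyij
      have hyij' : y j < y i := by
        have h1 : -(y i) < -(y j) := hyij
        omega
      have := c1 i j hxij hyij'
      show -(s (F i)) < -(s (F j))
      omega
  · rintro ⟨c1, c2⟩
    constructor
    · intro i j hxij hyij
      have := c2 i j hxij (show -(y i) < -(y j) by omega)
      have h2 : -(s (F i)) < -(s (F j)) := this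
      omega
    · intro i j hxij hyij
      have := c1 i j hxij (show -(y j) < -(y i) by omega)
      have h2 : -(t (F j)) < -(t (F i)) := this
      omega

/-- The statement of the key merging lemma, for induction. -/
def KeyStmt (N : ℕ) : Prop :=
  ∀ {ι κ : Type} [Fintype ι] [Fintype κ] [DecidableEq ι] [DecidableEq κ]
    (x y : ι → ℤ) (s t : κ → ℤ), Fintype.card ι = N → Fintype.card κ = N →
    Function.Injective x → Function.Injective y → Function.Injective s →
    Function.Injective t → Avoid x y → ∃! F : ι ≃ κ, Cond x y s t F

lemma key_step {ι κ : Type} [Fintype ι] [Fintype κ] [DecidableEq ι] [DecidableEq κ]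
    (N : ℕ) (IH : ∀ M : ℕ, M < N → KeyStmt M)
    (x y : ι → ℤ) (s t : κ → ℤ) (hcι : Fintype.card ι = N) (hcκ : Fintype.card κ = N)
    (hx : Function.Injective x) (hy : Function.Injective y)
    (hs : Function.Injective s) (ht : Function.Injective t) (hA : Avoid x y)
    (pA : ι → Prop) [DecidablePred pA]
    (hmono : ∀ i j, pA i → ¬ pA j → x i < x j)
    (hdesc : ∀ i j, pA i → ¬ pA j → y j < y i)
    (hne1 : ∃ i, pA i) (hne2 : ∃ i, ¬ pA i) :
    ∃! F : ι ≃ κ, Cond x y s t F := by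
  classical
  set l : ℕ := Fintype.card {i // ¬ pA i} with hl
  have hcompl : Fintype.card {i // ¬ pA i} = Fintype.card ι - Fintype.card {i // pA i} :=
    Fintype.card_subtype_compl pA
  have hle1 : Fintype.card {i // pA i} ≤ Fintype.card ι := Fintype.card_subtype_le _
  have hpos1 : 0 < Fintype.card {i // pA i} := by
    obtain ⟨i, hi⟩ := hne1; exact Fintype.card_pos_iff.2 ⟨⟨i, hi⟩⟩
  have hpos2 : 0 < l := by
    obtain ⟨i, hi⟩ := hne2; exact Fintype.card_pos_iff.2 ⟨⟨i, hi⟩⟩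
  have hcardA : Fintype.card {i // pA i} = N - l := by omega
  have hlN : l ≤ N := by omega
  have hlN' : l < N := by omega
  have hNl : N - l < N := by omega
  -- sort the slots by s
  obtain ⟨f, hfmono⟩ := exists_sortEquiv hcκ s hs
  set qB : κ → Prop := fun p => l ≤ ((f.symm p : Fin N) : ℕ) with hqB
  have hcardnqB : Fintype.card {p // ¬ qB p} = l := by
    have e : {p // ¬ qB p} ≃ {q : Fin N // (q : ℕ) < l} :=
      { toFun := fun p => ⟨f.symm p.1, by
          have h2 : ¬ l ≤ ((f.symm p.1 : Fin N) : ℕ) := p.2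
          omega⟩
        invFun := fun q => ⟨f q.1, by
          show ¬ l ≤ ((f.symm (f q.1) : Fin N) : ℕ)
          simp
          omega⟩
        left_inv := fun p => by ext; simp
        right_inv := fun q => by ext; simp }
    rw [Fintype.card_congr e, card_subtype_lt_fin hlN]
  have hcardqB : Fintype.card {p // qB p} = N - l := by
    have := Fintype.card_subtype_compl qB
    rw [hcκ] at this
    have h2 := Fintype.card_subtype_le (p := qB)
    omega
  -- s-crossing
  have hscross : ∀ p q : κ, ¬ qB p → qB q → s p < s q := by
    intro p q hp hq
    rw [hqB] at hp hq
    have : (f.symm p : Fin N) < f.symm q := by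
      apply Fin.lt_def.2; omega
    have := hfmono _ _ this
    simpa using this
  -- sub-instances
  obtain ⟨F₁, hc₁, hu₁⟩ := IH (N - l) hNl
    (fun i : {i // pA i} => x i.1) (fun i => y i.1)
    (fun p : {p // qB p} => s p.1) (fun p => t p.1)
    hcardA hcardqB
    (fun a b hab => Subtype.ext (hx hab)) (fun a b hab => Subtype.ext (hy hab))
    (fun a b hab => Subtype.ext (hs hab)) (fun a b hab => Subtype.ext (ht hab))
    (by
      constructor
      · rintro ⟨i, j, k', l', hx', hy'⟩
        exact hA.1 ⟨i.1, j.1, k'.1, l'.1, hx', hy'⟩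
      · rintro ⟨i, j, k', l', hx', hy'⟩
        exact hA.2 ⟨i.1, j.1, k'.1, l'.1, hx', hy'⟩)
  obtain ⟨F₂, hc₂, hu₂⟩ := IH l hlN'
    (fun i : {i // ¬ pA i} => x i.1) (fun i => y i.1)
    (fun p : {p // ¬ qB p} => s p.1) (fun p => t p.1)
    rfl hcardnqB
    (fun a b hab => Subtype.ext (hx hab)) (fun a b hab => Subtype.ext (hy hab))
    (fun a b hab => Subtype.ext (hs hab)) (fun a b hab => Subtype.ext (ht hab))
    (by
      constructor
      · rintro ⟨i, j, k', l', hx', hy'⟩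
        exact hA.1 ⟨i.1, j.1, k'.1, l'.1, hx', hy'⟩
      · rintro ⟨i, j, k', l', hx', hy'⟩
        exact hA.2 ⟨i.1, j.1, k'.1, l'.1, hx', hy'⟩)
  -- assemble
  set F : ι ≃ κ :=
    ((Equiv.sumCompl pA).symm.trans ((F₁.sumCongr F₂).trans (Equiv.sumCompl qB))) with hF
  have Feval₁ : ∀ (i : ι) (hi : pA i), F i = (F₁ ⟨i, hi⟩ : κ) := by
    intro i hi
    rw [hF]
    simp [Equiv.sumCompl_symm_apply_of_pos hi]
  have Feval₂ : ∀ (i : ι) (hi : ¬ pA i), F i = (F₂ ⟨i, hi⟩ : κ) := by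
    intro i hi
    rw [hF]
    simp [Equiv.sumCompl_symm_apply_of_neg hi]
  have hcondF : Cond x y s t F := by
    constructor
    · intro i j hxij hyij
      by_cases hi : pA i <;> by_cases hj : pA j
      · rw [Feval₁ i hi, Feval₁ j hj]
        exact hc₁.1 ⟨i, hi⟩ ⟨j, hj⟩ hxij hyij
      · rw [Feval₁ i hi, Feval₂ j hj]
        exact hscross _ _ (F₂ ⟨j, hj⟩).2 (F₁ ⟨i, hi⟩).2
      · exact absurd (hmono j i hj hi) (lt_asymm hxij)
      · rw [Feval₂ i hi, Feval₂ j hj]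
        exact hc₂.1 ⟨i, hi⟩ ⟨j, hj⟩ hxij hyij
    · intro i j hxij hyij
      by_cases hi : pA i <;> by_cases hj : pA j
      · rw [Feval₁ i hi, Feval₁ j hj]
        exact hc₁.2 ⟨i, hi⟩ ⟨j, hj⟩ hxij hyij
      · exact absurd (hdesc i j hi hj) (lt_asymm hyij)
      · exact absurd (hmono j i hj hi) (lt_asymm hxij)
      · rw [Feval₂ i hi, Feval₂ j hj]
        exact hc₂.2 ⟨i, hi⟩ ⟨j, hj⟩ hxij hyij
  refine ⟨F, hcondF, ?_⟩
  -- uniqueness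
  intro F' hF'
  have stepa : ∀ i : ι, ¬ pA i → ¬ qB (F' i) := by
    intro i₀ hi₀ hqF
    set S₂ : Finset κ := (Finset.univ.filter (fun i => ¬ pA i)).image (fun i => F' i) with hS₂
    set B : Finset κ := Finset.univ.filter (fun p => ¬ qB p) with hB
    have hcardS₂ : S₂.card = l := by
      rw [hS₂, Finset.card_image_of_injective _ F'.injective]
      rw [hl, Fintype.card_subtype]
    have hcardB : B.card = l := by
      rw [hB, ← Fintype.card_subtype, hcardnqB]
    have hsub : ¬ B ⊆ S₂ := by
      intro hsub
      have hBS : B = S₂ := Finset.eq_of_subset_of_card_le hsub (by omega)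
      have : F' i₀ ∈ S₂ := by
        rw [hS₂]
        exact Finset.mem_image_of_mem _ (Finset.mem_filter.2 ⟨Finset.mem_univ _, hi₀⟩)
      rw [← hBS, hB, Finset.mem_filter] at this
      exact this.2 hqF
    obtain ⟨b, hbB, hbS⟩ := Finset.not_subset.1 hsub
    rw [hB, Finset.mem_filter] at hbB
    set i₁ : ι := F'.symm b with hi₁
    have hFb : F' i₁ = b := F'.apply_symm_apply b
    have hpAi₁ : pA i₁ := by
      by_contra hni₁
      apply hbS
      rw [hS₂, ← hFb]
      exact Finset.mem_image_of_mem _ (Finset.mem_filter.2 ⟨Finset.mem_univ _, hni₁⟩)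
    have hx₁₀ : x i₁ < x i₀ := hmono i₁ i₀ hpAi₁ hi₀
    have hy₀₁ : y i₀ < y i₁ := hdesc i₁ i₀ hpAi₁ hi₀
    have := hF'.1 i₁ i₀ hx₁₀ hy₀₁
    have hsb : s b < s (F' i₀) := hscross b (F' i₀) hbB.2 hqF
    rw [hFb] at this
    exact absurd hsb (lt_asymm this)
  have stepb : ∀ i : ι, pA i → qB (F' i) := by
    intro i₀ hi₀
    by_contra hqF
    set S₂ : Finset κ := (Finset.univ.filter (fun i => ¬ pA i)).image (fun i => F' i) with hS₂
    set B : Finset κ := Finset.univ.filter (fun p => ¬ qB p) with hB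
    have hcardS₂ : S₂.card = l := by
      rw [hS₂, Finset.card_image_of_injective _ F'.injective]
      rw [hl, Fintype.card_subtype]
    have hcardB : B.card = l := by
      rw [hB, ← Fintype.card_subtype, hcardnqB]
    have hsub : S₂ ⊆ B := by
      intro b hb
      rw [hS₂, Finset.mem_image] at hb
      obtain ⟨i, hi, hFi⟩ := hb
      rw [Finset.mem_filter] at hi
      rw [hB, Finset.mem_filter]
      exact ⟨Finset.mem_univ _, hFi ▸ stepa i hi.2⟩
    have hBS : S₂ = B := Finset.eq_of_subset_of_card_le hsub (by omega)
    have hmem : F' i₀ ∈ B := by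
      rw [hB, Finset.mem_filter]; exact ⟨Finset.mem_univ _, hqF⟩
    rw [← hBS, hS₂, Finset.mem_image] at hmem
    obtain ⟨i₂, hi₂, hFi₂⟩ := hmem
    rw [Finset.mem_filter] at hi₂
    have : i₂ = i₀ := F'.injective hFi₂
    rw [this] at hi₂
    exact hi₂.2 hi₀
  have hiff : ∀ i : ι, pA i ↔ qB (F' i) := by
    intro i
    constructor
    · exact stepb i
    · intro h
      by_contra hp
      exact stepa i hp h
  set F'₁ : {i // pA i} ≃ {p // qB p} := F'.subtypeEquiv hiff with hF'₁
  have hiff' : ∀ i : ι, ¬ pA i ↔ ¬ qB (F' i) := fun i => not_congr (hiff i)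
  set F'₂ : {i // ¬ pA i} ≃ {p // ¬ qB p} := F'.subtypeEquiv hiff' with hF'₂
  have hcF'₁ : Cond (fun i : {i // pA i} => x i.1) (fun i => y i.1)
      (fun p : {p // qB p} => s p.1) (fun p => t p.1) F'₁ := by
    constructor
    · intro i j hxij hyij
      exact hF'.1 i.1 j.1 hxij hyij
    · intro i j hxij hyij
      exact hF'.2 i.1 j.1 hxij hyij
  have hcF'₂ : Cond (fun i : {i // ¬ pA i} => x i.1) (fun i => y i.1)
      (fun p : {p // ¬ qB p} => s p.1) (fun p => t p.1) F'₂ := by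
    constructor
    · intro i j hxij hyij
      exact hF'.1 i.1 j.1 hxij hyij
    · intro i j hxij hyij
      exact hF'.2 i.1 j.1 hxij hyij
  have he₁ : F'₁ = F₁ := hu₁ F'₁ hcF'₁
  have he₂ : F'₂ = F₂ := hu₂ F'₂ hcF'₂
  apply Equiv.ext
  intro i
  by_cases hi : pA i
  · rw [Feval₁ i hi, ← he₁]
    rfl
  · rw [Feval₂ i hi, ← he₂]
    rfl



theorem key : ∀ N : ℕ, KeyStmt N := by
  intro N
  induction N using Nat.strong_induction_on with
  | _ N IH =>
    intro ι κ _ _ _ _ x y s t hcι hcκ hx hy hs ht hA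
    by_cases hN : N < 2
    · -- trivial cases
      have hsubι : Subsingleton ι := by
        apply Fintype.card_le_one_iff_subsingleton.1; omega
      have hsubκ : Subsingleton κ := by
        apply Fintype.card_le_one_iff_subsingleton.1; omega
      refine ⟨Fintype.equivOfCardEq (by rw [hcι, hcκ]), ?_, ?_⟩
      · constructor
        · intro i j hxij _
          exact absurd (congrArg x (Subsingleton.elim i j)) (ne_of_lt hxij)
        · intro i j hxij _
          exact absurd (congrArg x (Subsingleton.elim i j)) (ne_of_lt hxij)
      · intro F' _
        apply Equiv.ext
        intro i
        exact Subsingleton.elim _ _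
    · -- main case
      push_neg at hN
      obtain ⟨e, hemono⟩ := exists_sortEquiv hcι x hx
      have hy' : Function.Injective (y ∘ e) := fun a b hab => e.injective (hy hab)
      have hAF : AvoidF (y ∘ e) := by
        constructor
        · rintro ⟨i, j, k', l', hx', hy'⟩
          refine hA.1 ⟨e i, e j, e k', e l', ⟨?_, ?_, ?_⟩, hy'⟩
          · exact hemono i j (by have h' : ((i:ℕ):ℤ) < ((j:ℕ):ℤ) := hx'.1; exact_mod_cast h')
          · exact hemono j k' (by have h' : ((j:ℕ):ℤ) < ((k':ℕ):ℤ) := hx'.2.1; exact_mod_cast h')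
          · exact hemono k' l' (by have h' : ((k':ℕ):ℤ) < ((l':ℕ):ℤ) := hx'.2.2; exact_mod_cast h')
        · rintro ⟨i, j, k', l', hx', hy'⟩
          refine hA.2 ⟨e i, e j, e k', e l', ⟨?_, ?_, ?_⟩, hy'⟩
          · exact hemono i j (by have h' : ((i:ℕ):ℤ) < ((j:ℕ):ℤ) := hx'.1; exact_mod_cast h')
          · exact hemono j k' (by have h' : ((j:ℕ):ℤ) < ((k':ℕ):ℤ) := hx'.2.1; exact_mod_cast h')
          · exact hemono k' l' (by have h' : ((k':ℕ):ℤ) < ((l':ℕ):ℤ) := hx'.2.2; exact_mod_cast h')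
      obtain ⟨m, hm0, hmN, hsplit⟩ := struct_fin N (y ∘ e) hy' hAF hN
      set pA : ι → Prop := fun i => ((e.symm i : Fin N) : ℕ) < m with hpA
      have instpA : DecidablePred pA := fun i => Nat.decLt _ _
      have hmono : ∀ i j, pA i → ¬ pA j → x i < x j := by
        intro i j hi hj
        rw [hpA] at hi hj
        have hlt : (e.symm i : Fin N) < e.symm j := by
          apply Fin.lt_def.2; omega
        have := hemono _ _ hlt
        simpa using this
      have hne1 : ∃ i, pA i := by
        refine ⟨e ⟨0, by omega⟩, ?_⟩
        rw [hpA]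
        simp only [Equiv.symm_apply_apply]
        exact hm0
      have hne2 : ∃ i, ¬ pA i := by
        refine ⟨e ⟨m, hmN⟩, ?_⟩
        rw [hpA]
        simp only [Equiv.symm_apply_apply]
        omega
      have hval : ∀ i : ι, y (e (e.symm i)) = y i := fun i => by
        rw [e.apply_symm_apply]
      rcases hsplit with hasc | hdesc
      · -- ascending: use negation
        have hdescn : ∀ i j, pA i → ¬ pA j → (fun i => -(y i)) j < (fun i => -(y i)) i := by
          intro i j hi hj
          rw [hpA] at hi hj
          have := hasc (e.symm i) (e.symm j) hi (by omega)
          simp only [Function.comp] at this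
          rw [hval i, hval j] at this
          show -(y j) < -(y i)
          omega
        have hres := key_step N IH x (fun i => -(y i)) (fun p => -(t p)) (fun p => -(s p))
          hcι hcκ hx (fun a b hab => hy (neg_injective hab))
          (fun a b hab => ht (neg_injective hab)) (fun a b hab => hs (neg_injective hab))
          (avoid_neg hA) pA hmono hdescn hne1 hne2
        exact (existsUnique_congr (fun F => cond_neg_iff x y s t F)).2 hres
      · -- descending
        have hdesc' : ∀ i j, pA i → ¬ pA j → y j < y i := by
          intro i j hi hj
          rw [hpA] at hi hj
          have := hdesc (e.symm i) (e.symm j) hi (by omega)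
          simp only [Function.comp] at this
          rw [hval i, hval j] at this
          exact this
        exact key_step N IH x y s t hcι hcκ hx hy hs ht hA pA hmono hdesc' hne1 hne2


lemma sep_avoid {n : ℕ} (π : Equiv.Perm (Fin n)) (hsep : IsSeparable π) :
    Avoid (fun a : Fin n => ((a : ℕ) : ℤ)) (fun a => (((π⁻¹ a : Fin n) : ℕ) : ℤ)) := by
  have cv : ∀ a b : Fin n, (((a : Fin n) : ℕ) : ℤ) < (((b : Fin n) : ℕ) : ℤ) → a < b := by
    intro a b hab; rw [Fin.lt_def]; exact_mod_cast hab
  constructor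
  · rintro ⟨i, j, k, h, ⟨hx1, hx2, hx3⟩, hy1, hy2, hy3⟩
    have hx1' : i < j := cv _ _ hx1
    have hx2' : j < k := cv _ _ hx2
    have hx3' : k < h := cv _ _ hx3
    have hy1' : π⁻¹ j < π⁻¹ h := cv _ _ hy1
    have hy2' : π⁻¹ h < π⁻¹ i := cv _ _ hy2
    have hy3' : π⁻¹ i < π⁻¹ k := cv _ _ hy3
    apply hsep.2
    refine ⟨π⁻¹ j, π⁻¹ h, π⁻¹ i, π⁻¹ k, hy1', hy2', hy3', ?_, ?_, ?_⟩ <;>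
      simp only [Equiv.Perm.coe_inv, Equiv.apply_symm_apply]
    · exact hx1'
    · exact hx2'
    · exact hx3'
  · rintro ⟨i, j, k, h, ⟨hx1, hx2, hx3⟩, hy1, hy2, hy3⟩
    have hx1' : i < j := cv _ _ hx1
    have hx2' : j < k := cv _ _ hx2
    have hx3' : k < h := cv _ _ hx3
    have hy1' : π⁻¹ k < π⁻¹ i := cv _ _ hy1
    have hy2' : π⁻¹ i < π⁻¹ h := cv _ _ hy2
    have hy3' : π⁻¹ h < π⁻¹ j := cv _ _ hy3
    apply hsep.1
    refine ⟨π⁻¹ k, π⁻¹ i, π⁻¹ h, π⁻¹ j, hy1', hy2', hy3', ?_, ?_, ?_⟩ <;>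
      simp only [Equiv.Perm.coe_inv, Equiv.apply_symm_apply]
    · exact hx1'
    · exact hx2'
    · exact hx3'

theorem main_existsUnique {n : ℕ} (π : Equiv.Perm (Fin n)) (hsep : IsSeparable π)
    (w : Equiv.Perm (Fin n)) :
    ∃! p : {u : Equiv.Perm (Fin n) // wle u π} × {v : Equiv.Perm (Fin n) // wle π v},
      (p.2.val)⁻¹ * p.1.val = w := by
  classical
  have hkey := key n
    (fun a : Fin n => ((a : ℕ) : ℤ)) (fun a => (((π⁻¹ a : Fin n) : ℕ) : ℤ))
    (fun p : Fin n => ((p : ℕ) : ℤ)) (fun p => (((w⁻¹ p : Fin n) : ℕ) : ℤ))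
    (Fintype.card_fin n) (Fintype.card_fin n)
    (fun a b hab => Fin.ext (by
      have h' : ((a : ℕ) : ℤ) = ((b : ℕ) : ℤ) := hab
      exact_mod_cast h'))
    (fun a b hab => π⁻¹.injective (Fin.ext (by
      have h' : (((π⁻¹ a : Fin n) : ℕ) : ℤ) = (((π⁻¹ b : Fin n) : ℕ) : ℤ) := hab
      exact_mod_cast h')))
    (fun a b hab => Fin.ext (by
      have h' : ((a : ℕ) : ℤ) = ((b : ℕ) : ℤ) := hab
      exact_mod_cast h'))
    (fun a b hab => w⁻¹.injective (Fin.ext (by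
      have h' : (((w⁻¹ a : Fin n) : ℕ) : ℤ) = (((w⁻¹ b : Fin n) : ℕ) : ℤ) := hab
      exact_mod_cast h')))
    (sep_avoid π hsep)
  have hcond_iff : ∀ v : Equiv.Perm (Fin n),
      Cond (fun a : Fin n => ((a : ℕ) : ℤ)) (fun a => (((π⁻¹ a : Fin n) : ℕ) : ℤ))
        (fun p : Fin n => ((p : ℕ) : ℤ)) (fun p => (((w⁻¹ p : Fin n) : ℕ) : ℤ))
        (v⁻¹ : Equiv.Perm (Fin n)) ↔ (wle π v ∧ wle (v * w) π) := by
    intro v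
    have happ : ∀ a : Fin n, ((v * w)⁻¹ : Equiv.Perm (Fin n)) a = w⁻¹ (v⁻¹ a) := by
      intro a
      rw [mul_inv_rev, Equiv.Perm.mul_apply]
    constructor
    · rintro ⟨c1, c2⟩
      constructor
      · rw [wle_iff]
        intro a b hab hp
        have := c1 a b
          (show ((a : ℕ) : ℤ) < ((b : ℕ) : ℤ) by exact_mod_cast Fin.lt_def.1 hab)
          (show (((π⁻¹ b : Fin n) : ℕ) : ℤ) < (((π⁻¹ a : Fin n) : ℕ) : ℤ) by
            exact_mod_cast Fin.lt_def.1 hp)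
        have h2 : ((((v⁻¹ : Equiv.Perm (Fin n)) b : Fin n) : ℕ) : ℤ) <
            ((((v⁻¹ : Equiv.Perm (Fin n)) a : Fin n) : ℕ) : ℤ) := this
        rw [Fin.lt_def]; exact_mod_cast h2
      · rw [wle_iff]
        intro a b hab hu
        rw [happ a, happ b] at hu
        by_contra hc
        have hab' : a ≠ b := ne_of_lt hab
        have hpab : π⁻¹ a < π⁻¹ b := by
          rcases lt_trichotomy (π⁻¹ a) (π⁻¹ b) with h' | h' | h'
          · exact h'
          · exact absurd (π⁻¹.injective h') hab'
          · exact absurd h' hc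
        have := c2 a b
          (show ((a : ℕ) : ℤ) < ((b : ℕ) : ℤ) by exact_mod_cast Fin.lt_def.1 hab)
          (show (((π⁻¹ a : Fin n) : ℕ) : ℤ) < (((π⁻¹ b : Fin n) : ℕ) : ℤ) by
            exact_mod_cast Fin.lt_def.1 hpab)
        have h2 : ((((w⁻¹ (v⁻¹ a)) : Fin n) : ℕ) : ℤ) < (((w⁻¹ (v⁻¹ b) : Fin n) : ℕ) : ℤ) := this
        have h3 : w⁻¹ (v⁻¹ a) < w⁻¹ (v⁻¹ b) := by rw [Fin.lt_def]; exact_mod_cast h2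
        exact absurd hu (not_lt.2 h3.le)
    · rintro ⟨h1, h2⟩
      rw [wle_iff] at h1 h2
      constructor
      · intro a b hxab hyab
        have hxab' : ((a : ℕ) : ℤ) < ((b : ℕ) : ℤ) := hxab
        have hyab' : (((π⁻¹ b : Fin n) : ℕ) : ℤ) < (((π⁻¹ a : Fin n) : ℕ) : ℤ) := hyab
        have hab : a < b := by rw [Fin.lt_def]; exact_mod_cast hxab'
        have hp : π⁻¹ b < π⁻¹ a := by rw [Fin.lt_def]; exact_mod_cast hyab'
        have := h1 a b hab hp
        show ((((v⁻¹ : Equiv.Perm (Fin n)) b : Fin n) : ℕ) : ℤ) <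
            ((((v⁻¹ : Equiv.Perm (Fin n)) a : Fin n) : ℕ) : ℤ)
        exact_mod_cast Fin.lt_def.1 this
      · intro a b hxab hyab
        have hxab' : ((a : ℕ) : ℤ) < ((b : ℕ) : ℤ) := hxab
        have hyab' : (((π⁻¹ a : Fin n) : ℕ) : ℤ) < (((π⁻¹ b : Fin n) : ℕ) : ℤ) := hyab
        have hab : a < b := by rw [Fin.lt_def]; exact_mod_cast hxab'
        have hp : π⁻¹ a < π⁻¹ b := by rw [Fin.lt_def]; exact_mod_cast hyab'
        by_contra hc
        have hne : (w⁻¹ (v⁻¹ a)) ≠ (w⁻¹ (v⁻¹ b)) := by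
          intro h'
          exact absurd (v⁻¹.injective (w⁻¹.injective h')) (ne_of_lt hab)
        have hlt : w⁻¹ (v⁻¹ b) < w⁻¹ (v⁻¹ a) := by
          rcases lt_trichotomy (w⁻¹ (v⁻¹ a)) (w⁻¹ (v⁻¹ b)) with h' | h' | h'
          · exfalso
            apply hc
            show ((((w⁻¹ (v⁻¹ a)) : Fin n) : ℕ) : ℤ) < (((w⁻¹ (v⁻¹ b) : Fin n) : ℕ) : ℤ)
            exact_mod_cast Fin.lt_def.1 h'
          · exact absurd h' hne
          · exact h'
        have hub : ((v * w)⁻¹ : Equiv.Perm (Fin n)) b < ((v * w)⁻¹ : Equiv.Perm (Fin n)) a := by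
          rw [happ a, happ b]; exact hlt
        have := h2 a b hab hub
        exact absurd hp (not_lt.2 this.le)
  obtain ⟨F, hF, hFu⟩ := hkey
  set v : Equiv.Perm (Fin n) := F⁻¹ with hv
  have hvF : v⁻¹ = F := by rw [hv, inv_inv]
  have hcv : wle π v ∧ wle (v * w) π := (hcond_iff v).1 (by rw [hvF]; exact hF)
  refine ⟨⟨⟨v * w, hcv.2⟩, ⟨v, hcv.1⟩⟩, ?_, ?_⟩
  · show v⁻¹ * (v * w) = w
    group
  · rintro ⟨⟨u', hu'⟩, ⟨v', hv'⟩⟩ heq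
    have heq' : v'⁻¹ * u' = w := heq
    have hu'eq : u' = v' * w := by
      rw [← heq']
      group
    have hcond' : Cond _ _ _ _ ((v')⁻¹ : Equiv.Perm (Fin n)) :=
      (hcond_iff v').2 ⟨hv', by rw [← hu'eq]; exact hu'⟩
    have : (v')⁻¹ = F := hFu _ hcond'
    have hv'v : v' = v := by
      rw [hv, ← this, inv_inv]
    have h1 : (⟨u', hu'⟩ : {u : Equiv.Perm (Fin n) // wle u π}) = ⟨v * w, hcv.2⟩ :=
      Subtype.ext (by show u' = v * w; rw [hu'eq, hv'v])
    have h2 : (⟨v', hv'⟩ : {v : Equiv.Perm (Fin n) // wle π v}) = ⟨v, hcv.1⟩ :=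
      Subtype.ext hv'v
    rw [h1, h2]


end Aux

/-- For separable `π ∈ S_n`, the map
`φ' : Λ_π × V_π → S_n`, `φ'(u, v) = v⁻¹u`, is a bijection. -/
theorem bijective_inv_mul' (n : ℕ) (π : Equiv.Perm (Fin n)) (hsep : IsSeparable π) :
    Function.Bijective
      (fun p : {u : Equiv.Perm (Fin n) // wle u π} × {v : Equiv.Perm (Fin n) // wle π v} =>
        (p.2.val)⁻¹ * p.1.val) := by
  rw [Function.bijective_iff_existsUnique]
  intro w
  exact main_existsUnique π hsep w

end SepPerm
end

section
/- Let n > 1 and let π ∈ S_n be a separable permutation. Then the inversion poset P_π decomposes as P_π = P₁ + P₂ (disjoint union) or P_π = P₁ ⊕ P₂ (ordinal sum) for two nonempty induced subposets P₁, P₂ on complementary subsets of {1,…,n}. -/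
open Polynomial

namespace SepPerm

def SumBlk {n : ℕ} (π : Equiv.Perm (Fin n)) (s k : ℕ) : Prop :=
  ∀ i j : Fin n, s ≤ (i : ℕ) → (i : ℕ) < s + k → s + k ≤ (j : ℕ) → π i < π j

def SkewBlk {n : ℕ} (π : Equiv.Perm (Fin n)) (s k : ℕ) : Prop :=
  ∀ i j : Fin n, s ≤ (i : ℕ) → (i : ℕ) < s + k → s + k ≤ (j : ℕ) → π j < π i

lemma key_s4 {n : ℕ} (π : Equiv.Perm (Fin n)) (hsep : IsSeparable π) :
    ∀ m s : ℕ, 2 ≤ m → s + m = n →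
      ∃ k, 1 ≤ k ∧ s + k < n ∧ (SumBlk π s k ∨ SkewBlk π s k) := by
  classical
  intro m
  induction m with
  | zero => intro s hm; omega
  | succ m ih =>
    intro s hm hsn
    by_cases hm2 : 2 ≤ m
    case neg =>
      -- base case : m = 1, window has two elements
      have hm1 : m = 1 := by omega
      subst hm1
      have hs : s < n := by omega
      have hs1 : s + 1 < n := by omega
      set fs : Fin n := ⟨s, hs⟩ with hfs
      set ft : Fin n := ⟨s + 1, hs1⟩ with hft
      have hfsv : (fs : ℕ) = s := rfl
      have hftv : (ft : ℕ) = s + 1 := rfl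
      have hne : π fs ≠ π ft := π.injective.ne (by
        intro h; apply_fun (Fin.val) at h; simp [hfs, hft] at h)
      rcases lt_or_gt_of_ne hne with hlt | hgt
      · refine ⟨1, le_refl 1, by omega, Or.inl ?_⟩
        intro i j hi1 hi2 hj
        have hj2 : (j : ℕ) < n := j.2
        have : i = fs := Fin.ext (by omega)
        have : j = ft := Fin.ext (by omega)
        subst_vars; exact hlt
      · refine ⟨1, le_refl 1, by omega, Or.inr ?_⟩
        intro i j hi1 hi2 hj
        have hj2 : (j : ℕ) < n := j.2
        have : i = fs := Fin.ext (by omega)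
        have : j = ft := Fin.ext (by omega)
        subst_vars; exact hgt
    case pos =>
      obtain ⟨k, hk1, hk2, hAB⟩ := ih (s + 1) hm2 (by omega)
      have hs : s < n := by omega
      have hs1 : s + 1 < n := by omega
      set fs : Fin n := ⟨s, hs⟩ with hfs
      set fp : Fin n := ⟨s + 1, hs1⟩ with hfp
      have hfsv : (fs : ℕ) = s := rfl
      have hfpv : (fp : ℕ) = s + 1 := rfl
      set v : Fin n := π fs with hv
      have hne_v : ∀ j : Fin n, s + 1 ≤ (j : ℕ) → π j ≠ v := by
        intro j hj h
        have : j = fs := π.injective h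
        apply_fun Fin.val at this
        simp [hfs] at this; omega
      rcases hAB with hA | hB
      · -- inner block is sum-type
        by_cases hA1 : ∀ j : Fin n, s + 1 + k ≤ (j : ℕ) → v < π j
        · refine ⟨k + 1, by omega, by omega, Or.inl ?_⟩
          intro i j hi1 hi2 hj
          rcases Nat.eq_or_lt_of_le hi1 with he | hlt
          · have : i = fs := Fin.ext he.symm
            rw [this]; exact hA1 j (by omega)
          · exact hA i j (by omega) (by omega) (by omega)
        · push_neg at hA1
          obtain ⟨j0, hj0, hj0v⟩ := hA1
          have hj0v' : π j0 < v :=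
            lt_of_le_of_ne hj0v (hne_v j0 (by omega))
          by_cases hA2 : ∃ q1 q2 : Fin n,
              s + 1 + k ≤ (q1 : ℕ) ∧ q1 < q2 ∧ v < π q1 ∧ π q2 < v
          · obtain ⟨q1, q2, hq1, hq12, hvq1, hq2v⟩ := hA2
            have hq12' : (q1 : ℕ) < (q2 : ℕ) := hq12
            exfalso
            refine hsep.1 ⟨fs, fp, q1, q2, ?_, ?_, hq12, ?_, hq2v, hvq1⟩
            · show (fs : ℕ) < (fp : ℕ); omega
            · show (fp : ℕ) < (q1 : ℕ); simp [hfp]; omega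
            · exact hA fp q2 (by omega) (by omega) (by omega)
          · by_cases hU : ∃ q : Fin n, s + 1 + k ≤ (q : ℕ) ∧ v < π q
            · set F := Finset.univ.filter
                (fun q : Fin n => s + 1 + k ≤ (q : ℕ) ∧ v < π q) with hF
              have hFne : F.Nonempty := by
                obtain ⟨q, h1, h2⟩ := hU
                exact ⟨q, by simp [hF, h1, h2]⟩
              set t := F.min' hFne with htd
              have ht1 : s + 1 + k ≤ (t : ℕ) ∧ v < π t := by
                have := F.min'_mem hFne
                simpa [hF] using this
              have hmin : ∀ q : Fin n, s + 1 + k ≤ (q : ℕ) → v < π q → t ≤ q := by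
                intro q h1 h2
                exact F.min'_le q (by simp [hF, h1, h2])
              have hbig : ∀ j : Fin n, (t : ℕ) ≤ (j : ℕ) → v < π j := by
                intro j hj
                by_contra hc
                have hjv : π j < v :=
                  lt_of_le_of_ne (not_lt.mp hc) (hne_v j (by omega))
                have htj : (t : ℕ) ≠ (j : ℕ) := by
                  intro he
                  have : t = j := Fin.ext he
                  rw [this] at ht1
                  exact hc ht1.2
                exact hA2 ⟨t, j, ht1.1, Fin.lt_def.mpr (by omega), ht1.2, hjv⟩
              refine ⟨(t : ℕ) - s, by omega, by omega, Or.inl ?_⟩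
              intro i j hi1 hi2 hj
              have hj' : (t : ℕ) ≤ (j : ℕ) := by omega
              have hvj : v < π j := hbig j hj'
              rcases Nat.eq_or_lt_of_le hi1 with he | hlt
              · have : i = fs := Fin.ext he.symm
                rw [this]; exact hvj
              · by_cases hik : (i : ℕ) < s + 1 + k
                · exact hA i j (by omega) (by omega) (by omega)
                · have hnvi : ¬ v < π i := by
                    intro hvi
                    have := hmin i (by omega) hvi
                    have : (t : ℕ) ≤ (i : ℕ) := this
                    omega
                  have : π i < v :=
                    lt_of_le_of_ne (not_lt.mp hnvi) (hne_v i (by omega))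
                  exact lt_trans this hvj
            · push_neg at hU
              refine ⟨1, le_refl 1, by omega, Or.inr ?_⟩
              intro i j hi1 hi2 hj
              have : i = fs := Fin.ext (by omega)
              rw [this]
              by_cases hjk : (j : ℕ) < s + 1 + k
              · exact lt_trans (hA j j0 (by omega) (by omega) (by omega)) hj0v'
              · exact lt_of_le_of_ne (hU j (by omega))
                  (hne_v j (by omega))
      · -- inner block is skew-type
        by_cases hB1 : ∀ j : Fin n, s + 1 + k ≤ (j : ℕ) → π j < v
        · refine ⟨k + 1, by omega, by omega, Or.inr ?_⟩
          intro i j hi1 hi2 hj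
          rcases Nat.eq_or_lt_of_le hi1 with he | hlt
          · have : i = fs := Fin.ext he.symm
            rw [this]; exact hB1 j (by omega)
          · exact hB i j (by omega) (by omega) (by omega)
        · push_neg at hB1
          obtain ⟨j0, hj0, hj0v⟩ := hB1
          have hj0v' : v < π j0 :=
            lt_of_le_of_ne hj0v (Ne.symm (hne_v j0 (by omega)))
          by_cases hB2 : ∃ q1 q2 : Fin n,
              s + 1 + k ≤ (q1 : ℕ) ∧ q1 < q2 ∧ π q1 < v ∧ v < π q2
          · obtain ⟨q1, q2, hq1, hq12, hq1v, hvq2⟩ := hB2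
            have hq12' : (q1 : ℕ) < (q2 : ℕ) := hq12
            exfalso
            refine hsep.2 ⟨fs, fp, q1, q2, ?_, ?_, hq12, hq1v, hvq2, ?_⟩
            · show (fs : ℕ) < (fp : ℕ); omega
            · show (fp : ℕ) < (q1 : ℕ); simp [hfp]; omega
            · exact hB fp q2 (by omega) (by omega) (by omega)
          · by_cases hU : ∃ q : Fin n, s + 1 + k ≤ (q : ℕ) ∧ π q < v
            · set F := Finset.univ.filter
                (fun q : Fin n => s + 1 + k ≤ (q : ℕ) ∧ π q < v) with hF
              have hFne : F.Nonempty := by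
                obtain ⟨q, h1, h2⟩ := hU
                exact ⟨q, by simp [hF, h1, h2]⟩
              set t := F.min' hFne with htd
              have ht1 : s + 1 + k ≤ (t : ℕ) ∧ π t < v := by
                have := F.min'_mem hFne
                simpa [hF] using this
              have hmin : ∀ q : Fin n, s + 1 + k ≤ (q : ℕ) → π q < v → t ≤ q := by
                intro q h1 h2
                exact F.min'_le q (by simp [hF, h1, h2])
              have hsmall : ∀ j : Fin n, (t : ℕ) ≤ (j : ℕ) → π j < v := by
                intro j hj
                by_contra hc
                have hjv : v < π j :=
                  lt_of_le_of_ne (not_lt.mp hc) (Ne.symm (hne_v j (by omega)))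
                have htj : (t : ℕ) ≠ (j : ℕ) := by
                  intro he
                  have : t = j := Fin.ext he
                  rw [this] at ht1
                  exact hc ht1.2
                exact hB2 ⟨t, j, ht1.1, Fin.lt_def.mpr (by omega), ht1.2, hjv⟩
              refine ⟨(t : ℕ) - s, by omega, by omega, Or.inr ?_⟩
              intro i j hi1 hi2 hj
              have hj' : (t : ℕ) ≤ (j : ℕ) := by omega
              have hvj : π j < v := hsmall j hj'
              rcases Nat.eq_or_lt_of_le hi1 with he | hlt
              · have : i = fs := Fin.ext he.symm
                rw [this]; exact hvj
              · by_cases hik : (i : ℕ) < s + 1 + k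
                · exact hB i j (by omega) (by omega) (by omega)
                · have hnvi : ¬ π i < v := by
                    intro hvi
                    have := hmin i (by omega) hvi
                    have : (t : ℕ) ≤ (i : ℕ) := this
                    omega
                  have : v < π i :=
                    lt_of_le_of_ne (not_lt.mp hnvi) (Ne.symm (hne_v i (by omega)))
                  exact lt_trans hvj this
            · push_neg at hU
              refine ⟨1, le_refl 1, by omega, Or.inl ?_⟩
              intro i j hi1 hi2 hj
              have : i = fs := Fin.ext (by omega)
              rw [this]
              by_cases hjk : (j : ℕ) < s + 1 + k
              · exact lt_trans hj0v' (hB j j0 (by omega) (by omega) (by omega))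
              · exact lt_of_le_of_ne (hU j (by omega))
                  (Ne.symm (hne_v j (by omega)))


/-- For separable `π ∈ S_n`, `n > 1`, the inversion poset `P_π`
decomposes as a disjoint union (no relations across the two parts) or as an ordinal
sum (every element of the first part lies below every element of the second part)
of two nonempty induced subposets on complementary subsets of the ground set. -/
theorem inversion_poset_decomposes (n : ℕ) (hn : 1 < n) (π : Equiv.Perm (Fin n))
    (hsep : IsSeparable π) :
    ∃ S : Finset (Fin n), S.Nonempty ∧ Sᶜ.Nonempty ∧
      ((∀ x y : Fin n, invLe π x y → (x ∈ S ↔ y ∈ S)) ∨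
       (∀ x y : Fin n, invLe π x y ↔
          ((x ∈ S ∧ y ∈ S ∧ invLe π x y) ∨ (x ∉ S ∧ y ∉ S ∧ invLe π x y) ∨
            (x ∈ S ∧ y ∉ S)))) := by
  classical
  obtain ⟨k, hk1, hkn, hd⟩ := key_s4 π hsep n 0 (by omega) (by omega)
  set S := Finset.univ.filter (fun x : Fin n => ((π⁻¹ x : Fin n) : ℕ) < k) with hS
  have hmem : ∀ x : Fin n, x ∈ S ↔ ((π⁻¹ x : Fin n) : ℕ) < k := by
    intro x; simp [hS]
  have hne1 : S.Nonempty := by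
    refine ⟨π ⟨0, by omega⟩, ?_⟩
    rw [hmem, Equiv.Perm.inv_def, Equiv.symm_apply_apply]
    exact hk1
  have hne2 : Sᶜ.Nonempty := by
    refine ⟨π ⟨k, by omega⟩, ?_⟩
    rw [Finset.mem_compl, hmem, Equiv.Perm.inv_def, Equiv.symm_apply_apply]
    simp
  refine ⟨S, hne1, hne2, ?_⟩
  rcases hd with hsum | hskew
  · right
    intro x y
    constructor
    · intro h
      by_cases hx : x ∈ S <;> by_cases hy : y ∈ S
      · exact Or.inl ⟨hx, hy, h⟩
      · exact Or.inr (Or.inr ⟨hx, hy⟩)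
      · exfalso
        rw [hmem] at hx hy
        have h2 : ((π⁻¹ x : Fin n) : ℕ) ≤ ((π⁻¹ y : Fin n) : ℕ) := h.2
        omega
      · exact Or.inr (Or.inl ⟨hx, hy, h⟩)
    · rintro (⟨_, _, h⟩ | ⟨_, _, h⟩ | ⟨hx, hy⟩)
      · exact h
      · exact h
      · rw [hmem] at hx hy
        constructor
        · have := hsum (π⁻¹ x) (π⁻¹ y) (Nat.zero_le _) (by omega) (by omega)
          rw [Equiv.Perm.inv_def, Equiv.apply_symm_apply, Equiv.apply_symm_apply] at this
          exact le_of_lt this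
        · exact Fin.le_def.mpr (by omega)
  · left
    intro x y h
    rw [hmem, hmem]
    constructor
    · intro hx
      by_contra hy
      have := hskew (π⁻¹ x) (π⁻¹ y) (Nat.zero_le _) (by omega) (by omega)
      rw [Equiv.Perm.inv_def, Equiv.apply_symm_apply, Equiv.apply_symm_apply] at this
      exact absurd h.1 (not_le.mpr this)
    · intro hy
      by_contra hx
      have h2 : ((π⁻¹ x : Fin n) : ℕ) ≤ ((π⁻¹ y : Fin n) : ℕ) := h.2
      omega


end SepPerm
end

section
/- Let P be a poset on {1,…,m} and Q a poset on {m+1,…,m+n}. Then F(L(P + Q), q) = F(L(P), q) · F(L(Q), q) · [m+n choose m]_q, where P + Q is the disjoint union, a poset on {1,…,m+n}, F(L(Q), q) is computed by identifying Q with a poset on {1,…,n} via subtracting m from each element, and [m+n choose m]_q = [m+n]!/([m]![n]!) is the Gaussian binomial coefficient. -/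
open Polynomial

namespace SepPerm

/-- The disjoint union `P + Q` on `{1,…,m+n}` of a poset `P` on `{1,…,m}` and a poset
`Q` on `{m+1,…,m+n}` (the latter given, after subtracting `m`, as an order on `Fin n`). -/
def dsum (m n : ℕ) (rP : Fin m → Fin m → Prop) (rQ : Fin n → Fin n → Prop) :
    Fin (m + n) → Fin (m + n) → Prop := fun x y =>
  (∃ (hx : (x : ℕ) < m) (hy : (y : ℕ) < m), rP ⟨x, hx⟩ ⟨y, hy⟩) ∨
  (∃ (_ : m ≤ (x : ℕ)) (_ : m ≤ (y : ℕ)),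
      rQ ⟨(x : ℕ) - m, by have := x.2; omega⟩ ⟨(y : ℕ) - m, by have := y.2; omega⟩)

section Decomp

variable {m n : ℕ}

/-- Block-diagonal embedding of a pair of permutations. -/
def iota (a : Equiv.Perm (Fin m)) (b : Equiv.Perm (Fin n)) : Equiv.Perm (Fin (m + n)) :=
  finSumFinEquiv.permCongr (a.sumCongr b)

@[simp] lemma iota_castAdd (a : Equiv.Perm (Fin m)) (b : Equiv.Perm (Fin n)) (i : Fin m) :
    iota a b (Fin.castAdd n i) = Fin.castAdd n (a i) := by
  simp [iota, Equiv.permCongr_apply]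

@[simp] lemma iota_natAdd (a : Equiv.Perm (Fin m)) (b : Equiv.Perm (Fin n)) (j : Fin n) :
    iota a b (Fin.natAdd m j) = Fin.natAdd m (b j) := by
  simp [iota, Equiv.permCongr_apply]

lemma eq_castAdd {z : Fin (m + n)} (h : (z : ℕ) < m) : z = Fin.castAdd n ⟨(z : ℕ), h⟩ :=
  Fin.ext rfl

lemma eq_natAdd {z : Fin (m + n)} (h : m ≤ (z : ℕ)) :
    z = Fin.natAdd m ⟨(z : ℕ) - m, by have := z.2; omega⟩ :=
  Fin.ext (by simp; omega)

lemma iota_lt_iff (a : Equiv.Perm (Fin m)) (b : Equiv.Perm (Fin n)) (z : Fin (m + n)) :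
    ((iota a b z : ℕ) < m) ↔ (z : ℕ) < m := by
  rcases lt_or_ge (z : ℕ) m with h | h
  · have h1 : iota a b z = Fin.castAdd n (a ⟨(z:ℕ), h⟩) := by
      conv_lhs => rw [eq_castAdd h]
      rw [iota_castAdd]
    rw [h1]; simp [(a ⟨(z:ℕ), h⟩).2, h]
  · have h1 : iota a b z = Fin.natAdd m (b ⟨(z:ℕ) - m, by have := z.2; omega⟩) := by
      conv_lhs => rw [eq_natAdd h]
      rw [iota_natAdd]
    rw [h1]; simp; omega

/-- `u` is an (inverse) shuffle: positions of the first and second blocks come in order. -/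
def IsShuf (u : Equiv.Perm (Fin (m + n))) : Prop :=
  StrictMono (fun i : Fin m => u.symm (Fin.castAdd n i)) ∧
  StrictMono (fun j : Fin n => u.symm (Fin.natAdd m j))


variable {m n : ℕ}

lemma card_compl_of_card {T : Finset (Fin (m + n))} (hT : T.card = m) : Tᶜ.card = n := by
  rw [Finset.card_compl, hT]; simp

/-- The shuffle whose first-block positions are a given `m`-element set `T`. -/
noncomputable def shufOf (T : Finset (Fin (m + n))) (hT : T.card = m) :
    Equiv.Perm (Fin (m + n)) :=
  (finSumFinEquiv.symm.trans (Equiv.ofBijective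
    (Sum.elim (T.orderEmbOfFin hT) (Tᶜ.orderEmbOfFin (card_compl_of_card hT)))
    (by
      rw [Fintype.bijective_iff_injective_and_card]
      constructor
      · rintro (x | x) (y | y) h <;> simp only [Sum.elim_inl, Sum.elim_inr] at h
        · simpa using (T.orderEmbOfFin hT).injective h
        · exact absurd (h ▸ T.orderEmbOfFin_mem hT x)
            (Finset.mem_compl.1 (Tᶜ.orderEmbOfFin_mem (card_compl_of_card hT) y))
        · exact absurd (T.orderEmbOfFin_mem hT y)
            (Finset.mem_compl.1 (h ▸ Tᶜ.orderEmbOfFin_mem (card_compl_of_card hT) x))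
        · simpa using (Tᶜ.orderEmbOfFin (card_compl_of_card hT)).injective h
      · simp))).symm

@[simp] lemma shufOf_symm_castAdd (T : Finset (Fin (m + n))) (hT : T.card = m) (i : Fin m) :
    (shufOf T hT).symm (Fin.castAdd n i) = T.orderEmbOfFin hT i := by
  simp [shufOf]

@[simp] lemma shufOf_symm_natAdd (T : Finset (Fin (m + n))) (hT : T.card = m) (j : Fin n) :
    (shufOf T hT).symm (Fin.natAdd m j) = Tᶜ.orderEmbOfFin (card_compl_of_card hT) j := by
  simp [shufOf]

lemma isShuf_shufOf (T : Finset (Fin (m + n))) (hT : T.card = m) : IsShuf (shufOf T hT) := by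
  constructor
  · intro i j hij
    simpa using (T.orderEmbOfFin hT).strictMono hij
  · intro i j hij
    simpa using (Tᶜ.orderEmbOfFin (card_compl_of_card hT)).strictMono hij

lemma card_small : ((Finset.univ : Finset (Fin (m + n))).filter fun z : Fin (m + n) => (z : ℕ) < m).card = m := by
  have : ((Finset.univ : Finset (Fin (m + n))).filter fun z : Fin (m + n) => (z : ℕ) < m) =
      Finset.image (Fin.castAdd n) Finset.univ := by
    ext z
    simp only [Finset.mem_filter, Finset.mem_univ, true_and, Finset.mem_image]
    constructor
    · intro h; exact ⟨⟨(z : ℕ), h⟩, (eq_castAdd h).symm⟩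
    · rintro ⟨i, rfl⟩; simpa using i.2
  rw [this, Finset.card_image_of_injective _ (Fin.strictMono_castAdd n).injective]
  simp

lemma card_T (σ : Equiv.Perm (Fin (m + n))) :
    ((Finset.univ : Finset (Fin (m + n))).filter fun x : Fin (m + n) => ((σ x : ℕ) < m)).card = m := by
  rw [show ((Finset.univ : Finset (Fin (m + n))).filter fun x : Fin (m + n) => ((σ x : ℕ) < m)) =
      Finset.image σ.symm ((Finset.univ : Finset (Fin (m + n))).filter fun z : Fin (m + n) => (z : ℕ) < m) from ?_]
  · rw [Finset.card_image_of_injective _ σ.symm.injective, card_small]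
  · ext x
    simp only [Finset.mem_filter, Finset.mem_univ, true_and, Finset.mem_image]
    constructor
    · intro h; exact ⟨σ x, h, σ.symm_apply_apply x⟩
    · rintro ⟨z, hz, rfl⟩; simpa using hz

lemma shuf_unique {u u' : Equiv.Perm (Fin (m + n))} (hu : IsShuf u) (hu' : IsShuf u')
    (h : ∀ x, ((u x : ℕ) < m ↔ (u' x : ℕ) < m)) : u = u' := by
  set T : Finset (Fin (m + n)) :=
    (Finset.univ : Finset (Fin (m + n))).filter (fun x => ((u x : ℕ) < m)) with hTdef
  have hT : T.card = m := card_T u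
  have key : ∀ (w : Equiv.Perm (Fin (m + n))), IsShuf w →
      (∀ x, ((w x : ℕ) < m ↔ x ∈ T)) → ∀ z, w.symm z = (shufOf T hT).symm z := by
    intro w hw hmem z
    have hf : (fun i : Fin m => w.symm (Fin.castAdd n i)) = T.orderEmbOfFin hT := by
      apply Finset.orderEmbOfFin_unique hT _ hw.1
      intro i
      rw [← hmem]
      simp
    have hg : (fun j : Fin n => w.symm (Fin.natAdd m j)) =
        Tᶜ.orderEmbOfFin (card_compl_of_card hT) := by
      apply Finset.orderEmbOfFin_unique _ _ hw.2
      intro j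
      rw [Finset.mem_compl, ← hmem]
      simp
    refine Fin.addCases (motive := fun z => w.symm z = (shufOf T hT).symm z) ?_ ?_ z
    · intro i; rw [shufOf_symm_castAdd, ← hf]
    · intro j; rw [shufOf_symm_natAdd, ← hg]
  have h1 : ∀ z, u.symm z = (shufOf T hT).symm z :=
    key u hu (fun x => by simp [hTdef])
  have h2 : ∀ z, u'.symm z = (shufOf T hT).symm z :=
    key u' hu' (fun x => by simp [hTdef, ← h x])
  have : u.symm = u'.symm := Equiv.ext fun z => (h1 z).trans (h2 z).symm
  calc u = u.symm.symm := (Equiv.symm_symm u).symm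
    _ = u'.symm.symm := by rw [this]
    _ = u' := Equiv.symm_symm u'


/-- The shuffle component of `σ`. -/
noncomputable def uOf (σ : Equiv.Perm (Fin (m + n))) : Equiv.Perm (Fin (m + n)) :=
  shufOf ((Finset.univ : Finset (Fin (m + n))).filter fun x : Fin (m + n) => ((σ x : ℕ) < m))
    (card_T σ)

lemma isShuf_uOf (σ : Equiv.Perm (Fin (m + n))) : IsShuf (uOf σ) := isShuf_shufOf _ _

/-- The block part of `σ`. -/
noncomputable def tauOf (σ : Equiv.Perm (Fin (m + n))) : Equiv.Perm (Fin (m + n)) :=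
  σ * (uOf σ)⁻¹

lemma tauOf_castAdd_lt (σ : Equiv.Perm (Fin (m + n))) (i : Fin m) :
    ((tauOf σ (Fin.castAdd n i) : ℕ)) < m := by
  have h1 : tauOf σ (Fin.castAdd n i) = σ ((uOf σ).symm (Fin.castAdd n i)) := rfl
  rw [h1, uOf, shufOf_symm_castAdd]
  have := Finset.orderEmbOfFin_mem _ (card_T σ) i
  rw [Finset.mem_filter] at this
  exact this.2

lemma tauOf_natAdd_le (σ : Equiv.Perm (Fin (m + n))) (j : Fin n) :
    m ≤ ((tauOf σ (Fin.natAdd m j) : ℕ)) := by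
  have h1 : tauOf σ (Fin.natAdd m j) = σ ((uOf σ).symm (Fin.natAdd m j)) := rfl
  rw [h1, uOf, shufOf_symm_natAdd]
  have := Finset.orderEmbOfFin_mem _ (card_compl_of_card (card_T σ)) j
  rw [Finset.mem_compl] at this
  simp only [Finset.mem_filter, Finset.mem_univ, true_and, not_lt] at this
  exact this

/-- The first-block permutation component of `σ`. -/
noncomputable def aOf (σ : Equiv.Perm (Fin (m + n))) : Equiv.Perm (Fin m) :=
  Equiv.ofBijective (fun i => ⟨(tauOf σ (Fin.castAdd n i) : ℕ), tauOf_castAdd_lt σ i⟩)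
    (Finite.injective_iff_bijective.1 (by
      intro i j h
      simp only [Fin.mk.injEq] at h
      have h2 : tauOf σ (Fin.castAdd n i) = tauOf σ (Fin.castAdd n j) := Fin.ext h
      have h3 := (tauOf σ).injective h2
      exact Fin.ext (by simpa using congrArg Fin.val h3)))

/-- The second-block permutation component of `σ`. -/
noncomputable def bOf (σ : Equiv.Perm (Fin (m + n))) : Equiv.Perm (Fin n) :=
  Equiv.ofBijective (fun j => ⟨(tauOf σ (Fin.natAdd m j) : ℕ) - m, by
      have := (tauOf σ (Fin.natAdd m j)).2
      have := tauOf_natAdd_le σ j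
      omega⟩)
    (Finite.injective_iff_bijective.1 (by
      intro i j h
      have hvi := tauOf_natAdd_le σ i
      have hvj := tauOf_natAdd_le σ j
      simp only [Fin.mk.injEq] at h
      have h2 : tauOf σ (Fin.natAdd m i) = tauOf σ (Fin.natAdd m j) := Fin.ext (by omega)
      have h3 := (tauOf σ).injective h2
      have hv := congrArg Fin.val h3
      simp only [Fin.coe_natAdd] at hv
      exact Fin.ext (by omega)))

lemma iota_aOf_bOf (σ : Equiv.Perm (Fin (m + n))) : iota (aOf σ) (bOf σ) = tauOf σ := by
  apply Equiv.ext
  intro z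
  refine Fin.addCases (motive := fun z => iota (aOf σ) (bOf σ) z = tauOf σ z) ?_ ?_ z
  · intro i
    rw [iota_castAdd]
    exact Fin.ext (by simp [aOf, Equiv.ofBijective_apply])
  · intro j
    rw [iota_natAdd]
    apply Fin.ext
    have h1 := tauOf_natAdd_le σ j
    have hb : ((bOf σ) j : ℕ) = (tauOf σ (Fin.natAdd m j) : ℕ) - m := rfl
    rw [Fin.coe_natAdd, hb]
    omega

lemma decomp_eq (σ : Equiv.Perm (Fin (m + n))) : iota (aOf σ) (bOf σ) * uOf σ = σ := by
  rw [iota_aOf_bOf, tauOf, inv_mul_cancel_right]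

lemma comp_unique {a a' : Equiv.Perm (Fin m)} {b b' : Equiv.Perm (Fin n)}
    {u u' : Equiv.Perm (Fin (m + n))} (hu : IsShuf u) (hu' : IsShuf u')
    (h : iota a b * u = iota a' b' * u') : a = a' ∧ b = b' ∧ u = u' := by
  have huu : u = u' := by
    apply shuf_unique hu hu'
    intro x
    have hx : iota a b (u x) = iota a' b' (u' x) := by
      have := congrFun (congrArg (fun (e : Equiv.Perm (Fin (m+n))) => (e : Fin (m+n) → Fin (m+n))) h) x
      simpa using this
    rw [← iota_lt_iff a b (u x), hx, iota_lt_iff]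
  subst huu
  have hii : iota a b = iota a' b' := mul_right_cancel h
  refine ⟨?_, ?_, rfl⟩
  · apply Equiv.ext
    intro i
    have := congrFun (congrArg (fun (e : Equiv.Perm (Fin (m+n))) => (e : Fin (m+n) → Fin (m+n))) hii) (Fin.castAdd n i)
    simp only [iota_castAdd] at this
    exact Fin.ext (by simpa using congrArg Fin.val this)
  · apply Equiv.ext
    intro j
    have := congrFun (congrArg (fun (e : Equiv.Perm (Fin (m+n))) => (e : Fin (m+n) → Fin (m+n))) hii) (Fin.natAdd m j)
    simp only [iota_natAdd] at this
    have hv := congrArg Fin.val this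
    simp only [Fin.coe_natAdd] at hv
    exact Fin.ext (by omega)


lemma invCount_mul_s7 (a : Equiv.Perm (Fin m)) (b : Equiv.Perm (Fin n))
    (u : Equiv.Perm (Fin (m + n))) (hu : IsShuf u) :
    invCount (iota a b * u) = invCount a + invCount b + invCount u := by
  classical
  set σ := iota a b * u with hσdef
  have happ : ∀ p, σ p = iota a b (u p) := fun p => rfl
  have hval1 : ∀ (p : Fin (m + n)) (h : (u p : ℕ) < m),
      σ p = Fin.castAdd n (a ⟨(u p : ℕ), h⟩) := by
    intro p h
    rw [happ]
    conv_lhs => rw [eq_castAdd h]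
    rw [iota_castAdd]
  have hval2 : ∀ (p : Fin (m + n)) (h : m ≤ (u p : ℕ)),
      σ p = Fin.natAdd m (b ⟨(u p : ℕ) - m, by have := (u p).2; omega⟩) := by
    intro p h
    rw [happ]
    conv_lhs => rw [eq_natAdd h]
    rw [iota_natAdd]
  have hpos1 : ∀ (p : Fin (m + n)) (h : (u p : ℕ) < m),
      u.symm (Fin.castAdd n ⟨(u p : ℕ), h⟩) = p := by
    intro p h; rw [← eq_castAdd h]; exact u.symm_apply_apply p
  have hpos2 : ∀ (p : Fin (m + n)) (h : m ≤ (u p : ℕ)),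
      u.symm (Fin.natAdd m ⟨(u p : ℕ) - m, by have := (u p).2; omega⟩) = p := by
    intro p h; rw [← eq_natAdd h]; exact u.symm_apply_apply p
  have hcross : ∀ p q : Fin (m + n), p < q →
      (u q < u p ↔ (m ≤ (u p : ℕ) ∧ (u q : ℕ) < m)) := by
    intro p q hpq
    constructor
    · intro hlt
      rcases lt_or_ge (u p : ℕ) m with h1 | h1
      · rcases lt_or_ge (u q : ℕ) m with h2 | h2
        · exfalso
          have hji : (⟨(u q : ℕ), h2⟩ : Fin m) < ⟨(u p : ℕ), h1⟩ :=
            Fin.mk_lt_mk.2 (by rw [Fin.lt_def] at hlt; exact hlt)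
          have h3 := hu.1 hji
          dsimp only at h3
          rw [hpos1 q h2, hpos1 p h1] at h3
          exact absurd hpq (not_lt.2 h3.le)
        · exfalso
          rw [Fin.lt_def] at hlt
          omega
      · rcases lt_or_ge (u q : ℕ) m with h2 | h2
        · exact ⟨h1, h2⟩
        · exfalso
          have hji : (⟨(u q : ℕ) - m, by have := (u q).2; omega⟩ : Fin n) <
              ⟨(u p : ℕ) - m, by have := (u p).2; omega⟩ := by
            rw [Fin.lt_def] at hlt
            exact Fin.mk_lt_mk.2 (by omega)
          have h3 := hu.2 hji
          dsimp only at h3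
          rw [hpos2 q h2, hpos2 p h1] at h3
          exact absurd hpq (not_lt.2 h3.le)
    · rintro ⟨h1, h2⟩
      rw [Fin.lt_def]
      omega
  set S : Finset (Fin (m + n) × Fin (m + n)) :=
    Finset.univ.filter (fun p => p.1 < p.2 ∧ σ p.2 < σ p.1) with hSdef
  have cardA : ((S.filter fun p => (u p.1 : ℕ) < m).filter
      fun p => (u p.2 : ℕ) < m).card = invCount a := by
    rw [invCount]
    refine Finset.card_bij'
      (fun p hp => ((⟨(u p.1 : ℕ), by
          simp only [hSdef, Finset.mem_filter] at hp; exact hp.1.2⟩ : Fin m),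
        (⟨(u p.2 : ℕ), by
          simp only [hSdef, Finset.mem_filter] at hp; exact hp.2⟩ : Fin m)))
      (fun q _ => (u.symm (Fin.castAdd n q.1), u.symm (Fin.castAdd n q.2)))
      ?hi ?hj ?li ?ri
    case hi =>
      intro p hp
      simp only [hSdef, Finset.mem_filter, Finset.mem_univ, true_and] at hp
      obtain ⟨⟨⟨hlt, hσlt⟩, h1⟩, h2⟩ := hp
      simp only [Finset.mem_filter, Finset.mem_univ, true_and]
      constructor
      · have hiff := hu.1.lt_iff_lt (a := (⟨(u p.1 : ℕ), h1⟩ : Fin m))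
          (b := (⟨(u p.2 : ℕ), h2⟩ : Fin m))
        try dsimp only at hiff
        rw [hpos1 p.1 h1, hpos1 p.2 h2] at hiff
        exact hiff.1 hlt
      · rw [hval1 p.1 h1, hval1 p.2 h2, Fin.lt_def] at hσlt
        simp only [Fin.coe_castAdd] at hσlt
        rw [Fin.lt_def]
        exact hσlt
    case hj =>
      intro q hq
      simp only [Finset.mem_filter, Finset.mem_univ, true_and] at hq
      obtain ⟨hlt, halt⟩ := hq
      have e1 : u (u.symm (Fin.castAdd n q.1)) = Fin.castAdd n q.1 := u.apply_symm_apply _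
      have e2 : u (u.symm (Fin.castAdd n q.2)) = Fin.castAdd n q.2 := u.apply_symm_apply _
      simp only [hSdef, Finset.mem_filter, Finset.mem_univ, true_and]
      refine ⟨⟨⟨?_, ?_⟩, ?_⟩, ?_⟩
      · exact hu.1 hlt
      · have w1 : σ (u.symm (Fin.castAdd n q.1)) = Fin.castAdd n (a q.1) := by
          rw [happ, e1, iota_castAdd]
        have w2 : σ (u.symm (Fin.castAdd n q.2)) = Fin.castAdd n (a q.2) := by
          rw [happ, e2, iota_castAdd]
        rw [w1, w2, Fin.lt_def]
        simp only [Fin.coe_castAdd]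
        rw [Fin.lt_def] at halt
        exact halt
      · rw [e1]; simp [q.1.2]
      · rw [e2]; simp [q.2.2]
    case li =>
      intro p hp
      simp only [hSdef, Finset.mem_filter, Finset.mem_univ, true_and] at hp
      obtain ⟨⟨⟨hlt, hσlt⟩, h1⟩, h2⟩ := hp
      exact Prod.ext (hpos1 p.1 h1) (hpos1 p.2 h2)
    case ri =>
      intro q hq
      refine Prod.ext (Fin.ext ?_) (Fin.ext ?_) <;> simp
  have cardB : ((S.filter fun p => ¬ ((u p.1 : ℕ) < m)).filter
      fun p => ¬ ((u p.2 : ℕ) < m)).card = invCount b := by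
    rw [invCount]
    refine Finset.card_bij'
      (fun p hp => ((⟨(u p.1 : ℕ) - m, by
          have h0 := (u p.1).2
          have h1 : ¬ ((u p.1 : ℕ) < m) := (Finset.mem_filter.1 (Finset.mem_filter.1 hp).1).2
          omega⟩ : Fin n),
        (⟨(u p.2 : ℕ) - m, by
          have h0 := (u p.2).2
          have h1 : ¬ ((u p.2 : ℕ) < m) := (Finset.mem_filter.1 hp).2
          omega⟩ : Fin n)))
      (fun q _ => (u.symm (Fin.natAdd m q.1), u.symm (Fin.natAdd m q.2)))
      ?hi ?hj ?li ?ri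
    case hi =>
      intro p hp
      simp only [hSdef, Finset.mem_filter, Finset.mem_univ, true_and, not_lt] at hp
      obtain ⟨⟨⟨hlt, hσlt⟩, h1⟩, h2⟩ := hp
      simp only [Finset.mem_filter, Finset.mem_univ, true_and]
      constructor
      · have hiff := hu.2.lt_iff_lt
          (a := (⟨(u p.1 : ℕ) - m, by have := (u p.1).2; omega⟩ : Fin n))
          (b := (⟨(u p.2 : ℕ) - m, by have := (u p.2).2; omega⟩ : Fin n))
        try dsimp only at hiff
        rw [hpos2 p.1 h1, hpos2 p.2 h2] at hiff
        exact hiff.1 hlt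
      · rw [hval2 p.1 h1, hval2 p.2 h2, Fin.lt_def] at hσlt
        simp only [Fin.coe_natAdd] at hσlt
        rw [Fin.lt_def]
        omega
    case hj =>
      intro q hq
      simp only [Finset.mem_filter, Finset.mem_univ, true_and] at hq
      obtain ⟨hlt, hblt⟩ := hq
      have e1 : u (u.symm (Fin.natAdd m q.1)) = Fin.natAdd m q.1 := u.apply_symm_apply _
      have e2 : u (u.symm (Fin.natAdd m q.2)) = Fin.natAdd m q.2 := u.apply_symm_apply _
      simp only [hSdef, Finset.mem_filter, Finset.mem_univ, true_and]
      refine ⟨⟨⟨?_, ?_⟩, ?_⟩, ?_⟩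
      · exact hu.2 hlt
      · have w1 : σ (u.symm (Fin.natAdd m q.1)) = Fin.natAdd m (b q.1) := by
          rw [happ, e1, iota_natAdd]
        have w2 : σ (u.symm (Fin.natAdd m q.2)) = Fin.natAdd m (b q.2) := by
          rw [happ, e2, iota_natAdd]
        rw [w1, w2, Fin.lt_def]
        simp only [Fin.coe_natAdd]
        rw [Fin.lt_def] at hblt
        omega
      · rw [e1]; simp
      · rw [e2]; simp
    case li =>
      intro p hp
      simp only [hSdef, Finset.mem_filter, Finset.mem_univ, true_and, not_lt] at hp
      obtain ⟨⟨⟨hlt, hσlt⟩, h1⟩, h2⟩ := hp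
      exact Prod.ext (hpos2 p.1 h1) (hpos2 p.2 h2)
    case ri =>
      intro q hq
      refine Prod.ext (Fin.ext ?_) (Fin.ext ?_) <;> simp
  have cardC : ((S.filter fun p => ¬ ((u p.1 : ℕ) < m)).filter
      fun p => (u p.2 : ℕ) < m).card = invCount u := by
    rw [invCount]
    congr 1
    ext p
    simp only [hSdef, Finset.mem_filter, Finset.mem_univ, true_and]
    constructor
    · rintro ⟨⟨⟨h1, h2⟩, h3⟩, h4⟩
      exact ⟨h1, (hcross p.1 p.2 h1).2 ⟨not_lt.1 h3, h4⟩⟩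
    · rintro ⟨h1, h2⟩
      obtain ⟨hb, hs⟩ := (hcross p.1 p.2 h1).1 h2
      refine ⟨⟨⟨h1, ?_⟩, not_lt.2 hb⟩, hs⟩
      rw [hval1 p.2 hs, hval2 p.1 hb, Fin.lt_def]
      simp only [Fin.coe_castAdd, Fin.coe_natAdd]
      have := (a ⟨(u p.2 : ℕ), hs⟩).2
      omega
  have cardD : ((S.filter fun p => (u p.1 : ℕ) < m).filter
      fun p => ¬ ((u p.2 : ℕ) < m)).card = 0 := by
    rw [Finset.card_eq_zero, Finset.filter_eq_empty_iff]
    intro p hp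
    simp only [hSdef, Finset.mem_filter, Finset.mem_univ, true_and] at hp
    obtain ⟨⟨h1, h2⟩, h3⟩ := hp
    rw [not_not]
    by_contra h4
    rw [not_lt] at h4
    rw [hval1 p.1 h3, hval2 p.2 h4, Fin.lt_def] at h2
    simp only [Fin.coe_castAdd, Fin.coe_natAdd] at h2
    have := (a ⟨(u p.1 : ℕ), h3⟩).2
    omega
  have hsplit1 := Finset.card_filter_add_card_filter_not
    (s := S) (p := fun p => (u p.1 : ℕ) < m)
  have hsplit2 := Finset.card_filter_add_card_filter_not
    (s := S.filter fun p => (u p.1 : ℕ) < m) (p := fun p => (u p.2 : ℕ) < m)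
  have hsplit3 := Finset.card_filter_add_card_filter_not
    (s := S.filter fun p => ¬ ((u p.1 : ℕ) < m)) (p := fun p => (u p.2 : ℕ) < m)
  have hIC : invCount σ = S.card := rfl
  omega


lemma symm_mul_castAdd (a : Equiv.Perm (Fin m)) (b : Equiv.Perm (Fin n))
    (u : Equiv.Perm (Fin (m + n))) (i : Fin m) :
    (iota a b * u).symm (Fin.castAdd n i) = u.symm (Fin.castAdd n (a.symm i)) := by
  rw [Equiv.symm_apply_eq]
  show Fin.castAdd n i = iota a b (u (u.symm (Fin.castAdd n (a.symm i))))
  rw [Equiv.apply_symm_apply, iota_castAdd, Equiv.apply_symm_apply]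

lemma symm_mul_natAdd (a : Equiv.Perm (Fin m)) (b : Equiv.Perm (Fin n))
    (u : Equiv.Perm (Fin (m + n))) (j : Fin n) :
    (iota a b * u).symm (Fin.natAdd m j) = u.symm (Fin.natAdd m (b.symm j)) := by
  rw [Equiv.symm_apply_eq]
  show Fin.natAdd m j = iota a b (u (u.symm (Fin.natAdd m (b.symm j))))
  rw [Equiv.apply_symm_apply, iota_natAdd, Equiv.apply_symm_apply]

lemma linext_iff (rP : Fin m → Fin m → Prop) (rQ : Fin n → Fin n → Prop)
    (a : Equiv.Perm (Fin m)) (b : Equiv.Perm (Fin n)) (u : Equiv.Perm (Fin (m + n)))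
    (hu : IsShuf u) :
    IsLinExt (dsum m n rP rQ) (iota a b * u) ↔ IsLinExt rP a ∧ IsLinExt rQ b := by
  constructor
  · intro hL
    constructor
    · intro i j hr hne
      have hd : dsum m n rP rQ (Fin.castAdd n i) (Fin.castAdd n j) := by
        left
        exact ⟨by simpa using i.2, by simpa using j.2, by
          convert hr using 2 <;> exact rfl⟩
      have h2 := hL _ _ hd (by
        intro h
        exact hne (Fin.ext (by simpa using congrArg Fin.val h)))
      rw [symm_mul_castAdd, symm_mul_castAdd] at h2
      exact hu.1.lt_iff_lt.1 h2
    · intro i j hr hne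
      have hd : dsum m n rP rQ (Fin.natAdd m i) (Fin.natAdd m j) := by
        right
        have e1 : (⟨((Fin.natAdd m i : Fin (m + n)) : ℕ) - m,
            by rw [Fin.coe_natAdd]; have := i.2; omega⟩ : Fin n) = i := by
          apply Fin.ext
          show ((Fin.natAdd m i : Fin (m + n)) : ℕ) - m = ↑i
          rw [Fin.coe_natAdd]; omega
        have e2 : (⟨((Fin.natAdd m j : Fin (m + n)) : ℕ) - m,
            by rw [Fin.coe_natAdd]; have := j.2; omega⟩ : Fin n) = j := by
          apply Fin.ext
          show ((Fin.natAdd m j : Fin (m + n)) : ℕ) - m = ↑j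
          rw [Fin.coe_natAdd]; omega
        exact ⟨by simp, by simp, by rw [e1, e2]; exact hr⟩
      have h2 := hL _ _ hd (by
        intro h
        have hv := congrArg Fin.val h
        simp only [Fin.coe_natAdd] at hv
        exact hne (Fin.ext (by omega)))
      rw [symm_mul_natAdd, symm_mul_natAdd] at h2
      exact hu.2.lt_iff_lt.1 h2
  · rintro ⟨hA, hB⟩ x y hd hne
    rcases hd with ⟨hx, hy, hr⟩ | ⟨hx, hy, hr⟩
    · have hxy : (⟨(x : ℕ), hx⟩ : Fin m) ≠ ⟨(y : ℕ), hy⟩ := by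
        intro h
        exact hne (Fin.ext (by simpa using congrArg Fin.val h))
      have h2 := hA _ _ hr hxy
      rw [show x = Fin.castAdd n ⟨(x : ℕ), hx⟩ from eq_castAdd hx,
        show y = Fin.castAdd n ⟨(y : ℕ), hy⟩ from eq_castAdd hy,
        symm_mul_castAdd, symm_mul_castAdd]
      exact hu.1 h2
    · have hxy : (⟨(x : ℕ) - m, by have := x.2; omega⟩ : Fin n) ≠
          ⟨(y : ℕ) - m, by have := y.2; omega⟩ := by
        intro h
        have hv := congrArg Fin.val h
        simp only at hv
        exact hne (Fin.ext (by omega))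
      have h2 := hB _ _ hr hxy
      have ex : (iota a b * u).symm x =
          u.symm (Fin.natAdd m (b.symm ⟨(x : ℕ) - m, by have := x.2; omega⟩)) := by
        conv_lhs => rw [eq_natAdd hx]
        rw [symm_mul_natAdd]
      have ey : (iota a b * u).symm y =
          u.symm (Fin.natAdd m (b.symm ⟨(y : ℕ) - m, by have := y.2; omega⟩)) := by
        conv_lhs => rw [eq_natAdd hy]
        rw [symm_mul_natAdd]
      rw [ex, ey]
      exact hu.2 h2


open scoped Classical in
/-- The shuffle generating function, i.e. the Gaussian binomial coefficient. -/
noncomputable def SD (m n : ℕ) : Polynomial ℤ :=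
  ∑ u ∈ Finset.univ.filter (fun u : Equiv.Perm (Fin (m + n)) => IsShuf u), X ^ invCount u

open scoped Classical in
lemma FLin_dsum_eq (rP : Fin m → Fin m → Prop) (rQ : Fin n → Fin n → Prop) :
    FLin (dsum m n rP rQ) = FLin rP * FLin rQ * SD m n := by
  classical
  rw [FLin, FLin, FLin, SD]
  have key : (∑ σ ∈ Finset.univ.filter (fun σ => IsLinExt (dsum m n rP rQ) σ),
        (X : Polynomial ℤ) ^ invCount σ)
      = ∑ t ∈ ((Finset.univ.filter fun a : Equiv.Perm (Fin m) => IsLinExt rP a) ×ˢ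
          ((Finset.univ.filter fun b : Equiv.Perm (Fin n) => IsLinExt rQ b) ×ˢ
           (Finset.univ.filter fun u : Equiv.Perm (Fin (m + n)) => IsShuf u))),
          X ^ (invCount t.1 + invCount t.2.1 + invCount t.2.2) := by
    refine Finset.sum_bij' (fun σ _ => (aOf σ, bOf σ, uOf σ))
      (fun t _ => iota t.1 t.2.1 * t.2.2) ?hi ?hj ?li ?ri ?h
    case hi =>
      intro σ hσ
      have hd := (Finset.mem_filter.1 hσ).2
      rw [← decomp_eq σ] at hd
      have h2 := (linext_iff rP rQ _ _ _ (isShuf_uOf σ)).1 hd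
      simp only [Finset.mem_product, Finset.mem_filter, Finset.mem_univ, true_and]
      exact ⟨h2.1, h2.2, isShuf_uOf σ⟩
    case hj =>
      intro t ht
      simp only [Finset.mem_product, Finset.mem_filter, Finset.mem_univ, true_and] at ht
      simp only [Finset.mem_filter, Finset.mem_univ, true_and]
      exact (linext_iff rP rQ _ _ _ ht.2.2).2 ⟨ht.1, ht.2.1⟩
    case li =>
      intro σ hσ
      exact decomp_eq σ
    case ri =>
      intro t ht
      simp only [Finset.mem_product, Finset.mem_filter, Finset.mem_univ, true_and] at ht
      obtain ⟨ha, hb, hu⟩ := comp_unique (isShuf_uOf (iota t.1 t.2.1 * t.2.2)) ht.2.2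
        (decomp_eq (iota t.1 t.2.1 * t.2.2))
      exact Prod.ext ha (Prod.ext hb hu)
    case h =>
      intro σ hσ
      have h1 : invCount σ = invCount (aOf σ) + invCount (bOf σ) + invCount (uOf σ) := by
        conv_lhs => rw [← decomp_eq σ]
        exact invCount_mul_s7 _ _ _ (isShuf_uOf σ)
      rw [h1]
  rw [key, Finset.sum_product]
  simp_rw [Finset.sum_product]
  simp_rw [pow_add]
  rw [Finset.sum_mul_sum, Finset.sum_mul]
  simp_rw [Finset.sum_mul, Finset.mul_sum]

/-- Sum of `q^inv` over all permutations. -/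
noncomputable def sumAll (N : ℕ) : Polynomial ℤ :=
  ∑ σ ∈ (Finset.univ : Finset (Equiv.Perm (Fin N))), X ^ invCount σ

lemma FLin_false (N : ℕ) :
    FLin (fun _ _ => (False : Prop) : Fin N → Fin N → Prop) = sumAll N := by
  classical
  rw [FLin, sumAll, Finset.filter_true_of_mem]
  intro σ _ i j h
  exact h.elim

lemma FLin_dsum_false :
    FLin (dsum m n (fun _ _ => False) (fun _ _ => False)) = sumAll (m + n) := by
  classical
  rw [FLin, sumAll, Finset.filter_true_of_mem]
  intro σ _ i j h
  rcases h with ⟨_, _, h⟩ | ⟨_, _, h⟩ <;> exact h.elim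

lemma sumAll_mul (m n : ℕ) : sumAll (m + n) = sumAll m * sumAll n * SD m n := by
  rw [← FLin_dsum_false, FLin_dsum_eq, FLin_false, FLin_false]

lemma sumAll_one : sumAll 1 = 1 := by
  have h0 : ∀ σ : Equiv.Perm (Fin 1), invCount σ = 0 := by
    intro σ
    rw [invCount, Finset.card_eq_zero, Finset.filter_eq_empty_iff]
    rintro p - ⟨h1, -⟩
    rw [Subsingleton.elim p.1 p.2] at h1
    exact lt_irrefl _ h1
  rw [sumAll]
  simp only [h0, pow_zero]
  rw [Finset.sum_const, Finset.card_univ]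
  simp

lemma sumAll_zero : sumAll 0 = 1 := by
  have h0 : ∀ σ : Equiv.Perm (Fin 0), invCount σ = 0 := by
    intro σ
    rw [invCount, Finset.card_eq_zero, Finset.filter_eq_empty_iff]
    rintro p - ⟨h1, -⟩
    exact p.1.elim0
  rw [sumAll]
  simp only [h0, pow_zero]
  rw [Finset.sum_const, Finset.card_univ]
  simp

end Decomp

section ShufOne

variable {N : ℕ}

lemma shuf1_symm_lt (u : Equiv.Perm (Fin (N + 1))) (x : Fin (N + 1)) :
    ((u x : ℕ) < N) ↔ x ≠ u.symm (Fin.natAdd N (0 : Fin 1)) := by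
  constructor
  · intro h hxp
    rw [hxp] at h
    rw [Equiv.apply_symm_apply] at h
    simp only [Fin.coe_natAdd] at h
    omega
  · intro hxp
    by_contra h
    rw [not_lt] at h
    apply hxp
    have hx : u x = Fin.natAdd N (0 : Fin 1) := by
      apply Fin.ext
      have := (u x).2
      simp only [Fin.coe_natAdd]
      omega
    rw [← Equiv.symm_apply_apply u x, hx]

lemma natAdd_val_eq (u : Equiv.Perm (Fin (N + 1))) :
    ((u (u.symm (Fin.natAdd N (0 : Fin 1))) : ℕ)) = N := by
  rw [Equiv.apply_symm_apply]
  simp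

lemma shuf1_invCount (u : Equiv.Perm (Fin (N + 1))) (hu : IsShuf (m := N) (n := 1) u) :
    invCount u = N - (u.symm (Fin.natAdd N (0 : Fin 1)) : ℕ) := by
  set p := u.symm (Fin.natAdd N (0 : Fin 1)) with hp
  rw [invCount]
  have hup : (u p : ℕ) = N := natAdd_val_eq u
  have hset : Finset.univ.filter
        (fun pr : Fin (N + 1) × Fin (N + 1) => pr.1 < pr.2 ∧ u pr.2 < u pr.1)
      = Finset.univ.filter (fun pr => pr.1 = p ∧ p < pr.2) := by
    ext pr
    simp only [Finset.mem_filter, Finset.mem_univ, true_and]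
    constructor
    · rintro ⟨h1, h2⟩
      by_cases hq : pr.1 = p
      · exact ⟨hq, hq ▸ h1⟩
      · exfalso
        have hs1 : (u pr.1 : ℕ) < N := (shuf1_symm_lt u pr.1).2 hq
        by_cases hq2 : pr.2 = p
        · rw [hq2] at h2
          rw [Fin.lt_def] at h2
          omega
        · have hs2 : (u pr.2 : ℕ) < N := (shuf1_symm_lt u pr.2).2 hq2
          have hji : (⟨(u pr.2 : ℕ), hs2⟩ : Fin N) < ⟨(u pr.1 : ℕ), hs1⟩ :=
            Fin.mk_lt_mk.2 (by rw [Fin.lt_def] at h2; exact h2)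
          have h3 := hu.1 hji
          dsimp only at h3
          rw [← eq_castAdd (m := N) (n := 1) hs2, ← eq_castAdd (m := N) (n := 1) hs1] at h3
          rw [Equiv.symm_apply_apply, Equiv.symm_apply_apply] at h3
          exact absurd h1 (not_lt.2 h3.le)
    · rintro ⟨h1, h2⟩
      have hq2 : pr.2 ≠ p := by
        intro h
        rw [h] at h2
        exact lt_irrefl _ h2
      have hs2 : (u pr.2 : ℕ) < N := (shuf1_symm_lt u pr.2).2 hq2
      refine ⟨h1 ▸ h2, ?_⟩
      rw [h1, Fin.lt_def]
      omega
  rw [hset]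
  have hprod : Finset.univ.filter
        (fun pr : Fin (N + 1) × Fin (N + 1) => pr.1 = p ∧ p < pr.2)
      = {p} ×ˢ Finset.Ioi p := by
    ext pr
    simp only [Finset.mem_filter, Finset.mem_univ, true_and, Finset.mem_product,
      Finset.mem_singleton, Finset.mem_Ioi]
  rw [hprod, Finset.card_product, Finset.card_singleton, Fin.card_Ioi]
  omega

lemma card_compl_singleton (p : Fin (N + 1)) : ({p}ᶜ : Finset (Fin (N + 1))).card = N := by
  rw [Finset.card_compl, Finset.card_singleton]
  simp

lemma shufOf_compl_singleton (p : Fin (N + 1)) :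
    (shufOf (m := N) (n := 1) ({p}ᶜ) (card_compl_singleton p)).symm (Fin.natAdd N (0 : Fin 1))
      = p := by
  rw [shufOf_symm_natAdd]
  have := Finset.orderEmbOfFin_mem (({p}ᶜ)ᶜ : Finset (Fin (N + 1)))
    (card_compl_of_card (card_compl_singleton p)) (0 : Fin 1)
  rw [Finset.mem_compl, Finset.mem_compl, not_not] at this
  exact Finset.mem_singleton.1 this

open scoped Classical in
lemma SD_one : SD N 1 = qnum (N + 1) := by
  classical
  rw [SD, qnum]
  have step1 : (∑ u ∈ Finset.univ.filter
        (fun u : Equiv.Perm (Fin (N + 1)) => IsShuf (m := N) (n := 1) u), (X : Polynomial ℤ) ^ invCount u)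
      = ∑ i ∈ Finset.range (N + 1), (X : Polynomial ℤ) ^ (N - i) := by
    refine Finset.sum_bij' (fun u _ => ((u.symm (Fin.natAdd N (0 : Fin 1)) : ℕ)))
      (fun i hi => shufOf (m := N) (n := 1) ({(⟨i, Finset.mem_range.1 hi⟩ : Fin (N + 1))}ᶜ)
        (card_compl_singleton _)) ?hi ?hj ?li ?ri ?h
    case hi =>
      intro u _
      exact Finset.mem_range.2 (u.symm (Fin.natAdd N (0 : Fin 1))).2
    case hj =>
      intro i hi
      simp only [Finset.mem_filter, Finset.mem_univ, true_and]
      exact isShuf_shufOf _ _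
    case li =>
      intro u hu
      simp only [Finset.mem_filter, Finset.mem_univ, true_and] at hu
      apply shuf_unique (isShuf_shufOf _ _) hu
      intro x
      rw [shuf1_symm_lt _ x, shuf1_symm_lt u x, shufOf_compl_singleton]
    case ri =>
      intro i hi
      show ((shufOf (m := N) (n := 1) ({(⟨i, Finset.mem_range.1 hi⟩ : Fin (N + 1))}ᶜ)
        (card_compl_singleton _)).symm (Fin.natAdd N (0 : Fin 1)) : ℕ) = i
      rw [shufOf_compl_singleton]
    case h =>
      intro u hu
      simp only [Finset.mem_filter, Finset.mem_univ, true_and] at hu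
      rw [shuf1_invCount u hu]
  rw [step1]
  have := Finset.sum_range_reflect (fun i => (X : Polynomial ℤ) ^ i) (N + 1)
  simp only [Nat.add_sub_cancel] at this
  exact this

end ShufOne

lemma sumAll_eq_qfact (N : ℕ) : sumAll N = qfact N := by
  induction N with
  | zero =>
    rw [sumAll_zero, qfact]
    simp
  | succ N ih =>
    have h := sumAll_mul N 1
    rw [ih, sumAll_one, SD_one] at h
    rw [h]
    conv_rhs => rw [qfact, Finset.prod_range_succ]
    rw [← qfact]
    ring








/-- `F(𝓛(P + Q), q) = F(𝓛(P), q) · F(𝓛(Q), q) · [m+n choose m]_q`,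
where the Gaussian binomial coefficient `C` is characterized by
`C · [m]! [n]! = [m+n]!`. -/
theorem FLin_dsum (m n : ℕ) (rP : Fin m → Fin m → Prop) (rQ : Fin n → Fin n → Prop)
    (hP : IsPartialOrder (Fin m) rP) (hQ : IsPartialOrder (Fin n) rQ) :
    ∃ C : Polynomial ℤ, C * (qfact m * qfact n) = qfact (m + n) ∧
      FLin (dsum m n rP rQ) = FLin rP * FLin rQ * C := by
  classical
  refine ⟨SD m n, ?_, ?_⟩
  · have h := sumAll_mul m n
    rw [sumAll_eq_qfact, sumAll_eq_qfact, sumAll_eq_qfact] at h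
    rw [h]
    ring
  · exact FLin_dsum_eq rP rQ

end SepPerm
end
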